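/- arXiv:1707.07797 — 10 statements merged into one kernel-verified Lean document; each statement's English description precedes it below -/
import Mathlib

section
/- Under the stated assumptions on Λ and f, and assuming the threshold x* is finite (or −∞), for every fixed x ∈ ℝ the function g(z) := f(z)·exp(−∫_x^z Λ(y) dy), defined for z ≥ x, is nondecreasing on the interval [x, max(x, x*)] and strictly decreasing on the interval [max(x, x*), ∞) (where max(x, −∞) := x). In particular g attains its maximum over [x,∞) at the point max(x, x*). -/
open MeasureTheory Filter Set intervalIntegral
open scoped NNReal ENNReal


lemma fubini_core (u v : ℝ → ℝ) (a b : ℝ) (hab : a ≤ b)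
    (hu : IntervalIntegrable u volume a b) (hv : IntervalIntegrable v volume a b) :
    ((∫ z in a..b, u z * ∫ t in a..z, v t) + ∫ z in a..b, (∫ s in a..z, u s) * v z)
      = (∫ s in a..b, u s) * ∫ t in a..b, v t := by
  set μI := (volume : Measure ℝ).restrict (Ioc a b) with hμI
  have hu' : Integrable u μI := (intervalIntegrable_iff_integrableOn_Ioc_of_le hab).1 hu
  have hv' : Integrable v μI := (intervalIntegrable_iff_integrableOn_Ioc_of_le hab).1 hv
  have hprod : Integrable (fun p : ℝ × ℝ => u p.1 * v p.2) (μI.prod μI) := hu'.mul_prod hv'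
  -- the two triangle indicator functions
  set k₁ : ℝ × ℝ → ℝ := ({p : ℝ × ℝ | p.2 ≤ p.1}).indicator (fun p => u p.1 * v p.2) with hk₁
  set k₂ : ℝ × ℝ → ℝ := ({p : ℝ × ℝ | p.1 ≤ p.2}).indicator (fun p => u p.1 * v p.2) with hk₂
  have hs₁ : MeasurableSet {p : ℝ × ℝ | p.2 ≤ p.1} := measurableSet_le measurable_snd measurable_fst
  have hs₂ : MeasurableSet {p : ℝ × ℝ | p.1 ≤ p.2} := measurableSet_le measurable_fst measurable_snd
  have hk₁i : Integrable k₁ (μI.prod μI) := hprod.indicator hs₁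
  have hk₂i : Integrable k₂ (μI.prod μI) := hprod.indicator hs₂
  -- inner integral identities
  have inner₁ : ∀ z ∈ Ioc a b, (∫ t, k₁ (z, t) ∂μI) = u z * ∫ t in a..z, v t := by
    intro z hz
    have h1 : ∀ t : ℝ, k₁ (z, t) = u z * (Iic z).indicator v t := by
      intro t
      simp only [hk₁, Set.indicator, mem_setOf_eq, mem_Iic, mul_ite, mul_zero]
    simp_rw [h1]
    rw [MeasureTheory.integral_const_mul, MeasureTheory.integral_indicator measurableSet_Iic]
    congr 1
    rw [hμI, Measure.restrict_restrict measurableSet_Iic, Set.inter_comm, Set.Ioc_inter_Iic,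
      min_eq_right hz.2, intervalIntegral.integral_of_le hz.1.le]
  have inner₂ : ∀ z ∈ Ioc a b, (∫ s, k₂ (s, z) ∂μI) = (∫ s in a..z, u s) * v z := by
    intro z hz
    have h1 : ∀ s : ℝ, k₂ (s, z) = ((Iic z).indicator u s) * v z := by
      intro s
      simp only [hk₂, Set.indicator, mem_setOf_eq, mem_Iic, ite_mul, zero_mul]
    simp_rw [h1]
    rw [MeasureTheory.integral_mul_const, MeasureTheory.integral_indicator measurableSet_Iic]
    congr 1
    rw [hμI, Measure.restrict_restrict measurableSet_Iic, Set.inter_comm, Set.Ioc_inter_Iic,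
      min_eq_right hz.2, intervalIntegral.integral_of_le hz.1.le]
  -- first term
  have T1 : (∫ z in a..b, u z * ∫ t in a..z, v t) = ∫ p, k₁ p ∂(μI.prod μI) := by
    rw [intervalIntegral.integral_of_le hab]
    rw [show (∫ z in Ioc a b, u z * ∫ t in a..z, v t) = ∫ z, (∫ t, k₁ (z, t) ∂μI) ∂μI from ?_]
    · exact MeasureTheory.integral_integral hk₁i
    · refine integral_congr_ae ?_
      filter_upwards [ae_restrict_mem measurableSet_Ioc] with z hz
      exact (inner₁ z hz).symm
  -- second term
  have T2 : (∫ z in a..b, (∫ s in a..z, u s) * v z) = ∫ p, k₂ p ∂(μI.prod μI) := by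
    rw [intervalIntegral.integral_of_le hab]
    rw [show (∫ z in Ioc a b, (∫ s in a..z, u s) * v z) = ∫ z, (∫ s, k₂ (s, z) ∂μI) ∂μI from ?_]
    · have hk₂i' : Integrable (Function.uncurry fun z s => k₂ (s, z)) (μI.prod μI) := by
        have h : Integrable (fun p : ℝ × ℝ => v p.1 * u p.2) (μI.prod μI) := hv'.mul_prod hu'
        have he : (Function.uncurry fun z s => k₂ (s, z))
            = ({p : ℝ × ℝ | p.2 ≤ p.1}).indicator (fun p => v p.1 * u p.2) := by
          funext p
          simp [Function.uncurry, hk₂, Set.indicator, mem_setOf_eq, mul_comm]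
        rw [he]
        exact h.indicator hs₁
      rw [MeasureTheory.integral_integral_swap hk₂i']
      exact MeasureTheory.integral_integral hk₂i
    · refine integral_congr_ae ?_
      filter_upwards [ae_restrict_mem measurableSet_Ioc] with z hz
      exact (inner₂ z hz).symm
  -- diagonal is null
  have hdiag : (μI.prod μI) {p : ℝ × ℝ | p.1 = p.2} = 0 := by
    have hD : MeasurableSet {p : ℝ × ℝ | p.1 = p.2} :=
      measurableSet_eq_fun measurable_fst measurable_snd
    rw [Measure.prod_apply hD]
    have : ∀ z : ℝ, μI (Prod.mk z ⁻¹' {p : ℝ × ℝ | p.1 = p.2}) = 0 := by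
      intro z
      have : (Prod.mk z ⁻¹' {p : ℝ × ℝ | p.1 = p.2}) = {z} := by
        ext t; simp [eq_comm]
      rw [this]
      exact le_antisymm ((Measure.restrict_le_self _).trans_eq (measure_singleton z)) (zero_le)
    simp [this]
  -- combine
  have hsum : ∀ᵐ p ∂(μI.prod μI), k₁ p + k₂ p = u p.1 * v p.2 := by
    have : ∀ᵐ p ∂(μI.prod μI), p.1 ≠ p.2 := by
      rw [ae_iff]
      simpa using hdiag
    filter_upwards [this] with p hp
    rcases lt_trichotomy p.1 p.2 with h | h | h
    · simp [hk₁, hk₂, Set.indicator, not_le.2 h, h.le]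
    · exact absurd h hp
    · simp [hk₁, hk₂, Set.indicator, not_le.2 h, h.le]
  rw [T1, T2, ← MeasureTheory.integral_add hk₁i hk₂i, integral_congr_ae hsum,
    MeasureTheory.integral_prod_mul, intervalIntegral.integral_of_le hab,
    intervalIntegral.integral_of_le hab]

lemma primitive_mul_sub (u v U V : ℝ → ℝ) (a b : ℝ) (hab : a ≤ b)
    (hu : IntervalIntegrable u volume a b) (hv : IntervalIntegrable v volume a b)
    (hU : ∀ z ∈ Icc a b, U z = U a + ∫ s in a..z, u s)
    (hV : ∀ z ∈ Icc a b, V z = V a + ∫ t in a..z, v t) :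
    U b * V b - U a * V a = (∫ z in a..b, u z * V z) + ∫ z in a..b, U z * v z := by
  have huIcc : (Set.uIcc a b) = Icc a b := uIcc_of_le hab
  have hAcont : ContinuousOn (fun z => ∫ s in a..z, u s) (Set.uIcc a b) :=
    continuousOn_primitive_interval' hu (by rw [huIcc]; exact ⟨le_refl a, hab⟩)
  have hBcont : ContinuousOn (fun z => ∫ t in a..z, v t) (Set.uIcc a b) :=
    continuousOn_primitive_interval' hv (by rw [huIcc]; exact ⟨le_refl a, hab⟩)
  have huB : IntervalIntegrable (fun z => u z * ∫ t in a..z, v t) volume a b :=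
    hu.mul_continuousOn hBcont
  have hAv : IntervalIntegrable (fun z => (∫ s in a..z, u s) * v z) volume a b :=
    hv.continuousOn_mul hAcont
  have e₁ : (∫ z in a..b, u z * V z)
      = V a * (∫ s in a..b, u s) + ∫ z in a..b, u z * ∫ t in a..z, v t := by
    have : EqOn (fun z => u z * V z)
        (fun z => u z * V a + u z * ∫ t in a..z, v t) (Set.uIcc a b) := by
      intro z hz
      rw [huIcc] at hz
      simp only [hV z hz]
      ring
    rw [intervalIntegral.integral_congr this,
      intervalIntegral.integral_add (hu.mul_const _) huB, intervalIntegral.integral_mul_const,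
      mul_comm]
  have e₂ : (∫ z in a..b, U z * v z)
      = U a * (∫ t in a..b, v t) + ∫ z in a..b, (∫ s in a..z, u s) * v z := by
    have : EqOn (fun z => U z * v z)
        (fun z => U a * v z + (∫ s in a..z, u s) * v z) (Set.uIcc a b) := by
      intro z hz
      rw [huIcc] at hz
      simp only [hU z hz]
      ring
    rw [intervalIntegral.integral_congr this,
      intervalIntegral.integral_add (hv.const_mul _) hAv, intervalIntegral.integral_const_mul]
  have key := fubini_core u v a b hab hu hv
  have hUb := hU b ⟨hab, le_refl b⟩
  have hVb := hV b ⟨hab, le_refl b⟩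
  rw [e₁, e₂, hUb, hVb]
  nlinarith [key]

lemma exp_primitive_integral (Λ : ℝ → ℝ) (hΛmeas : Measurable Λ) (hΛpos : ∀ y, 0 < Λ y)
    (hΛloc : ∀ a b : ℝ, IntervalIntegrable Λ volume a b) (x a b : ℝ) (hab : a ≤ b) :
    ∫ z in a..b, Λ z * Real.exp (-∫ y in x..z, Λ y)
      = Real.exp (-∫ y in x..a, Λ y) - Real.exp (-∫ y in x..b, Λ y) := by
  set F : ℝ → ℝ := fun z => ∫ y in x..z, Λ y with hF
  have hFcont : Continuous F := intervalIntegral.continuous_primitive hΛloc x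
  have hFsub : ∀ p q : ℝ, F q - F p = ∫ y in p..q, Λ y := fun p q =>
    intervalIntegral.integral_interval_sub_left (hΛloc x q) (hΛloc x p)
  have hFmono : StrictMono F := by
    intro p q hpq
    have h1 : 0 < ∫ y in p..q, Λ y := intervalIntegral_pos_of_pos (hΛloc p q) hΛpos hpq
    have := hFsub p q
    linarith
  -- the weighted measure
  set μ : Measure ℝ := ((volume : Measure ℝ).restrict (Ioc a b)).withDensity
    (fun z => ENNReal.ofReal (Λ z)) with hμ
  have hμapp : ∀ s : Set ℝ, MeasurableSet s →
      μ s = ENNReal.ofReal (∫ z in s ∩ Ioc a b, Λ z) := by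
    intro s hs
    rw [hμ, withDensity_apply _ hs, Measure.restrict_restrict hs]
    have hint : IntegrableOn Λ (s ∩ Ioc a b) volume := by
      refine IntegrableOn.mono_set ?_ (inter_subset_right)
      exact (intervalIntegrable_iff_integrableOn_Ioc_of_le hab).1 (hΛloc a b)
    rw [← ofReal_integral_eq_lintegral_ofReal hint
      (Eventually.of_forall fun z => (hΛpos z).le)]
  have hIoc : ∀ p q : ℝ, p ≤ q → (∫ z in Ioc p q, Λ z) = F q - F p := by
    intro p q hpq
    rw [hFsub p q, intervalIntegral.integral_of_le hpq]
  haveI : IsFiniteMeasure μ := by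
    constructor
    rw [hμapp univ MeasurableSet.univ]
    exact ENNReal.ofReal_lt_top
  haveI : IsFiniteMeasure ((volume : Measure ℝ).restrict (Ioc (F a) (F b))) := by
    constructor
    rw [Measure.restrict_apply MeasurableSet.univ, univ_inter, Real.volume_Ioc]
    exact ENNReal.ofReal_lt_top
  have hFab : F a ≤ F b := hFmono.monotone hab
  -- pushforward identity
  have hmap : Measure.map F μ = (volume : Measure ℝ).restrict (Ioc (F a) (F b)) := by
    refine MeasureTheory.Measure.ext_of_Iic _ _ (fun c => ?_)
    rw [Measure.map_apply hFcont.measurable measurableSet_Iic,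
      Measure.restrict_apply measurableSet_Iic, Set.inter_comm, Set.Ioc_inter_Iic,
      Real.volume_Ioc]
    have hpre : MeasurableSet (F ⁻¹' Iic c) := hFcont.measurable measurableSet_Iic
    rw [hμapp _ hpre]
    by_cases hc : F a ≤ c
    · have hc' : F a ≤ min (F b) c := le_min hFab hc
      obtain ⟨w, hw, hFw⟩ := intermediate_value_Icc hab hFcont.continuousOn
        ⟨hc', min_le_left _ _⟩
      have hseq : F ⁻¹' Iic c ∩ Ioc a b = Ioc a w := by
        ext z
        simp only [mem_inter_iff, mem_preimage, mem_Iic, mem_Ioc]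
        constructor
        · rintro ⟨hzc, haz, hzb⟩
          refine ⟨haz, ?_⟩
          have : F z ≤ min (F b) c := le_min (hFmono.monotone hzb) hzc
          rw [← hFw] at this
          exact hFmono.le_iff_le.1 this
        · rintro ⟨haz, hzw⟩
          refine ⟨?_, haz, hzw.trans hw.2⟩
          have : F z ≤ F w := hFmono.monotone hzw
          rw [hFw] at this
          exact this.trans (min_le_right _ _)
      rw [hseq, hIoc a w hw.1, hFw]
    · push_neg at hc
      have hseq : F ⁻¹' Iic c ∩ Ioc a b = (∅ : Set ℝ) := by
        ext z
        simp only [mem_inter_iff, mem_preimage, mem_Iic, mem_Ioc, mem_empty_iff_false,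
          iff_false, not_and, and_imp]
        intro hzc haz
        exact absurd ((hFmono.monotone (le_of_lt haz)).trans hzc) (not_le.2 hc)
      rw [hseq]
      have h1 : min (F b) c - F a < 0 := by
        have := min_le_right (F b) c
        linarith
      simp [ENNReal.ofReal_of_nonpos h1.le]
  -- now compute the integral
  have hdens : (fun z => ENNReal.ofReal (Λ z))
      = (fun z => ((Real.toNNReal (Λ z) : ℝ≥0) : ℝ≥0∞)) := rfl
  have step1 : ∫ z in a..b, Λ z * Real.exp (-F z)
      = ∫ z, Real.exp (-F z) ∂μ := by
    rw [hμ, hdens, integral_withDensity_eq_integral_smul hΛmeas.real_toNNReal,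
      intervalIntegral.integral_of_le hab]
    refine integral_congr_ae (Eventually.of_forall fun z => ?_)
    simp [NNReal.smul_def, Real.coe_toNNReal _ (hΛpos z).le]
  have step2 : ∫ z, Real.exp (-F z) ∂μ = ∫ u, Real.exp (-u) ∂(Measure.map F μ) :=
    (integral_map hFcont.aemeasurable
      ((Real.continuous_exp.comp continuous_neg).aestronglyMeasurable)).symm
  have step3 : ∫ u, Real.exp (-u) ∂((volume : Measure ℝ).restrict (Ioc (F a) (F b)))
      = Real.exp (-F a) - Real.exp (-F b) := by
    rw [← intervalIntegral.integral_of_le hFab]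
    rw [intervalIntegral.integral_comp_neg fun u => Real.exp u]
    rw [integral_exp]
  rw [step1, step2, hmap, step3]

lemma key_diff (Λ f f' : ℝ → ℝ)
    (hΛmeas : Measurable Λ) (hΛpos : ∀ y, 0 < Λ y)
    (hΛloc : ∀ a b : ℝ, IntervalIntegrable Λ volume a b)
    (hf'int : ∀ a b : ℝ, IntervalIntegrable f' volume a b)
    (hFTC : ∀ a b : ℝ, f b - f a = ∫ y in a..b, f' y)
    (x a b : ℝ) (hab : a ≤ b) :
    f b * Real.exp (-∫ y in x..b, Λ y) - f a * Real.exp (-∫ y in x..a, Λ y)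
      = ∫ z in a..b, (f' z - f z * Λ z) * Real.exp (-∫ y in x..z, Λ y) := by
  set F : ℝ → ℝ := fun z => ∫ y in x..z, Λ y with hF
  set E : ℝ → ℝ := fun z => Real.exp (-F z) with hE
  have hFcont : Continuous F := intervalIntegral.continuous_primitive hΛloc x
  have hEcont : Continuous E := Real.continuous_exp.comp hFcont.neg
  have hfc : Continuous f := by
    have h := intervalIntegral.continuous_primitive hf'int 0
    have he : (fun z => f 0 + ∫ y in (0:ℝ)..z, f' y) = f := by
      funext z
      have := hFTC 0 z
      linarith
    exact he ▸ (continuous_const.add h)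
  have hΛE : IntervalIntegrable (fun z => Λ z * E z) volume a b :=
    (hΛloc a b).mul_continuousOn hEcont.continuousOn
  have hv : IntervalIntegrable (fun z => -(Λ z * E z)) volume a b := hΛE.neg
  have h1 : IntervalIntegrable (fun z => f' z * E z) volume a b :=
    (hf'int a b).mul_continuousOn hEcont.continuousOn
  have h2 : IntervalIntegrable (fun z => f z * (Λ z * E z)) volume a b :=
    hΛE.continuousOn_mul hfc.continuousOn
  have hU : ∀ z ∈ Icc a b, f z = f a + ∫ s in a..z, f' s := by
    intro z _
    have := hFTC a z
    linarith
  have hV : ∀ z ∈ Icc a b, E z = E a + ∫ t in a..z, -(Λ t * E t) := by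
    intro z hz
    have h := exp_primitive_integral Λ hΛmeas hΛpos hΛloc x a z hz.1
    rw [intervalIntegral.integral_neg]
    simp only [hE, hF]
    rw [h]
    ring
  have key := primitive_mul_sub f' (fun z => -(Λ z * E z)) f E a b hab
    (hf'int a b) hv hU hV
  rw [key]
  have e1 : (∫ z in a..b, f z * -(Λ z * E z)) = -∫ z in a..b, f z * (Λ z * E z) := by
    rw [← intervalIntegral.integral_neg]
    refine intervalIntegral.integral_congr fun z _ => ?_
    ring
  rw [e1]
  rw [← sub_eq_add_neg, ← intervalIntegral.integral_sub h1 h2]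
  refine intervalIntegral.integral_congr fun z _ => ?_
  ring

/-- Under Assumptions 2.2 and 2.3 of the paper (with the threshold `x*` finite or `-∞`),
for every fixed `x` the function `g z = f z * exp (-∫_x^z Λ)` is nondecreasing on
`[x, max (x, x*)]` and strictly decreasing on `[max (x, x*), ∞)`; in particular it is
maximized over `[x, ∞)` at `max (x, x*)`. -/
theorem monotonicity_of_upcrossing_value (Λ f f' : ℝ → ℝ) (xs : EReal)
    (hΛmeas : Measurable Λ) (hΛpos : ∀ y, 0 < Λ y)
    (hΛloc : ∀ a b : ℝ, IntervalIntegrable Λ volume a b)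
    (hΛinf : ∀ x : ℝ, (∫⁻ y in Set.Ioi x, ENNReal.ofReal (Λ y)) = ⊤)
    (hf'int : ∀ a b : ℝ, IntervalIntegrable f' volume a b)
    (hFTC : ∀ a b : ℝ, f b - f a = ∫ y in a..b, f' y)
    (hpos : ∀ᵐ (z : ℝ) ∂(volume : Measure ℝ), xs < (z : EReal) → 0 < f z - f' z / Λ z)
    (hneg : ∀ᵐ (z : ℝ) ∂(volume : Measure ℝ), (z : EReal) ≤ xs → f z - f' z / Λ z ≤ 0)
    (hmono : ∃ htil : ℝ → ℝ, Monotone htil ∧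
      ∀ᵐ (z : ℝ) ∂(volume : Measure ℝ), xs < (z : EReal) → f z - f' z / Λ z = htil z)
    (hfpos : ∀ᶠ z in atTop, 0 < f z)
    (hxs : xs ≠ ⊤)
    (x m : ℝ) (hm : (m : EReal) = max (x : EReal) xs) :
    MonotoneOn (fun z => f z * Real.exp (-∫ y in x..z, Λ y)) (Set.Icc x m) ∧
    StrictAntiOn (fun z => f z * Real.exp (-∫ y in x..z, Λ y)) (Set.Ici m) ∧
    ∀ z : ℝ, x ≤ z →
      f z * Real.exp (-∫ y in x..z, Λ y) ≤ f m * Real.exp (-∫ y in x..m, Λ y) := by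
  have hfc : Continuous f := by
    have h := intervalIntegral.continuous_primitive hf'int 0
    have he : (fun z => f 0 + ∫ y in (0:ℝ)..z, f' y) = f := by
      funext z
      have := hFTC 0 z
      linarith
    exact he ▸ (continuous_const.add h)
  have hEcont : Continuous (fun z => Real.exp (-∫ y in x..z, Λ y)) :=
    Real.continuous_exp.comp (intervalIntegral.continuous_primitive hΛloc x).neg
  have hxm : x ≤ m := by
    have h : (x : EReal) ≤ (m : EReal) := hm ▸ le_max_left _ _
    exact_mod_cast h
  have hxsm : xs ≤ (m : EReal) := hm ▸ le_max_right _ _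
  have hkey := key_diff Λ f f' hΛmeas hΛpos hΛloc hf'int hFTC x
  -- Part 1 : monotone on Icc x m
  have part1 : MonotoneOn (fun z => f z * Real.exp (-∫ y in x..z, Λ y)) (Set.Icc x m) := by
    intro a ha b hb hab
    rcases eq_or_lt_of_le hab with rfl | hab'
    · exact le_refl _
    have key := hkey a b hab
    by_cases hcase : xs ≤ (x : EReal)
    · exfalso
      have hmx : (m : EReal) = (x : EReal) := by rw [hm, max_eq_left hcase]
      have : m = x := by exact_mod_cast hmx
      have h1 := ha.1
      have h2 := hb.2
      rw [this] at h2
      linarith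
    push_neg at hcase
    have hmxs : (m : EReal) = xs := by rw [hm, max_eq_right hcase.le]
    have hnn : 0 ≤ ∫ z in a..b, (f' z - f z * Λ z) * Real.exp (-∫ y in x..z, Λ y) := by
      refine intervalIntegral.integral_nonneg_of_ae_restrict hab ?_
      filter_upwards [ae_restrict_of_ae hneg, ae_restrict_mem measurableSet_Icc]
        with z hz hzmem
      have hzxs : (z : EReal) ≤ xs := by
        rw [← hmxs]
        exact_mod_cast hzmem.2.trans hb.2
      have h0 := hz hzxs
      have hfz : f z ≤ f' z / Λ z := by linarith
      have hmul : f z * Λ z ≤ f' z := (le_div_iff₀ (hΛpos z)).1 hfz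
      exact mul_nonneg (by linarith) (Real.exp_pos _).le
    dsimp only
    linarith
  -- Part 2 : strictly decreasing on Ici m
  have part2 : StrictAntiOn (fun z => f z * Real.exp (-∫ y in x..z, Λ y)) (Set.Ici m) := by
    intro a ha b hb hab
    have key := hkey a b hab.le
    have hfi : IntervalIntegrable
        (fun z => (f' z - f z * Λ z) * Real.exp (-∫ y in x..z, Λ y)) volume a b :=
      ((hf'int a b).sub ((hΛloc a b).continuousOn_mul hfc.continuousOn)).mul_continuousOn
        hEcont.continuousOn
    have haeneg : ∀ᵐ z ∂((volume : Measure ℝ).restrict (Ioc a b)),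
        (f' z - f z * Λ z) * Real.exp (-∫ y in x..z, Λ y) < 0 := by
      filter_upwards [ae_restrict_of_ae hpos, ae_restrict_mem measurableSet_Ioc]
        with z hz hzmem
      have hmz : (m : EReal) < (z : EReal) := by
        exact_mod_cast lt_of_le_of_lt ha hzmem.1
      have h0 := hz (lt_of_le_of_lt hxsm hmz)
      have hdiv : f' z / Λ z < f z := by linarith
      have hmul : f' z < f z * Λ z := (div_lt_iff₀ (hΛpos z)).1 hdiv
      exact mul_neg_of_neg_of_pos (by linarith) (Real.exp_pos _)
    have hneg' : (∫ z in a..b, (f' z - f z * Λ z) * Real.exp (-∫ y in x..z, Λ y)) < 0 := by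
      have h := intervalIntegral.integral_lt_integral_of_ae_le_of_measure_setOf_lt_ne_zero
        hab.le hfi (_root_.intervalIntegrable_const (c := (0:ℝ)))
        (haeneg.mono fun z hz => hz.le) ?_
      · simpa using h
      · intro h0
        have h1 : ∀ᵐ z ∂((volume : Measure ℝ).restrict (Ioc a b)),
            z ∉ {w : ℝ | (f' w - f w * Λ w) * Real.exp (-∫ y in x..w, Λ y) < (0:ℝ)} := by
          rw [ae_iff]
          simpa using h0
        have h3 : ∀ᵐ z ∂((volume : Measure ℝ).restrict (Ioc a b)), False := by
          filter_upwards [haeneg, h1] with z hz1 hz2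
          exact hz2 hz1
        have h4 := ae_iff.mp h3
        simp only [not_false_iff, setOf_true] at h4
        rw [Measure.restrict_apply_univ, Real.volume_Ioc, ENNReal.ofReal_eq_zero] at h4
        linarith
    dsimp only
    linarith
  refine ⟨part1, part2, fun z hz => ?_⟩
  rcases le_or_gt z m with h | h
  · exact part1 ⟨hz, h⟩ ⟨hxm, le_refl m⟩ h
  · exact (part2 (self_mem_Ici) (le_of_lt h) h).le
end

section
/- Under the stated assumptions on Λ and f, the limit c₀ := lim_{z→∞} f(z)·exp(−∫_0^z Λ(y) dy) exists in the extended sense: the function z ↦ f(z)·exp(−∫_0^z Λ(y) dy) either converges to a finite limit or tends to +∞ as z → ∞, and the limit c₀ lies in [0, ∞]. Moreover, if x* < ∞ then c₀ ∈ [0, ∞), and if x* = ∞ then c₀ ∈ (0, ∞]. -/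
open MeasureTheory Filter Topology intervalIntegral

namespace LimitC0Aux

lemma ae_on_Icc {P : ℝ → Prop} {x₀ s : ℝ} (y : ℝ) (hs : x₀ ≤ s)
    (hae : ∀ᵐ z ∂(volume : Measure ℝ), x₀ < z → P z) :
    ∀ᵐ z ∂(volume.restrict (Set.Icc s y)), P z := by
  have h1 : ∀ᵐ z ∂(volume.restrict (Set.Icc s y)), x₀ < z → P z := ae_restrict_of_ae hae
  have h2 : ∀ᵐ z ∂(volume.restrict (Set.Icc s y)), x₀ < z := by
    rw [ae_iff]
    have hset : {z : ℝ | ¬ x₀ < z} = Set.Iic x₀ := by ext z; simp [not_lt]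
    rw [hset, Measure.restrict_apply measurableSet_Iic]
    refine measure_mono_null ?_ (measure_singleton x₀)
    rintro z ⟨hz1, hz2, _⟩
    have : z = x₀ := le_antisymm hz1 (hs.trans hz2)
    simp [this]
  filter_upwards [h1, h2] with z hz1 hz2 using hz1 hz2

lemma step_up {Λ f f' : ℝ → ℝ} {x₀ : ℝ}
    (hΛpos : ∀ y, 0 < Λ y)
    (hΛloc : ∀ a b : ℝ, IntervalIntegrable Λ volume a b)
    (hf'int : ∀ a b : ℝ, IntervalIntegrable f' volume a b)
    (hFTC : ∀ a b : ℝ, f b - f a = ∫ y in a..b, f' y)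
    (hf_cont : Continuous f)
    (hfpos : ∀ z, x₀ ≤ z → 0 < f z)
    (hae : ∀ᵐ z ∂(volume : Measure ℝ), x₀ < z → f' z ≤ Λ z * f z)
    {s t : ℝ} (hs : x₀ ≤ s) (hst : s ≤ t) (hhalf : (∫ y in s..t, Λ y) ≤ 1/2) :
    f t ≤ f s * (1 + (∫ y in s..t, Λ y) + 2 * (∫ y in s..t, Λ y)^2) := by
  set Δ := ∫ y in s..t, Λ y with hΔdef
  have hΔ0 : 0 ≤ Δ := intervalIntegral.integral_nonneg hst fun u _ => (hΛpos u).le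
  have hfs := hfpos s hs
  have hΛf : ∀ y : ℝ, IntervalIntegrable (fun u => Λ u * f u) volume s y :=
    fun y => (hΛloc s y).mul_continuousOn hf_cont.continuousOn
  have hW_le : ∀ y ∈ Set.Icc s t, (∫ u in s..y, Λ u) ≤ Δ := by
    intro y hy
    have hadd := integral_add_adjacent_intervals (μ := volume) (hΛloc s y) (hΛloc y t)
    have h2 : 0 ≤ ∫ u in y..t, Λ u :=
      intervalIntegral.integral_nonneg hy.2 fun u _ => (hΛpos u).le
    rw [hΔdef]; linarith
  have basic : ∀ y, s ≤ y → f y ≤ f s + ∫ u in s..y, Λ u * f u := by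
    intro y hy
    have h1 := hFTC s y
    have h2 : (∫ u in s..y, f' u) ≤ ∫ u in s..y, Λ u * f u :=
      integral_mono_ae_restrict hy (hf'int s y) (hΛf y) (ae_on_Icc y hs hae)
    linarith
  have key : ∀ M, 0 ≤ M → (∀ u ∈ Set.Icc s t, f u ≤ M) →
      ∀ y ∈ Set.Icc s t, f y ≤ f s + M * Δ := by
    intro M hM0 hMb y hy
    have h1 := basic y hy.1
    have h2 : (∫ u in s..y, Λ u * f u) ≤ ∫ u in s..y, Λ u * M := by
      refine integral_mono_on hy.1 (hΛf y) ((hΛloc s y).mul_const M) fun u hu => ?_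
      exact mul_le_mul_of_nonneg_left (hMb u ⟨hu.1, hu.2.trans hy.2⟩) (hΛpos u).le
    rw [intervalIntegral.integral_mul_const] at h2
    have h3 : (∫ u in s..y, Λ u) * M ≤ Δ * M :=
      mul_le_mul_of_nonneg_right (hW_le y hy) hM0
    nlinarith
  obtain ⟨z', hz'mem, hz'max⟩ :=
    isCompact_Icc.exists_isMaxOn (Set.nonempty_Icc.2 hst) hf_cont.continuousOn
  set M := f z' with hMdef
  have hMb : ∀ u ∈ Set.Icc s t, f u ≤ M := fun u hu => hz'max hu
  have hM0 : 0 ≤ M := hfs.le.trans (hMb s ⟨le_refl s, hst⟩)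
  have hM2 : M ≤ 2 * f s := by
    have h := key M hM0 hMb z' hz'mem
    nlinarith [mul_le_mul_of_nonneg_left hhalf hM0]
  have hfu : ∀ u ∈ Set.Icc s t, f u ≤ f s + 2 * f s * Δ := by
    intro u hu
    have h := key M hM0 hMb u hu
    nlinarith [mul_le_mul_of_nonneg_right hM2 hΔ0]
  have hfinal : (∫ u in s..t, Λ u * f u) ≤ ∫ u in s..t, Λ u * (f s + 2 * f s * Δ) := by
    refine integral_mono_on hst (hΛf t) ((hΛloc s t).mul_const _) fun u hu => ?_
    exact mul_le_mul_of_nonneg_left (hfu u hu) (hΛpos u).le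
  rw [intervalIntegral.integral_mul_const] at hfinal
  have hb := basic t hst
  nlinarith

lemma step_down {Λ f f' : ℝ → ℝ} {x₀ : ℝ}
    (hΛpos : ∀ y, 0 < Λ y)
    (hΛloc : ∀ a b : ℝ, IntervalIntegrable Λ volume a b)
    (hf'int : ∀ a b : ℝ, IntervalIntegrable f' volume a b)
    (hFTC : ∀ a b : ℝ, f b - f a = ∫ y in a..b, f' y)
    (hf_cont : Continuous f)
    (hfpos : ∀ z, x₀ ≤ z → 0 < f z)
    (hae : ∀ᵐ z ∂(volume : Measure ℝ), x₀ < z → Λ z * f z ≤ f' z)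
    {s t : ℝ} (hs : x₀ ≤ s) (hst : s ≤ t) :
    f s * (1 + ∫ y in s..t, Λ y) ≤ f t := by
  have hΛf : ∀ s' y : ℝ, IntervalIntegrable (fun u => Λ u * f u) volume s' y :=
    fun s' y => (hΛloc s' y).mul_continuousOn hf_cont.continuousOn
  have basic : ∀ s' y, x₀ ≤ s' → s' ≤ y → f s' + (∫ u in s'..y, Λ u * f u) ≤ f y := by
    intro s' y hxs' hy
    have h1 := hFTC s' y
    have h2 : (∫ u in s'..y, Λ u * f u) ≤ ∫ u in s'..y, f' u :=
      integral_mono_ae_restrict hy (hΛf s' y) (hf'int s' y) (ae_on_Icc y hxs' hae)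
    linarith
  have hmono : ∀ y ∈ Set.Icc s t, f s ≤ f y := by
    intro y hy
    have h1 := basic s y hs hy.1
    have h2 : 0 ≤ ∫ u in s..y, Λ u * f u :=
      intervalIntegral.integral_nonneg hy.1 fun u hu =>
        (mul_pos (hΛpos u) (hfpos u (hs.trans hu.1))).le
    linarith
  have h3 : (∫ u in s..t, Λ u * f s) ≤ ∫ u in s..t, Λ u * f u := by
    refine integral_mono_on hst ((hΛloc s t).mul_const _) (hΛf s t) fun u hu => ?_
    exact mul_le_mul_of_nonneg_left (hmono u hu) (hΛpos u).le
  rw [intervalIntegral.integral_mul_const] at h3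
  have h4 := basic s t hs hst
  nlinarith



variable {Λ f f' : ℝ → ℝ} {x₀ : ℝ}

lemma hsub (hΛloc : ∀ a b : ℝ, IntervalIntegrable Λ volume a b) (s t : ℝ) :
    (∫ y in s..t, Λ y) = (∫ y in (0:ℝ)..t, Λ y) - (∫ y in (0:ℝ)..s, Λ y) := by
  have h1 := integral_add_adjacent_intervals (μ := volume) (hΛloc 0 s) (hΛloc s t)
  linarith

lemma chain_up
    (hΛpos : ∀ y, 0 < Λ y)
    (hΛloc : ∀ a b : ℝ, IntervalIntegrable Λ volume a b)
    (hf'int : ∀ a b : ℝ, IntervalIntegrable f' volume a b)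
    (hFTC : ∀ a b : ℝ, f b - f a = ∫ y in a..b, f' y)
    (hf_cont : Continuous f)
    (hfpos : ∀ z, x₀ ≤ z → 0 < f z)
    (hae : ∀ᵐ z ∂(volume : Measure ℝ), x₀ < z → f' z ≤ Λ z * f z)
    {a b : ℝ} (ha : x₀ ≤ a) (hab : a ≤ b) {ε : ℝ} (hε0 : 0 < ε) (hε2 : ε ≤ 1/2) :
    f b ≤ f a * Real.exp ((∫ y in a..b, Λ y) * (1 + 2*ε)) := by
  have hFc : Continuous fun z => ∫ y in (0:ℝ)..z, Λ y := continuous_primitive hΛloc 0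
  obtain ⟨δ, hδ0, hδ⟩ := Metric.uniformContinuousOn_iff.1
    ((isCompact_Icc (a := a) (b := b)).uniformContinuousOn_of_continuous hFc.continuousOn) ε hε0
  set δ' := δ/2 with hδ'def
  have hδ'0 : 0 < δ' := by positivity
  have hsmall : ∀ s t : ℝ, a ≤ s → s ≤ t → t ≤ b → t - s ≤ δ' → (∫ y in s..t, Λ y) ≤ ε := by
    intro s t has hst htb hts
    have h1 : dist ((fun z => ∫ y in (0:ℝ)..z, Λ y) s) ((fun z => ∫ y in (0:ℝ)..z, Λ y) t) < ε := by
      apply hδ s ⟨has, hst.trans htb⟩ t ⟨has.trans hst, htb⟩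
      rw [Real.dist_eq, abs_of_nonpos (by linarith)]
      linarith
    simp only [Real.dist_eq] at h1
    have h2 := hsub hΛloc s t
    have h3 := abs_lt.1 h1
    linarith [h3.2, h3.1]
  have one : ∀ s t : ℝ, a ≤ s → s ≤ t → t ≤ b → t - s ≤ δ' →
      f t ≤ f s * Real.exp ((∫ y in s..t, Λ y) * (1 + 2*ε)) := by
    intro s t has hst htb hts
    set Δ := ∫ y in s..t, Λ y with hΔdef
    have hΔ0 : 0 ≤ Δ := intervalIntegral.integral_nonneg hst fun u _ => (hΛpos u).le
    have hΔε : Δ ≤ ε := hsmall s t has hst htb hts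
    have hstep := step_up hΛpos hΛloc hf'int hFTC hf_cont hfpos hae (ha.trans has) hst
      (hΔε.trans hε2)
    have hexp1 : 1 + Δ + 2*Δ^2 ≤ Real.exp (Δ * (1 + 2*ε)) := by
      have h1 := Real.add_one_le_exp (Δ + 2*Δ^2)
      have h2 : Real.exp (Δ + 2*Δ^2) ≤ Real.exp (Δ * (1+2*ε)) :=
        Real.exp_le_exp.2 (by nlinarith)
      linarith
    have hfs0 : 0 ≤ f s := (hfpos s (ha.trans has)).le
    calc f t ≤ f s * (1 + Δ + 2*Δ^2) := hstep
      _ ≤ f s * Real.exp (Δ * (1+2*ε)) := mul_le_mul_of_nonneg_left hexp1 hfs0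
  have main : ∀ n : ℕ, ∀ s t : ℝ, a ≤ s → s ≤ t → t ≤ b → t - s ≤ n * δ' →
      f t ≤ f s * Real.exp ((∫ y in s..t, Λ y) * (1 + 2*ε)) := by
    intro n
    induction n with
    | zero =>
      intro s t has hst htb hts
      have hts' : t - s ≤ 0 := by simpa using hts
      have ht : t = s := le_antisymm (by linarith) hst
      subst ht
      simp [intervalIntegral.integral_same]
    | succ n ih =>
      intro s t has hst htb hts
      by_cases hc : t - s ≤ δ'
      · exact one s t has hst htb hc
      · push_neg at hc
        set m := s + δ' with hmdef
        have hsm : s ≤ m := by simp [hmdef]; positivity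
        have hmt : m ≤ t := by rw [hmdef]; linarith
        have h1 := one s m has hsm (hmt.trans htb) (by simp [hmdef])
        have h2 := ih m t (has.trans hsm) hmt htb (by push_cast at hts ⊢; rw [hmdef]; linarith)
        have hadd := integral_add_adjacent_intervals (μ := volume) (hΛloc s m) (hΛloc m t)
        calc f t ≤ f m * Real.exp ((∫ y in m..t, Λ y) * (1+2*ε)) := h2
          _ ≤ (f s * Real.exp ((∫ y in s..m, Λ y) * (1+2*ε))) *
                Real.exp ((∫ y in m..t, Λ y)*(1+2*ε)) :=
              mul_le_mul_of_nonneg_right h1 (Real.exp_pos _).le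
          _ = f s * Real.exp ((∫ y in s..t, Λ y) * (1+2*ε)) := by
              rw [mul_assoc, ← Real.exp_add, ← hadd]; ring_nf
  obtain ⟨n, hn⟩ := exists_nat_ge ((b - a)/δ')
  have hba : b - a ≤ n * δ' := by
    rw [div_le_iff₀ hδ'0] at hn; linarith
  exact main n a b le_rfl hab le_rfl hba

lemma chain_down
    (hΛpos : ∀ y, 0 < Λ y)
    (hΛloc : ∀ a b : ℝ, IntervalIntegrable Λ volume a b)
    (hf'int : ∀ a b : ℝ, IntervalIntegrable f' volume a b)
    (hFTC : ∀ a b : ℝ, f b - f a = ∫ y in a..b, f' y)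
    (hf_cont : Continuous f)
    (hfpos : ∀ z, x₀ ≤ z → 0 < f z)
    (hae : ∀ᵐ z ∂(volume : Measure ℝ), x₀ < z → Λ z * f z ≤ f' z)
    {a b : ℝ} (ha : x₀ ≤ a) (hab : a ≤ b) {ε : ℝ} (hε0 : 0 < ε) (hε2 : ε ≤ 1/2) :
    f a * Real.exp ((∫ y in a..b, Λ y) * (1 - ε)) ≤ f b := by
  have hFc : Continuous fun z => ∫ y in (0:ℝ)..z, Λ y := continuous_primitive hΛloc 0
  obtain ⟨δ, hδ0, hδ⟩ := Metric.uniformContinuousOn_iff.1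
    ((isCompact_Icc (a := a) (b := b)).uniformContinuousOn_of_continuous hFc.continuousOn) ε hε0
  set δ' := δ/2 with hδ'def
  have hδ'0 : 0 < δ' := by positivity
  have hsmall : ∀ s t : ℝ, a ≤ s → s ≤ t → t ≤ b → t - s ≤ δ' → (∫ y in s..t, Λ y) ≤ ε := by
    intro s t has hst htb hts
    have h1 : dist ((fun z => ∫ y in (0:ℝ)..z, Λ y) s) ((fun z => ∫ y in (0:ℝ)..z, Λ y) t) < ε := by
      apply hδ s ⟨has, hst.trans htb⟩ t ⟨has.trans hst, htb⟩
      rw [Real.dist_eq, abs_of_nonpos (by linarith)]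
      linarith
    simp only [Real.dist_eq] at h1
    have h2 := hsub hΛloc s t
    have h3 := abs_lt.1 h1
    linarith [h3.2, h3.1]
  have one : ∀ s t : ℝ, a ≤ s → s ≤ t → t ≤ b → t - s ≤ δ' →
      f s * Real.exp ((∫ y in s..t, Λ y) * (1 - ε)) ≤ f t := by
    intro s t has hst htb hts
    set Δ := ∫ y in s..t, Λ y with hΔdef
    have hΔ0 : 0 ≤ Δ := intervalIntegral.integral_nonneg hst fun u _ => (hΛpos u).le
    have hΔε : Δ ≤ ε := hsmall s t has hst htb hts
    have hstep := step_down hΛpos hΛloc hf'int hFTC hf_cont hfpos hae (ha.trans has) hst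
    have hq : (0:ℝ) < 1 - (Δ - Δ^2) := by nlinarith [sq_nonneg (Δ - 1/2)]
    have h1 : 1 - (Δ - Δ^2) ≤ Real.exp (-(Δ - Δ^2)) := by
      have := Real.add_one_le_exp (-(Δ - Δ^2)); linarith
    have h2 : Real.exp (Δ - Δ^2) * (1 - (Δ - Δ^2)) ≤ 1 := by
      have h3 := mul_le_mul_of_nonneg_left h1 (Real.exp_pos (Δ - Δ^2)).le
      rwa [← Real.exp_add, add_neg_cancel, Real.exp_zero] at h3
    have h4 : Real.exp (Δ - Δ^2) ≤ 1 + Δ := by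
      nlinarith [Real.exp_pos (Δ - Δ^2)]
    have h5 : Real.exp (Δ*(1-ε)) ≤ Real.exp (Δ - Δ^2) :=
      Real.exp_le_exp.2 (by nlinarith)
    have hfs0 : 0 ≤ f s := (hfpos s (ha.trans has)).le
    calc f s * Real.exp (Δ * (1-ε)) ≤ f s * (1 + Δ) :=
          mul_le_mul_of_nonneg_left (h5.trans h4) hfs0
      _ ≤ f t := hstep
  have main : ∀ n : ℕ, ∀ s t : ℝ, a ≤ s → s ≤ t → t ≤ b → t - s ≤ n * δ' →
      f s * Real.exp ((∫ y in s..t, Λ y) * (1 - ε)) ≤ f t := by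
    intro n
    induction n with
    | zero =>
      intro s t has hst htb hts
      have hts' : t - s ≤ 0 := by simpa using hts
      have ht : t = s := le_antisymm (by linarith) hst
      subst ht
      simp [intervalIntegral.integral_same]
    | succ n ih =>
      intro s t has hst htb hts
      by_cases hc : t - s ≤ δ'
      · exact one s t has hst htb hc
      · push_neg at hc
        set m := s + δ' with hmdef
        have hsm : s ≤ m := by simp [hmdef]; positivity
        have hmt : m ≤ t := by rw [hmdef]; linarith
        have h1 := one s m has hsm (hmt.trans htb) (by simp [hmdef])
        have h2 := ih m t (has.trans hsm) hmt htb (by push_cast at hts ⊢; rw [hmdef]; linarith)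
        have hadd := integral_add_adjacent_intervals (μ := volume) (hΛloc s m) (hΛloc m t)
        calc f s * Real.exp ((∫ y in s..t, Λ y) * (1-ε))
            = (f s * Real.exp ((∫ y in s..m, Λ y) * (1-ε))) *
                Real.exp ((∫ y in m..t, Λ y)*(1-ε)) := by
              rw [mul_assoc, ← Real.exp_add, ← hadd]; ring_nf
          _ ≤ f m * Real.exp ((∫ y in m..t, Λ y)*(1-ε)) :=
              mul_le_mul_of_nonneg_right h1 (Real.exp_pos _).le
          _ ≤ f t := h2
  obtain ⟨n, hn⟩ := exists_nat_ge ((b - a)/δ')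
  have hba : b - a ≤ n * δ' := by
    rw [div_le_iff₀ hδ'0] at hn; linarith
  exact main n a b le_rfl hab le_rfl hba


variable {Λ f f' : ℝ → ℝ} {x₀ : ℝ}

lemma gron_up
    (hΛpos : ∀ y, 0 < Λ y)
    (hΛloc : ∀ a b : ℝ, IntervalIntegrable Λ volume a b)
    (hf'int : ∀ a b : ℝ, IntervalIntegrable f' volume a b)
    (hFTC : ∀ a b : ℝ, f b - f a = ∫ y in a..b, f' y)
    (hf_cont : Continuous f)
    (hfpos : ∀ z, x₀ ≤ z → 0 < f z)
    (hae : ∀ᵐ z ∂(volume : Measure ℝ), x₀ < z → f' z ≤ Λ z * f z)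
    {a b : ℝ} (ha : x₀ ≤ a) (hab : a ≤ b) :
    f b * Real.exp (-∫ y in (0:ℝ)..b, Λ y) ≤ f a * Real.exp (-∫ y in (0:ℝ)..a, Λ y) := by
  set Fa := ∫ y in (0:ℝ)..a, Λ y with hFa
  set Fb := ∫ y in (0:ℝ)..b, Λ y with hFb
  set D := ∫ y in a..b, Λ y with hDdef
  have hD : D = Fb - Fa := hsub hΛloc a b
  have key : ∀ n : ℕ, f b * Real.exp (-Fb) ≤
      (f a * Real.exp (-Fa)) * Real.exp (D / ((n:ℝ)+1)) := by
    intro n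
    have hn1 : (0:ℝ) < (n:ℝ) + 1 := by positivity
    set ε := 1 / (2*((n:ℝ)+1)) with hεdef
    have hε0 : 0 < ε := by positivity
    have hε2 : ε ≤ 1/2 := by
      rw [hεdef, div_le_div_iff₀ (by positivity) (by norm_num)]
      nlinarith [Nat.cast_nonneg (α := ℝ) n]
    have hch := chain_up hΛpos hΛloc hf'int hFTC hf_cont hfpos hae ha hab hε0 hε2
    have hexp : Real.exp (D*(1+2*ε)) * Real.exp (-Fb) =
        Real.exp (-Fa) * Real.exp (D / ((n:ℝ)+1)) := by
      rw [← Real.exp_add, ← Real.exp_add]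
      congr 1
      rw [hD, hεdef]
      field_simp
      ring
    calc f b * Real.exp (-Fb) ≤ (f a * Real.exp (D*(1+2*ε))) * Real.exp (-Fb) :=
          mul_le_mul_of_nonneg_right hch (Real.exp_pos _).le
      _ = (f a * Real.exp (-Fa)) * Real.exp (D / ((n:ℝ)+1)) := by
          rw [mul_assoc, hexp, ← mul_assoc]
  have h1 : Tendsto (fun n : ℕ => D / ((n:ℝ)+1)) atTop (𝓝 0) := by
    have h := tendsto_one_div_add_atTop_nhds_zero_nat.const_mul D
    rw [mul_zero] at h
    refine h.congr fun n => ?_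
    rw [mul_one_div]
  have h2 := (Real.continuous_exp.tendsto 0).comp h1
  rw [Real.exp_zero] at h2
  have h3 := h2.const_mul (f a * Real.exp (-Fa))
  rw [mul_one] at h3
  exact ge_of_tendsto h3 (Eventually.of_forall key)

lemma gron_down
    (hΛpos : ∀ y, 0 < Λ y)
    (hΛloc : ∀ a b : ℝ, IntervalIntegrable Λ volume a b)
    (hf'int : ∀ a b : ℝ, IntervalIntegrable f' volume a b)
    (hFTC : ∀ a b : ℝ, f b - f a = ∫ y in a..b, f' y)
    (hf_cont : Continuous f)
    (hfpos : ∀ z, x₀ ≤ z → 0 < f z)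
    (hae : ∀ᵐ z ∂(volume : Measure ℝ), x₀ < z → Λ z * f z ≤ f' z)
    {a b : ℝ} (ha : x₀ ≤ a) (hab : a ≤ b) :
    f a * Real.exp (-∫ y in (0:ℝ)..a, Λ y) ≤ f b * Real.exp (-∫ y in (0:ℝ)..b, Λ y) := by
  set Fa := ∫ y in (0:ℝ)..a, Λ y with hFa
  set Fb := ∫ y in (0:ℝ)..b, Λ y with hFb
  set D := ∫ y in a..b, Λ y with hDdef
  have hD : D = Fb - Fa := hsub hΛloc a b
  have key : ∀ n : ℕ, (f a * Real.exp (-Fa)) * Real.exp (-(D / (2*((n:ℝ)+1)))) ≤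
      f b * Real.exp (-Fb) := by
    intro n
    have hn1 : (0:ℝ) < (n:ℝ) + 1 := by positivity
    set ε := 1 / (2*((n:ℝ)+1)) with hεdef
    have hε0 : 0 < ε := by positivity
    have hε2 : ε ≤ 1/2 := by
      rw [hεdef, div_le_div_iff₀ (by positivity) (by norm_num)]
      nlinarith [Nat.cast_nonneg (α := ℝ) n]
    have hch := chain_down hΛpos hΛloc hf'int hFTC hf_cont hfpos hae ha hab hε0 hε2
    have hexp : Real.exp (D*(1-ε)) * Real.exp (-Fb) =
        Real.exp (-Fa) * Real.exp (-(D / (2*((n:ℝ)+1)))) := by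
      rw [← Real.exp_add, ← Real.exp_add]
      congr 1
      rw [hD, hεdef]
      field_simp
      ring
    calc (f a * Real.exp (-Fa)) * Real.exp (-(D / (2*((n:ℝ)+1))))
        = (f a * Real.exp (D*(1-ε))) * Real.exp (-Fb) := by
          rw [mul_assoc, ← hexp, ← mul_assoc]
      _ ≤ f b * Real.exp (-Fb) :=
          mul_le_mul_of_nonneg_right hch (Real.exp_pos _).le
  have h1 : Tendsto (fun n : ℕ => -(D / (2*((n:ℝ)+1)))) atTop (𝓝 0) := by
    have h := tendsto_one_div_add_atTop_nhds_zero_nat.const_mul (-(D/2))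
    rw [mul_zero] at h
    refine h.congr fun n => ?_
    have hne : ((n:ℝ)+1) ≠ 0 := by positivity
    field_simp
  have h2 := (Real.continuous_exp.tendsto 0).comp h1
  rw [Real.exp_zero] at h2
  have h3 := h2.const_mul (f a * Real.exp (-Fa))
  rw [mul_one] at h3
  exact le_of_tendsto h3 (Eventually.of_forall key)

end LimitC0Aux

open LimitC0Aux in
/-- Under Assumptions 2.2 and 2.3 of the paper, the limit
`c₀ = lim_{z→∞} f z * exp (-∫_0^z Λ)` exists in `[0, ∞]` (computed in `ℝ≥0∞`); it is
finite when the threshold `x*` is not `+∞`, and strictly positive when `x* = +∞`. -/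
theorem limit_c0_exists (Λ f f' : ℝ → ℝ) (xs : EReal)
    (hΛmeas : Measurable Λ) (hΛpos : ∀ y, 0 < Λ y)
    (hΛloc : ∀ a b : ℝ, IntervalIntegrable Λ volume a b)
    (hΛinf : ∀ x : ℝ, (∫⁻ y in Set.Ioi x, ENNReal.ofReal (Λ y)) = ⊤)
    (hf'int : ∀ a b : ℝ, IntervalIntegrable f' volume a b)
    (hFTC : ∀ a b : ℝ, f b - f a = ∫ y in a..b, f' y)
    (hpos : ∀ᵐ (z : ℝ) ∂(volume : Measure ℝ), xs < (z : EReal) → 0 < f z - f' z / Λ z)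
    (hneg : ∀ᵐ (z : ℝ) ∂(volume : Measure ℝ), (z : EReal) ≤ xs → f z - f' z / Λ z ≤ 0)
    (hmono : ∃ htil : ℝ → ℝ, Monotone htil ∧
      ∀ᵐ (z : ℝ) ∂(volume : Measure ℝ), xs < (z : EReal) → f z - f' z / Λ z = htil z)
    (hfpos : ∀ᶠ z in atTop, 0 < f z) :
    ∃ c₀ : ENNReal,
      Tendsto (fun z : ℝ => ENNReal.ofReal (f z * Real.exp (-∫ y in (0:ℝ)..z, Λ y)))
        atTop (nhds c₀) ∧
      (xs ≠ ⊤ → c₀ ≠ ⊤) ∧ (xs = ⊤ → 0 < c₀) := by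
  have hf_cont : Continuous f := by
    have hfe : f = fun z => f 0 + ∫ y in (0:ℝ)..z, f' y := by
      funext z
      have := hFTC 0 z
      linarith
    rw [hfe]
    exact continuous_const.add (intervalIntegral.continuous_primitive hf'int 0)
  obtain ⟨z₀, hz₀⟩ := eventually_atTop.1 hfpos
  by_cases hxs : xs = ⊤
  · -- `xs = ⊤` : the function is nondecreasing on `[z₀, ∞)`
    have haeD : ∀ᵐ z ∂(volume : Measure ℝ), z₀ < z → Λ z * f z ≤ f' z := by
      filter_upwards [hneg] with z hz _
      have h := hz (by rw [hxs]; exact le_top)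
      have hΛ := hΛpos z
      have h2 : f z ≤ f' z / Λ z := by linarith
      have h3 := (le_div_iff₀ hΛ).1 h2
      linarith
    have hfpos' : ∀ z, z₀ ≤ z → 0 < f z := fun z hz => hz₀ z hz
    have hM : ∀ p q : ℝ, z₀ ≤ p → p ≤ q →
        f p * Real.exp (-∫ y in (0:ℝ)..p, Λ y) ≤ f q * Real.exp (-∫ y in (0:ℝ)..q, Λ y) :=
      fun p q hp hpq => gron_down hΛpos hΛloc hf'int hFTC hf_cont hfpos' haeD hp hpq
    have hGmono : Monotone fun z : ℝ =>
        f (max z z₀) * Real.exp (-∫ y in (0:ℝ)..(max z z₀), Λ y) := by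
      intro p q hpq
      exact hM _ _ (le_max_right _ _) (max_le_max hpq le_rfl)
    have hcongr : (fun z : ℝ => f (max z z₀) * Real.exp (-∫ y in (0:ℝ)..(max z z₀), Λ y))
        =ᶠ[atTop] fun z : ℝ => f z * Real.exp (-∫ y in (0:ℝ)..z, Λ y) := by
      filter_upwards [eventually_ge_atTop z₀] with z hz
      rw [max_eq_left hz]
    by_cases hbdd : BddAbove (Set.range fun z : ℝ =>
        f (max z z₀) * Real.exp (-∫ y in (0:ℝ)..(max z z₀), Λ y))
    · have hT := tendsto_atTop_ciSup hGmono hbdd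
      have hTg : Tendsto (fun z : ℝ => f z * Real.exp (-∫ y in (0:ℝ)..z, Λ y)) atTop
          (𝓝 (⨆ z : ℝ, f (max z z₀) * Real.exp (-∫ y in (0:ℝ)..(max z z₀), Λ y))) :=
        hT.congr' hcongr
      refine ⟨_, ENNReal.tendsto_ofReal hTg, fun h => absurd hxs h, fun _ => ?_⟩
      refine ENNReal.ofReal_pos.2 ?_
      have hle : f (max z₀ z₀) * Real.exp (-∫ y in (0:ℝ)..(max z₀ z₀), Λ y) ≤
          ⨆ z : ℝ, f (max z z₀) * Real.exp (-∫ y in (0:ℝ)..(max z z₀), Λ y) := le_ciSup hbdd z₀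
      have h0 : 0 < f (max z₀ z₀) * Real.exp (-∫ y in (0:ℝ)..(max z₀ z₀), Λ y) :=
        mul_pos (hfpos' _ (le_max_left _ _)) (Real.exp_pos _)
      linarith
    · have hT := tendsto_atTop_atTop_of_monotone' hGmono hbdd
      have hTg : Tendsto (fun z : ℝ => f z * Real.exp (-∫ y in (0:ℝ)..z, Λ y)) atTop atTop :=
        hT.congr' hcongr
      exact ⟨⊤, ENNReal.tendsto_ofReal_atTop.comp hTg, fun h => absurd hxs h,
        fun _ => by simp⟩
  · -- `xs ≠ ⊤` : the function is nonincreasing on `[max x₁ z₀, ∞)`, bounded below by `0`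
    obtain ⟨x₁, hx₁, -⟩ := EReal.exists_between_coe_real (lt_top_iff_ne_top.2 hxs)
    have hfpos' : ∀ z, max x₁ z₀ ≤ z → 0 < f z := fun z hz =>
      hz₀ z (le_trans (le_max_right _ _) hz)
    have haeU : ∀ᵐ z ∂(volume : Measure ℝ), max x₁ z₀ < z → f' z ≤ Λ z * f z := by
      filter_upwards [hpos] with z hz hzx
      have hx1z : x₁ < z := lt_of_le_of_lt (le_max_left _ _) hzx
      have h := hz (lt_trans hx₁ (by exact_mod_cast hx1z))
      have hΛ := hΛpos z
      have h2 : f' z / Λ z < f z := by linarith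
      have h3 := (div_lt_iff₀ hΛ).1 h2
      linarith
    have hM : ∀ p q : ℝ, max x₁ z₀ ≤ p → p ≤ q →
        f q * Real.exp (-∫ y in (0:ℝ)..q, Λ y) ≤ f p * Real.exp (-∫ y in (0:ℝ)..p, Λ y) :=
      fun p q hp hpq => gron_up hΛpos hΛloc hf'int hFTC hf_cont hfpos' haeU hp hpq
    have hGanti : Antitone fun z : ℝ =>
        f (max z (max x₁ z₀)) * Real.exp (-∫ y in (0:ℝ)..(max z (max x₁ z₀)), Λ y) := by
      intro p q hpq
      exact hM _ _ (le_max_right _ _) (max_le_max hpq le_rfl)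
    have hbdd : BddBelow (Set.range fun z : ℝ =>
        f (max z (max x₁ z₀)) * Real.exp (-∫ y in (0:ℝ)..(max z (max x₁ z₀)), Λ y)) := by
      refine ⟨0, ?_⟩
      rintro w ⟨z, rfl⟩
      exact (mul_pos (hfpos' _ (le_max_right _ _)) (Real.exp_pos _)).le
    have hT := tendsto_atTop_ciInf hGanti hbdd
    have hcongr : (fun z : ℝ =>
        f (max z (max x₁ z₀)) * Real.exp (-∫ y in (0:ℝ)..(max z (max x₁ z₀)), Λ y))
        =ᶠ[atTop] fun z : ℝ => f z * Real.exp (-∫ y in (0:ℝ)..z, Λ y) := by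
      filter_upwards [eventually_ge_atTop (max x₁ z₀)] with z hz
      rw [max_eq_left hz]
    have hTg : Tendsto (fun z : ℝ => f z * Real.exp (-∫ y in (0:ℝ)..z, Λ y)) atTop
        (𝓝 (⨅ z : ℝ,
          f (max z (max x₁ z₀)) * Real.exp (-∫ y in (0:ℝ)..(max z (max x₁ z₀)), Λ y))) :=
      hT.congr' hcongr
    exact ⟨_, ENNReal.tendsto_ofReal hTg, fun _ => ENNReal.ofReal_ne_top,
      fun h => absurd h hxs⟩
end

section
/- Let Λ : ℝ → ℝ be measurable with Λ(y) > 0 for every y, locally integrable, and with ∫_x^∞ Λ(y) dy = ∞ for every x. Let h : ℝ → ℝ be nondecreasing and suppose there is x* ∈ [−∞, ∞) such that h(x) > 0 if and only if x > x*. Assume that for every x ∈ ℝ, ∫_x^∞ |h(z)|·Λ(z)·exp(−∫_x^z Λ(y) dy) dz < ∞, and define f(x) := ∫_x^∞ h(z)·Λ(z)·exp(−∫_x^z Λ(y) dy) dz. Then: (i) f(x) > 0 for every x > x*; and (ii) f is locally absolutely continuous with f'(x) = Λ(x)·(f(x) − h(x)) for almost every x ∈ ℝ. -/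
open MeasureTheory

noncomputable section

namespace RepAux

open Set
open scoped NNReal ENNReal

/-- Primitive of a function from 0. -/
def P (Λ : ℝ → ℝ) (x : ℝ) : ℝ := ∫ y in (0:ℝ)..x, Λ y

variable {Λ : ℝ → ℝ}

lemma P_cont (hloc : ∀ a b : ℝ, IntervalIntegrable Λ volume a b) : Continuous (P Λ) :=
  intervalIntegral.continuous_primitive hloc 0

lemma P_sub (hloc : ∀ a b : ℝ, IntervalIntegrable Λ volume a b) (x z : ℝ) :
    ∫ y in x..z, Λ y = P Λ z - P Λ x :=
  eq_sub_of_add_eq' (intervalIntegral.integral_add_adjacent_intervals (hloc 0 x) (hloc x z))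

lemma P_strictMono (hpos : ∀ y, 0 < Λ y)
    (hloc : ∀ a b : ℝ, IntervalIntegrable Λ volume a b) : StrictMono (P Λ) := by
  intro u v huv
  have h0 : 0 < ∫ y in u..v, Λ y :=
    intervalIntegral.intervalIntegral_pos_of_pos (hloc u v) hpos huv
  rw [P_sub hloc u v] at h0
  linarith

lemma wd_Ioc (hpos : ∀ y, 0 < Λ y) (hloc : ∀ a b : ℝ, IntervalIntegrable Λ volume a b)
    {s t : ℝ} (hst : s ≤ t) :
    (volume.withDensity (fun y => ENNReal.ofReal (Λ y))) (Ioc s t)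
      = ENNReal.ofReal (P Λ t - P Λ s) := by
  rw [withDensity_apply _ measurableSet_Ioc]
  have hInt : IntegrableOn Λ (Ioc s t) := by
    rw [← Set.uIoc_of_le hst]; exact intervalIntegrable_iff.mp (hloc s t)
  rw [← ofReal_integral_eq_lintegral_ofReal hInt (ae_of_all _ fun y => (hpos y).le)]
  rw [← intervalIntegral.integral_of_le hst, P_sub hloc s t]

lemma map_P (hmeas : Measurable Λ) (hpos : ∀ y, 0 < Λ y)
    (hloc : ∀ a b : ℝ, IntervalIntegrable Λ volume a b) {c d : ℝ} (hcd : c ≤ d) :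
    Measure.map (P Λ) ((volume.withDensity (fun y => ENNReal.ofReal (Λ y))).restrict
        (Ioc c d)) = volume.restrict (Ioc (P Λ c) (P Λ d)) := by
  have hPc : Continuous (P Λ) := P_cont hloc
  have hPm : StrictMono (P Λ) := P_strictMono hpos hloc
  set L := P Λ with hL
  set wd := volume.withDensity (fun y => ENNReal.ofReal (Λ y)) with hwd
  have happ : ∀ p q : ℝ, (Measure.map L (wd.restrict (Ioc c d))) (Ioc p q)
      = wd (L ⁻¹' Ioc p q ∩ Ioc c d) := by
    intro p q
    rw [Measure.map_apply hPc.measurable measurableSet_Ioc,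
      Measure.restrict_apply (hPc.measurable measurableSet_Ioc)]
  refine Measure.ext_of_Ioc' _ _ (fun p q hpq => ?_) (fun p q hpq => ?_)
  · rw [happ]
    refine ne_top_of_le_ne_top (by simp : ENNReal.ofReal (L d - L c) ≠ ⊤) ?_
    rw [← wd_Ioc hpos hloc hcd]
    exact measure_mono inter_subset_right
  · rw [happ, Measure.restrict_apply measurableSet_Ioc, Ioc_inter_Ioc, Real.volume_Ioc]
    rcases lt_or_ge q (L c) with hq | hq
    · have hempty : L ⁻¹' Ioc p q ∩ Ioc c d = ∅ := by
        ext y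
        simp only [mem_inter_iff, mem_preimage, mem_Ioc, mem_empty_iff_false, iff_false]
        rintro ⟨⟨_, hyq⟩, hcy, _⟩
        exact absurd (hPm hcy) (by linarith)
      rw [hempty, measure_empty, eq_comm, ENNReal.ofReal_eq_zero]
      have h1 : min q (L d) ≤ q := min_le_left _ _
      have h2 : L c ≤ max p (L c) := le_max_right _ _
      linarith
    rcases le_or_gt (L d) p with hp | hp
    · have hempty : L ⁻¹' Ioc p q ∩ Ioc c d = ∅ := by
        ext y
        simp only [mem_inter_iff, mem_preimage, mem_Ioc, mem_empty_iff_false, iff_false]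
        rintro ⟨⟨hpy, _⟩, _, hyd⟩
        exact absurd (hPm.monotone hyd) (by linarith)
      rw [hempty, measure_empty, eq_comm, ENNReal.ofReal_eq_zero]
      have h1 : min q (L d) ≤ L d := min_le_right _ _
      have h2 : p ≤ max p (L c) := le_max_left _ _
      linarith
    · have hLcd : L c ≤ L d := hPm.monotone hcd
      have hu : max p (L c) ∈ Icc (L c) (L d) := ⟨le_max_right _ _, max_le hp.le hLcd⟩
      have hv : min q (L d) ∈ Icc (L c) (L d) := ⟨le_min hq hLcd, min_le_right _ _⟩
      obtain ⟨c', hc'1, hc'2⟩ := intermediate_value_Icc hcd hPc.continuousOn hu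
      obtain ⟨d', hd'1, hd'2⟩ := intermediate_value_Icc hcd hPc.continuousOn hv
      have hset : L ⁻¹' Ioc p q ∩ Ioc c d = Ioc c' d' := by
        ext y
        simp only [mem_inter_iff, mem_preimage, mem_Ioc]
        constructor
        · rintro ⟨⟨hpy, hyq⟩, hcy, hyd⟩
          constructor
          · exact hPm.lt_iff_lt.mp (by rw [hc'2]; exact max_lt hpy (hPm hcy))
          · exact hPm.le_iff_le.mp (by rw [hd'2]; exact le_min hyq (hPm.monotone hyd))
        · rintro ⟨hc'y, hyd'⟩
          have h1' : max p (L c) < L y := hc'2 ▸ hPm hc'y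
          have h2' : L y ≤ min q (L d) := hd'2 ▸ hPm.monotone hyd'
          refine ⟨⟨lt_of_le_of_lt (le_max_left _ _) h1', h2'.trans (min_le_left _ _)⟩, ?_, ?_⟩
          · exact hPm.lt_iff_lt.mp (lt_of_le_of_lt (le_max_right _ _) h1')
          · exact hPm.le_iff_le.mp (h2'.trans (min_le_right _ _))
      have hc'd' : c' ≤ d' := by
        refine hPm.le_iff_le.mp ?_
        rw [hc'2, hd'2]
        exact max_le (le_min hpq.le hp.le) (le_min hq hLcd)
      rw [hset, hwd, wd_Ioc hpos hloc hc'd']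
      show ENNReal.ofReal (L d' - L c') = _
      rw [hc'2, hd'2]


lemma integral_exp_P (hmeas : Measurable Λ) (hpos : ∀ y, 0 < Λ y)
    (hloc : ∀ a b : ℝ, IntervalIntegrable Λ volume a b) {c d : ℝ} (hcd : c ≤ d) :
    ∫ y in Ioc c d, Λ y * Real.exp (P Λ y)
      = Real.exp (P Λ d) - Real.exp (P Λ c) := by
  have hPc : Continuous (P Λ) := P_cont hloc
  have A : ∫ t, Real.exp t ∂(Measure.map (P Λ)
      ((volume.withDensity (fun y => ENNReal.ofReal (Λ y))).restrict (Ioc c d)))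
      = ∫ y, Real.exp (P Λ y)
          ∂((volume.withDensity (fun y => ENNReal.ofReal (Λ y))).restrict (Ioc c d)) :=
    integral_map hPc.measurable.aemeasurable Real.continuous_exp.aestronglyMeasurable
  rw [map_P hmeas hpos hloc hcd] at A
  have B : ((volume.withDensity (fun y => ENNReal.ofReal (Λ y))).restrict (Ioc c d))
      = (volume.restrict (Ioc c d)).withDensity (fun y => ENNReal.ofReal (Λ y)) :=
    restrict_withDensity measurableSet_Ioc _
  rw [B] at A
  have C : ∫ y, Real.exp (P Λ y)
      ∂((volume.restrict (Ioc c d)).withDensity (fun y => ENNReal.ofReal (Λ y)))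
      = ∫ y in Ioc c d, Λ y * Real.exp (P Λ y) := by
    have hmeq : (fun y => ENNReal.ofReal (Λ y))
        = fun y => (((Λ y).toNNReal :ℝ≥0) : ℝ≥0∞) := rfl
    rw [hmeq, integral_withDensity_eq_integral_smul
      hmeas.real_toNNReal (fun y => Real.exp (P Λ y))]
    refine setIntegral_congr_fun measurableSet_Ioc (fun y _ => ?_)
    simp only [NNReal.smul_def, smul_eq_mul, Real.coe_toNNReal _ (hpos y).le]
  rw [C] at A
  rw [← A, ← intervalIntegral.integral_of_le ((P_strictMono hpos hloc).monotone hcd)]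
  exact integral_exp

lemma integrableOn_mul_bdd {Λ ρ : ℝ → ℝ} {a b : ℝ} (hΛ : IntegrableOn Λ (Ioc a b))
    (hρm : AEStronglyMeasurable ρ (volume.restrict (Ioc a b))) {C : ℝ}
    (hC : ∀ y ∈ Ioc a b, |ρ y| ≤ C) :
    IntegrableOn (fun y => Λ y * ρ y) (Ioc a b) := by
  refine Integrable.mono' (hΛ.abs.mul_const C) (hΛ.aestronglyMeasurable.mul hρm) ?_
  filter_upwards [ae_restrict_mem measurableSet_Ioc] with y hy
  rw [Real.norm_eq_abs, abs_mul]
  exact mul_le_mul_of_nonneg_left (hC y hy) (abs_nonneg _)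

lemma swap_lemma {ψ g : ℝ → ℝ} (hψm : Measurable ψ) (hgm : Measurable g) {a b : ℝ}
    (hψ : IntegrableOn ψ (Ioc a b)) (hg : IntegrableOn g (Ioc a b)) :
    ∫ y in Ioc a b, ψ y * ∫ z in Ioc y b, g z
      = ∫ z in Ioc a b, (∫ y in Ioo a z, ψ y) * g z := by
  set μ := volume.restrict (Ioc a b) with hμ
  set F : ℝ → ℝ → ℝ := fun y z => if y < z then ψ y * g z else 0 with hF
  have hFmeas : Measurable (Function.uncurry F) := by
    refine Measurable.ite (measurableSet_lt measurable_fst measurable_snd) ?_ measurable_const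
    exact (hψm.comp measurable_fst).mul (hgm.comp measurable_snd)
  have hFint : Integrable (Function.uncurry F) (μ.prod μ) := by
    refine Integrable.mono' (hψ.norm.mul_prod hg.norm) hFmeas.aestronglyMeasurable ?_
    refine ae_of_all _ (fun p => ?_)
    rcases lt_or_ge p.1 p.2 with hlt | hle
    · simp only [Function.uncurry, hF, if_pos hlt, Real.norm_eq_abs, abs_mul]
      exact le_rfl
    · simp only [Function.uncurry, hF, if_neg (not_lt.mpr hle), norm_zero]
      positivity
  have step1 : ∀ y ∈ Ioc a b, (∫ z, F y z ∂μ) = ψ y * ∫ z in Ioc y b, g z := by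
    intro y hy
    have hind : ∀ z, F y z = (Ioi y).indicator (fun z => ψ y * g z) z := by
      intro z
      by_cases hz : y < z
      · rw [hF]; simp [hz, indicator_of_mem (mem_Ioi.mpr hz)]
      · rw [hF]; simp [hz, indicator_of_notMem (fun hmem => hz (mem_Ioi.mp hmem))]
    simp only [hind]
    rw [hμ, integral_indicator measurableSet_Ioi, Measure.restrict_restrict measurableSet_Ioi]
    have hIoc : Ioi y ∩ Ioc a b = Ioc y b := by
      ext z
      simp only [mem_inter_iff, mem_Ioi, mem_Ioc]
      exact ⟨fun ⟨h1, _, h3⟩ => ⟨h1, h3⟩, fun ⟨h1, h2⟩ => ⟨h1, hy.1.trans h1, h2⟩⟩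
    rw [hIoc, integral_const_mul]
  have step2 : ∀ z ∈ Ioc a b, (∫ y, F y z ∂μ) = (∫ y in Ioo a z, ψ y) * g z := by
    intro z hz
    have hind : ∀ y, F y z = (Iio z).indicator (fun y => ψ y * g z) y := by
      intro y
      by_cases hy : y < z
      · rw [hF]; simp [hy, indicator_of_mem (mem_Iio.mpr hy)]
      · rw [hF]; simp [hy, indicator_of_notMem (fun hmem => hy (mem_Iio.mp hmem))]
    simp only [hind]
    rw [hμ, integral_indicator measurableSet_Iio, Measure.restrict_restrict measurableSet_Iio]
    have hIoo : Iio z ∩ Ioc a b = Ioo a z := by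
      ext y
      simp only [mem_inter_iff, mem_Iio, mem_Ioc, mem_Ioo]
      exact ⟨fun ⟨h1, h2, _⟩ => ⟨h2, h1⟩, fun ⟨h1, h2⟩ => ⟨h2, h1, (h2.le.trans hz.2)⟩⟩
    rw [hIoo, integral_mul_const]
  calc ∫ y in Ioc a b, ψ y * ∫ z in Ioc y b, g z
      = ∫ y, (∫ z, F y z ∂μ) ∂μ :=
        (setIntegral_congr_fun measurableSet_Ioc (fun y hy => (step1 y hy).symm))
    _ = ∫ z, (∫ y, F y z ∂μ) ∂μ := integral_integral_swap hFint
    _ = ∫ z in Ioc a b, (∫ y in Ioo a z, ψ y) * g z :=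
        setIntegral_congr_fun measurableSet_Ioc step2

end RepAux

end

/-- If `h` is nondecreasing with threshold `x* ∈ [-∞, ∞)` (i.e. `h x > 0 ↔ x > x*`), `Λ` is a
positive, locally integrable hazard rate with `∫_x^∞ Λ = ∞`, and
`f x = ∫_x^∞ h z * Λ z * exp (-∫_x^z Λ) dz` (absolutely convergent), then `f x > 0` for
`x > x*`, and `f` is locally absolutely continuous with `f' x = Λ x * (f x - h x)` a.e. -/
theorem representation_properties (Λ h : ℝ → ℝ) (xs : EReal)
    (hΛmeas : Measurable Λ) (hΛpos : ∀ y, 0 < Λ y)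
    (hΛloc : ∀ a b : ℝ, IntervalIntegrable Λ volume a b)
    (hΛinf : ∀ x : ℝ, (∫⁻ y in Set.Ioi x, ENNReal.ofReal (Λ y)) = ⊤)
    (hmono : Monotone h) (hxs : xs ≠ ⊤)
    (hthr : ∀ x : ℝ, 0 < h x ↔ xs < (x : EReal))
    (hint : ∀ x : ℝ, IntegrableOn
      (fun z => |h z| * Λ z * Real.exp (-∫ y in x..z, Λ y)) (Set.Ioi x))
    (f : ℝ → ℝ)
    (hf : ∀ x : ℝ, f x = ∫ z in Set.Ioi x, h z * Λ z * Real.exp (-∫ y in x..z, Λ y)) :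
    (∀ x : ℝ, xs < (x : EReal) → 0 < f x) ∧
    ∃ f' : ℝ → ℝ, (∀ a b : ℝ, IntervalIntegrable f' volume a b) ∧
      (∀ a b : ℝ, f b - f a = ∫ y in a..b, f' y) ∧
      (∀ᵐ (x : ℝ) ∂(volume : Measure ℝ), f' x = Λ x * (f x - h x)) := by
  classical
  set L : ℝ → ℝ := RepAux.P Λ with hL
  have hPcont : Continuous L := RepAux.P_cont hΛloc
  have hLsub : ∀ x z : ℝ, ∫ y in x..z, Λ y = L z - L x := RepAux.P_sub hΛloc
  have hhm : Measurable h := hmono.measurable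
  set g : ℝ → ℝ := fun z => h z * Λ z * Real.exp (-L z) with hgdef
  have hgmeas : Measurable g :=
    (hhm.mul hΛmeas).mul ((Real.continuous_exp.comp hPcont.neg).measurable)
  have habs : ∀ z, |g z| = |h z| * Λ z * Real.exp (-L z) := fun z => by
    rw [hgdef, abs_mul, abs_mul, abs_of_pos (hΛpos z), abs_of_pos (Real.exp_pos _)]
  have hgInt : ∀ x : ℝ, IntegrableOn g (Set.Ioi x) := by
    intro x
    refine Integrable.mono' ((hint x).const_mul (Real.exp (-L x)))
      hgmeas.aestronglyMeasurable (ae_of_all _ fun z => ?_)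
    have e1 : Real.exp (-L x) * Real.exp (-(L z - L x)) = Real.exp (-L z) := by
      rw [← Real.exp_add]; ring_nf
    calc ‖g z‖ = |h z| * Λ z * Real.exp (-L z) := by rw [Real.norm_eq_abs, habs z]
      _ = Real.exp (-L x) * (|h z| * Λ z * Real.exp (-(L z - L x))) := by rw [← e1]; ring
      _ = Real.exp (-L x) * (|h z| * Λ z * Real.exp (-∫ y in x..z, Λ y)) := by rw [hLsub x z]
      _ ≤ Real.exp (-L x) * (|h z| * Λ z * Real.exp (-∫ y in x..z, Λ y)) := le_rfl
  have hgloc : ∀ u v : ℝ, IntervalIntegrable g volume u v := by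
    intro u v
    rw [intervalIntegrable_iff]
    refine (hgInt (min u v - 1)).mono_set (fun z hz => ?_)
    have h1 : min u v < z := hz.1
    exact Set.mem_Ioi.mpr (by linarith)
  set Pg : ℝ → ℝ := RepAux.P g with hPg
  have hPgsub : ∀ x z : ℝ, ∫ y in x..z, g y = Pg z - Pg x := RepAux.P_sub hgloc
  have hPgcont : Continuous Pg := RepAux.P_cont hgloc
  have hIocg : ∀ u v : ℝ, u ≤ v → ∫ z in Set.Ioc u v, g z = Pg v - Pg u := by
    intro u v huv; rw [← intervalIntegral.integral_of_le huv, hPgsub u v]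
  have hsplit : ∀ u v : ℝ, u ≤ v →
      (∫ z in Set.Ioi u, g z) = (Pg v - Pg u) + ∫ z in Set.Ioi v, g z := by
    intro u v huv
    rw [← Set.Ioc_union_Ioi_eq_Ioi huv,
      setIntegral_union (Set.Ioc_disjoint_Ioi le_rfl) measurableSet_Ioi
        ((hgInt u).mono_set Set.Ioc_subset_Ioi_self) (hgInt v), hIocg u v huv]
  set CC : ℝ := (∫ z in Set.Ioi (0:ℝ), g z) + Pg 0 with hCC
  have hG : ∀ x : ℝ, (∫ z in Set.Ioi x, g z) = CC - Pg x := by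
    intro x
    rcases le_total x 0 with hx | hx
    · have := hsplit x 0 hx; rw [hCC]; linarith
    · have := hsplit 0 x hx; rw [hCC]; linarith
  have hfx : ∀ x : ℝ, f x = Real.exp (L x) * (CC - Pg x) := by
    intro x
    rw [hf x, ← hG x, ← integral_const_mul]
    refine setIntegral_congr_fun measurableSet_Ioi (fun z hz => ?_)
    rw [hLsub x z]
    have e1 : Real.exp (-(L z - L x)) = Real.exp (L x) * Real.exp (-L z) := by
      rw [← Real.exp_add]; ring_nf
    rw [e1, hgdef]; ring
  have hfcont : Continuous f := by
    have hfeq : f = fun x => Real.exp (L x) * (CC - Pg x) := funext hfx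
    rw [hfeq]
    exact (Real.continuous_exp.comp hPcont).mul (continuous_const.sub hPgcont)
  constructor
  · -- positivity
    intro x hx
    set φ : ℝ → ℝ := fun z => h z * Λ z * Real.exp (-∫ y in x..z, Λ y) with hφ
    have hφmeas : Measurable φ :=
      (hhm.mul hΛmeas).mul
        (Real.continuous_exp.measurable.comp
          (intervalIntegral.continuous_primitive hΛloc x).neg.measurable)
    have hφint : IntegrableOn φ (Set.Ioi x) := by
      refine Integrable.mono' (hint x) hφmeas.aestronglyMeasurable (ae_of_all _ fun z => ?_)
      rw [Real.norm_eq_abs, hφ]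
      rw [abs_mul, abs_mul, abs_of_pos (hΛpos z), abs_of_pos (Real.exp_pos _)]
    have hφpos : ∀ z ∈ Set.Ioi x, 0 < φ z := by
      intro z hz
      have hxz : (x : EReal) < (z : EReal) := by exact_mod_cast hz
      have hhz : 0 < h z := (hthr z).mpr (lt_trans hx hxz)
      exact mul_pos (mul_pos hhz (hΛpos z)) (Real.exp_pos _)
    have h1 : 0 < ∫ z in x..(x+1), φ z := by
      refine intervalIntegral.intervalIntegral_pos_of_pos_on ?_ (fun z hz => hφpos z hz.1)
        (by linarith)
      rw [intervalIntegrable_iff]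
      refine hφint.mono_set ?_
      rw [Set.uIoc_of_le (by linarith : x ≤ x + 1)]
      exact Set.Ioc_subset_Ioi_self
    rw [intervalIntegral.integral_of_le (by linarith : x ≤ x + 1)] at h1
    have h2 : (∫ z in Set.Ioc x (x+1), φ z) ≤ ∫ z in Set.Ioi x, φ z := by
      refine setIntegral_mono_set hφint ?_ (HasSubset.Subset.eventuallyLE Set.Ioc_subset_Ioi_self)
      filter_upwards [ae_restrict_mem measurableSet_Ioi] with z hz
      exact (hφpos z hz).le
    rw [hf x]
    exact lt_of_lt_of_le h1 h2
  · -- the derivative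
    refine ⟨fun x => Λ x * (f x - h x), ?_, ?_, ae_of_all _ fun x => rfl⟩
    · -- interval integrability
      intro a b
      rw [intervalIntegrable_iff]
      have hΛIoc : IntegrableOn Λ (Set.Ioc (min a b) (max a b)) := by
        rw [← Set.uIoc_of_le (min_le_max)]
        exact intervalIntegrable_iff.mp (hΛloc (min a b) (max a b))
      show IntegrableOn _ (Set.Ioc (min a b) (max a b)) volume
      obtain ⟨C1, hC1⟩ :=
        (isCompact_Icc (a := min a b) (b := max a b)).exists_bound_of_continuousOn
          hfcont.continuousOn
      refine RepAux.integrableOn_mul_bdd hΛIoc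
        ((hfcont.measurable.sub hhm).aestronglyMeasurable)
        (C := C1 + max |h (min a b)| |h (max a b)|) (fun y hy => ?_)
      have h3 : |h y| ≤ max |h (min a b)| |h (max a b)| :=
        abs_le_max_abs_abs (hmono hy.1.le) (hmono hy.2)
      have h4 : |f y| ≤ C1 := by
        have := hC1 y (Set.Ioc_subset_Icc_self hy)
        rwa [Real.norm_eq_abs] at this
      calc |f y - h y| ≤ |f y| + |h y| := abs_sub _ _
        _ ≤ C1 + max |h (min a b)| |h (max a b)| := add_le_add h4 h3
    · -- FTC
      have key : ∀ a b : ℝ, a ≤ b →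
          (∫ y in Set.Ioc a b, Λ y * (f y - h y)) = f b - f a := by
        intro a b hab
        have hΛIoc : IntegrableOn Λ (Set.Ioc a b) := by
          rw [← Set.uIoc_of_le hab]
          exact intervalIntegrable_iff.mp (hΛloc a b)
        have hgIoc : IntegrableOn g (Set.Ioc a b) :=
          (hgInt (a - 1)).mono_set (fun z hz => Set.mem_Ioi.mpr (by have := hz.1; linarith))
        have hcancel : ∀ z, Real.exp (L z) * g z = Λ z * h z := by
          intro z
          show Real.exp (L z) * (h z * Λ z * Real.exp (-L z)) = Λ z * h z
          rw [Real.exp_neg]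
          field_simp
        have Kz : ∀ z : ℝ, a ≤ z →
            ∫ y in Set.Ioc a z, Λ y * Real.exp (L y) = Real.exp (L z) - Real.exp (L a) := by
          intro z hz
          have := RepAux.integral_exp_P hΛmeas hΛpos hΛloc hz
          rw [← hL] at this
          exact this
        obtain ⟨C1, hC1⟩ := (isCompact_Icc (a := a) (b := b)).exists_bound_of_continuousOn
          ((Real.continuous_exp.comp hPcont).continuousOn)
        have hexpInt : IntegrableOn (fun y => Λ y * Real.exp (L y)) (Set.Ioc a b) := by
          refine RepAux.integrableOn_mul_bdd hΛIoc
            (Real.continuous_exp.comp hPcont).measurable.aestronglyMeasurable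
            (C := C1) (fun y hy => ?_)
          have := hC1 y (Set.Ioc_subset_Icc_self hy)
          rwa [Real.norm_eq_abs] at this
        obtain ⟨C2, hC2⟩ := (isCompact_Icc (a := a) (b := b)).exists_bound_of_continuousOn
          (((Real.continuous_exp.comp hPcont).mul
            (continuous_const.sub hPgcont)).continuousOn (s := Set.Icc a b))
        have hI1 : IntegrableOn (fun y => Λ y * (Real.exp (L y) * (Pg b - Pg y)))
            (Set.Ioc a b) := by
          refine RepAux.integrableOn_mul_bdd hΛIoc
            (((Real.continuous_exp.comp hPcont).mul
              (continuous_const.sub hPgcont)).measurable.aestronglyMeasurable)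
            (C := C2) (fun y hy => ?_)
          have := hC2 y (Set.Ioc_subset_Icc_self hy)
          rwa [Real.norm_eq_abs] at this
        have hI3 : IntegrableOn (fun y => Λ y * h y) (Set.Ioc a b) := by
          refine RepAux.integrableOn_mul_bdd hΛIoc hhm.aestronglyMeasurable
            (C := max |h a| |h b|) (fun y hy => ?_)
          exact abs_le_max_abs_abs (hmono hy.1.le) (hmono hy.2)
        have step0 : ∫ y in Set.Ioc a b, Λ y * (f y - h y)
            = ∫ y in Set.Ioc a b, (Λ y * (Real.exp (L y) * (Pg b - Pg y))
                + (CC - Pg b) * (Λ y * Real.exp (L y)) - Λ y * h y) :=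
          setIntegral_congr_fun measurableSet_Ioc (fun y _ => by rw [hfx y]; ring)
        have e2 : ∫ y in Set.Ioc a b, Λ y * (Real.exp (L y) * (Pg b - Pg y))
            = ∫ y in Set.Ioc a b, (Λ y * Real.exp (L y)) * ∫ z in Set.Ioc y b, g z :=
          setIntegral_congr_fun measurableSet_Ioc (fun y hy => by rw [hIocg y b hy.2]; ring)
        have hswap := RepAux.swap_lemma (ψ := fun y => Λ y * Real.exp (L y)) (g := g)
          (hΛmeas.mul (Real.continuous_exp.comp hPcont).measurable) hgmeas hexpInt hgIoc
        have e3 : ∫ z in Set.Ioc a b, (∫ y in Set.Ioo a z, Λ y * Real.exp (L y)) * g z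
            = ∫ z in Set.Ioc a b, (Real.exp (L z) * g z - Real.exp (L a) * g z) := by
          refine setIntegral_congr_fun measurableSet_Ioc (fun z hz => ?_)
          rw [← integral_Ioc_eq_integral_Ioo, Kz z hz.1.le]
          ring
        have i1 : IntegrableOn (fun z => Real.exp (L z) * g z) (Set.Ioc a b) :=
          hI3.congr (ae_of_all _ fun z => (hcancel z).symm)
        have e4 : ∫ z in Set.Ioc a b, (Real.exp (L z) * g z - Real.exp (L a) * g z)
            = (∫ z in Set.Ioc a b, Λ z * h z) - Real.exp (L a) * (Pg b - Pg a) := by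
          rw [integral_sub i1 (hgIoc.const_mul _), integral_const_mul, hIocg a b hab]
          congr 1
          exact setIntegral_congr_fun measurableSet_Ioc (fun z _ => hcancel z)
        have hI2 : IntegrableOn (fun y => (CC - Pg b) * (Λ y * Real.exp (L y)))
            (Set.Ioc a b) := hexpInt.const_mul _
        have hI12 : IntegrableOn (fun y => Λ y * (Real.exp (L y) * (Pg b - Pg y))
            + (CC - Pg b) * (Λ y * Real.exp (L y))) (Set.Ioc a b) := hI1.add hI2
        rw [step0, integral_sub hI12 hI3, integral_add hI1 hI2, integral_const_mul,
          Kz b hab, e2, hswap, e3, e4, hfx a, hfx b]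
        ring
      intro a b
      rcases le_total a b with hab | hba
      · rw [intervalIntegral.integral_of_le hab, key a b hab]
      · rw [intervalIntegral.integral_symm, intervalIntegral.integral_of_le hba, key b a hba]
        ring
end

section
/- Under the stated assumptions on Λ and f, suppose in addition that c₀ := lim_{z→∞} f(z)·exp(−∫_0^z Λ(y) dy) is finite. Then for every x ∈ ℝ: (i) ∫_x^∞ |f(z) − f'(z)/Λ(z)|·Λ(z)·exp(−∫_x^z Λ(y) dy) dz < ∞; and (ii) ∫_x^∞ (f(z) − f'(z)/Λ(z))·Λ(z)·exp(−∫_x^z Λ(y) dy) dz = f(x) − c₀·exp(∫_0^x Λ(y) dy). -/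
open MeasureTheory Filter

namespace Rep22
open Set



lemma exp_neg_lip {s t : ℝ} (hs : 0 ≤ s) (ht : 0 ≤ t) :
    |Real.exp (-s) - Real.exp (-t)| ≤ |s - t| := by
  wlog h : t ≤ s generalizing s t
  · rw [abs_sub_comm, abs_sub_comm s t]
    exact this ht hs (le_of_not_ge h)
  have h1 : Real.exp (-t) ≤ Real.exp 0 := Real.exp_le_exp.mpr (by linarith)
  rw [Real.exp_zero] at h1
  have h2 : Real.exp (-s) ≤ Real.exp (-t) := Real.exp_le_exp.mpr (by linarith)
  have h3 : Real.exp (-s) = Real.exp (-t) * Real.exp (t - s) := by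
    rw [← Real.exp_add]; ring_nf
  have h4 := Real.add_one_le_exp (t - s)
  have h5 := Real.exp_pos (-t)
  rw [abs_of_nonpos (by linarith), abs_of_nonneg (by linarith)]
  nlinarith

lemma intOn_mul_cont {F G : ℝ → ℝ} {a b : ℝ} (hF : IntegrableOn F (Ioc a b))
    (hG : Continuous G) : IntegrableOn (fun z => F z * G z) (Ioc a b) :=
  (((integrableOn_Icc_iff_integrableOn_Ioc (f := F)).mpr hF).mul_continuousOn hG.continuousOn
    isCompact_Icc).mono_set Ioc_subset_Icc_self

lemma cont_intOn {G : ℝ → ℝ} {a b : ℝ} (hG : Continuous G) : IntegrableOn G (Ioc a b) :=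
  (hG.integrableOn_Icc).mono_set Ioc_subset_Icc_self

lemma approx_L1 {F : ℝ → ℝ} {a b ε : ℝ} (hF : IntegrableOn F (Ioc a b)) (hε : 0 < ε) :
    ∃ g : ℝ → ℝ, Continuous g ∧ (∫ z in Ioc a b, |F z - g z|) ≤ ε := by
  have hind : Integrable ((Ioc a b).indicator F) volume :=
    (integrable_indicator_iff measurableSet_Ioc).mpr hF
  obtain ⟨g, -, hle, hgc, hgint⟩ := hind.exists_hasCompactSupport_integral_sub_le hε
  refine ⟨g, hgc, le_trans (le_trans (b := ∫ z in Ioc a b, ‖(Ioc a b).indicator F z - g z‖) ?_ ?_) hle⟩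
  · refine setIntegral_mono_on ((hF.sub (cont_intOn hgc)).abs)
      ((hind.sub hgint).norm.integrableOn) measurableSet_Ioc ?_
    intro z hz
    rw [Real.norm_eq_abs, indicator_of_mem hz]
  · exact setIntegral_le_integral ((hind.sub hgint).norm)
      (Eventually.of_forall fun z => norm_nonneg _)

lemma approx_L1_nonneg {F : ℝ → ℝ} {a b ε : ℝ} (hF : IntegrableOn F (Ioc a b))
    (hF0 : ∀ z, 0 ≤ F z) (hε : 0 < ε) :
    ∃ g : ℝ → ℝ, Continuous g ∧ (∀ z, 0 ≤ g z) ∧ (∫ z in Ioc a b, |F z - g z|) ≤ ε := by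
  obtain ⟨g, hgc, hgle⟩ := approx_L1 hF hε
  have hgc' : Continuous fun z => max (g z) 0 := hgc.max continuous_const
  refine ⟨fun z => max (g z) 0, hgc', fun z => le_max_right _ _, le_trans ?_ hgle⟩
  refine setIntegral_mono_on ((hF.sub (cont_intOn hgc')).abs)
    ((hF.sub (cont_intOn hgc)).abs) measurableSet_Ioc ?_
  intro z _
  simp only []
  rcases le_total (g z) 0 with h | h
  · rw [max_eq_right h, sub_zero, abs_of_nonneg (hF0 z)]
    calc F z ≤ F z - g z := by linarith
      _ ≤ |F z - g z| := le_abs_self _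
  · rw [max_eq_left h]


lemma cont_ftc (g φ : ℝ → ℝ) (hg : Continuous g) (hφ : Continuous φ) (c0 a b : ℝ)
    (hab : a ≤ b) :
    ∫ z in Ioc a b, ((c0 + ∫ y in a..z, φ y) * g z - φ z) * Real.exp (-∫ y in a..z, g y)
      = c0 - (c0 + ∫ y in a..b, φ y) * Real.exp (-∫ y in a..b, g y) := by
  have hΦc : Continuous fun z => c0 + ∫ y in a..z, φ y :=
    continuous_const.add (intervalIntegral.continuous_primitive
      (fun a b => hφ.intervalIntegrable a b) a)
  have hGc : Continuous fun z => ∫ y in a..z, g y :=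
    intervalIntegral.continuous_primitive (fun a b => hg.intervalIntegrable a b) a
  have hderiv : ∀ z ∈ Set.uIcc a b,
      HasDerivAt (fun u => (c0 + ∫ y in a..u, φ y) * Real.exp (-∫ y in a..u, g y))
        ((φ z - (c0 + ∫ y in a..z, φ y) * g z) * Real.exp (-∫ y in a..z, g y)) z := by
    intro z _
    have h1 : HasDerivAt (fun u => c0 + ∫ y in a..u, φ y) (φ z) z :=
      HasDerivAt.const_add c0 (hφ.integral_hasStrictDerivAt a z).hasDerivAt
    have h2 : HasDerivAt (fun u => ∫ y in a..u, g y) (g z) z :=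
      (hg.integral_hasStrictDerivAt a z).hasDerivAt
    have h3 : HasDerivAt (fun u => Real.exp (-∫ y in a..u, g y))
        (Real.exp (-∫ y in a..z, g y) * -(g z)) z := h2.neg.exp
    have := h1.mul h3
    exact this.congr_deriv (by ring)
  have hint : IntervalIntegrable
      (fun z => (φ z - (c0 + ∫ y in a..z, φ y) * g z) * Real.exp (-∫ y in a..z, g y))
      volume a b :=
    ((hφ.sub (hΦc.mul hg)).mul (hGc.neg.rexp)).intervalIntegrable a b
  have hmain := intervalIntegral.integral_eq_sub_of_hasDerivAt hderiv hint
  rw [intervalIntegral.integral_of_le hab] at hmain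
  have hflip : ∫ z in Ioc a b,
      ((c0 + ∫ y in a..z, φ y) * g z - φ z) * Real.exp (-∫ y in a..z, g y)
      = -∫ z in Ioc a b,
        (φ z - (c0 + ∫ y in a..z, φ y) * g z) * Real.exp (-∫ y in a..z, g y) := by
    rw [← integral_neg]
    congr 1; funext z; ring
  rw [hflip, hmain]
  have ha0 : (∫ y in a..a, φ y) = 0 := intervalIntegral.integral_same
  have hg0 : (∫ y in a..a, g y) = 0 := intervalIntegral.integral_same
  rw [ha0, hg0, neg_zero, Real.exp_zero]
  ring

lemma primitive_dev {h₁ h₂ : ℝ → ℝ} {a b : ℝ}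
    (H1 : ∀ u v : ℝ, IntervalIntegrable h₁ volume u v)
    (h₂c : Continuous h₂) {z : ℝ} (hz : z ∈ Icc a b) :
    |(∫ y in a..z, h₁ y) - ∫ y in a..z, h₂ y| ≤ ∫ y in Ioc a b, |h₁ y - h₂ y| := by
  have hzi : a ≤ z := hz.1
  rw [← intervalIntegral.integral_sub (H1 a z) (h₂c.intervalIntegrable a z)]
  calc |∫ y in a..z, (h₁ y - h₂ y)| ≤ ∫ y in a..z, |h₁ y - h₂ y| :=
      intervalIntegral.abs_integral_le_integral_abs hzi
    _ = ∫ y in Ioc a z, |h₁ y - h₂ y| := intervalIntegral.integral_of_le hzi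
    _ ≤ ∫ y in Ioc a b, |h₁ y - h₂ y| :=
      setIntegral_mono_set (((H1 a b).1.sub (cont_intOn h₂c)).abs)
        (Eventually.of_forall fun y => abs_nonneg _)
        (HasSubset.Subset.eventuallyLE (Ioc_subset_Ioc_right hz.2))

lemma abs_sub_le_abs_add_abs (p q : ℝ) : |p - q| ≤ |p| + |q| := by
  rw [sub_eq_add_neg]
  exact le_trans (abs_add_le _ _) (by rw [abs_neg])

lemma key_identity (Λ f f' : ℝ → ℝ)
    (hΛpos : ∀ y, 0 < Λ y)
    (hΛloc : ∀ a b : ℝ, IntervalIntegrable Λ volume a b)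
    (hf'int : ∀ a b : ℝ, IntervalIntegrable f' volume a b)
    (hFTC : ∀ a b : ℝ, f b - f a = ∫ y in a..b, f' y)
    (a b : ℝ) (hab : a ≤ b) :
    ∫ z in Ioc a b, (f z * Λ z - f' z) * Real.exp (-∫ y in a..z, Λ y)
      = f a - f b * Real.exp (-∫ y in a..b, Λ y) := by
  have hfc : Continuous f := by
    have hfe : f = fun z => f 0 + ∫ y in (0:ℝ)..z, f' y := by
      funext z; have := hFTC 0 z; linarith
    rw [hfe]
    exact continuous_const.add (intervalIntegral.continuous_primitive hf'int 0)
  have hAc : Continuous fun z => ∫ y in a..z, Λ y :=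
    intervalIntegral.continuous_primitive hΛloc a
  have hEc : Continuous fun z => Real.exp (-∫ y in a..z, Λ y) := hAc.neg.rexp
  have hA0 : ∀ z ∈ Icc a b, 0 ≤ ∫ y in a..z, Λ y := fun z hz =>
    intervalIntegral.integral_nonneg hz.1 fun y _ => (hΛpos y).le
  have hΛIoc : IntegrableOn Λ (Ioc a b) := (hΛloc a b).1
  have hf'Ioc : IntegrableOn f' (Ioc a b) := (hf'int a b).1
  have hfΛ : IntegrableOn (fun z => f z * Λ z) (Ioc a b) := by
    have := intOn_mul_cont hΛIoc hfc
    simpa [mul_comm] using this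
  have hu : IntegrableOn
      (fun z => (f z * Λ z - f' z) * Real.exp (-∫ y in a..z, Λ y)) (Ioc a b) :=
    intOn_mul_cont (hfΛ.sub hf'Ioc) hEc
  obtain ⟨Cf, hCfn⟩ := isCompact_Icc.exists_bound_of_continuousOn
    (hfc.continuousOn : ContinuousOn f (Icc a b))
  have hCf : ∀ z ∈ Icc a b, |f z| ≤ Cf := by
    intro z hz; have := hCfn z hz; rwa [Real.norm_eq_abs] at this
  have hCf0 : 0 ≤ Cf := le_trans (abs_nonneg _) (hCf a ⟨le_refl a, hab⟩)
  set D : ℝ := (∫ z in Ioc a b, (f z * Λ z - f' z) * Real.exp (-∫ y in a..z, Λ y))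
    - (f a - f b * Real.exp (-∫ y in a..b, Λ y)) with hDdef
  set C : ℝ := (∫ z in Ioc a b, |f z * Λ z - f' z|) + 2 * Cf
    + (∫ z in Ioc a b, Λ z) + 3 with hCdef
  have hC0 : 0 ≤ C := by
    have h1 : 0 ≤ ∫ z in Ioc a b, |f z * Λ z - f' z| :=
      setIntegral_nonneg measurableSet_Ioc fun z _ => abs_nonneg _
    have h2 : 0 ≤ ∫ z in Ioc a b, Λ z :=
      setIntegral_nonneg measurableSet_Ioc fun z _ => (hΛpos z).le
    rw [hCdef]; linarith
  suffices hsuff : ∀ ε : ℝ, 0 < ε → ε ≤ 1 → |D| ≤ C * ε by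
    have habs : |D| ≤ 0 := by
      refine le_of_forall_pos_le_add fun ε' hε' => ?_
      have hmin : 0 < min 1 (ε' / (C + 1)) := lt_min one_pos (div_pos hε' (by linarith))
      have h1 := hsuff _ hmin (min_le_left _ _)
      have h2 : C * min 1 (ε' / (C + 1)) ≤ C * (ε' / (C + 1)) :=
        mul_le_mul_of_nonneg_left (min_le_right _ _) hC0
      have h3 : C * (ε' / (C + 1)) ≤ ε' := by
        rw [← mul_div_assoc, div_le_iff₀ (by linarith : (0:ℝ) < C + 1)]
        nlinarith
      linarith
    have hD0 : D = 0 := abs_eq_zero.mp (le_antisymm habs (abs_nonneg _))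
    have := hDdef ▸ hD0
    linarith [this]
  intro ε hε hε1
  obtain ⟨g, hgc, hg0, hgε⟩ := approx_L1_nonneg hΛIoc (fun z => (hΛpos z).le) hε
  obtain ⟨φ, hφc, hφε⟩ := approx_L1 hf'Ioc hε
  have hGc : Continuous fun z => ∫ y in a..z, g y :=
    intervalIntegral.continuous_primitive (fun u v => hgc.intervalIntegrable u v) a
  have hΦc : Continuous fun z => f a + ∫ y in a..z, φ y :=
    continuous_const.add (intervalIntegral.continuous_primitive
      (fun u v => hφc.intervalIntegrable u v) a)
  have hG0 : ∀ z ∈ Icc a b, 0 ≤ ∫ y in a..z, g y := fun z hz =>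
    intervalIntegral.integral_nonneg hz.1 fun y _ => hg0 y
  have hEg1 : ∀ z ∈ Icc a b, Real.exp (-∫ y in a..z, g y) ≤ 1 := by
    intro z hz
    calc Real.exp (-∫ y in a..z, g y) ≤ Real.exp 0 :=
        Real.exp_le_exp.mpr (neg_nonpos.mpr (hG0 z hz))
      _ = 1 := Real.exp_zero
  have hfΦ : ∀ z ∈ Icc a b, |f z - (f a + ∫ y in a..z, φ y)| ≤ ε := by
    intro z hz
    have h0 : f z - (f a + ∫ y in a..z, φ y)
        = (∫ y in a..z, f' y) - ∫ y in a..z, φ y := by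
      have := hFTC a z; linarith
    rw [h0]
    exact le_trans (primitive_dev hf'int hφc hz) hφε
  have hEEg : ∀ z ∈ Icc a b,
      |Real.exp (-∫ y in a..z, Λ y) - Real.exp (-∫ y in a..z, g y)| ≤ ε := by
    intro z hz
    exact le_trans (exp_neg_lip (hA0 z hz) (hG0 z hz))
      (le_trans (primitive_dev hΛloc hgc hz) hgε)
  have Ig := cont_ftc g φ hgc hφc (f a) a b hab
  -- pointwise bound
  have hptw : ∀ z ∈ Ioc a b,
      |(f z * Λ z - f' z) * Real.exp (-∫ y in a..z, Λ y)
        - ((f a + ∫ y in a..z, φ y) * g z - φ z) * Real.exp (-∫ y in a..z, g y)|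
      ≤ ε * |f z * Λ z - f' z| + Cf * |Λ z - g z| + ε * g z + |f' z - φ z| := by
    intro z hz
    have hz' : z ∈ Icc a b := Ioc_subset_Icc_self hz
    have e1 := hEEg z hz'
    have e2 := hEg1 z hz'
    have e2' : (0:ℝ) < Real.exp (-∫ y in a..z, g y) := Real.exp_pos _
    have e3 := hCf z hz'
    have e4 := hfΦ z hz'
    have hdecomp : (f z * Λ z - f' z) * Real.exp (-∫ y in a..z, Λ y)
        - ((f a + ∫ y in a..z, φ y) * g z - φ z) * Real.exp (-∫ y in a..z, g y)
        = (f z * Λ z - f' z)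
            * (Real.exp (-∫ y in a..z, Λ y) - Real.exp (-∫ y in a..z, g y))
          + (f z * (Λ z - g z) + (f z - (f a + ∫ y in a..z, φ y)) * g z)
            * Real.exp (-∫ y in a..z, g y)
          - (f' z - φ z) * Real.exp (-∫ y in a..z, g y) := by ring
    rw [hdecomp]
    have t1 : |(f z * Λ z - f' z)
        * (Real.exp (-∫ y in a..z, Λ y) - Real.exp (-∫ y in a..z, g y))|
        ≤ ε * |f z * Λ z - f' z| := by
      rw [abs_mul, mul_comm]
      exact mul_le_mul_of_nonneg_right e1 (abs_nonneg _)
    have t2 : |(f z * (Λ z - g z) + (f z - (f a + ∫ y in a..z, φ y)) * g z)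
        * Real.exp (-∫ y in a..z, g y)|
        ≤ Cf * |Λ z - g z| + ε * g z := by
      rw [abs_mul]
      have i1 : |f z * (Λ z - g z) + (f z - (f a + ∫ y in a..z, φ y)) * g z|
          ≤ Cf * |Λ z - g z| + ε * g z := by
        calc |f z * (Λ z - g z) + (f z - (f a + ∫ y in a..z, φ y)) * g z|
            ≤ |f z * (Λ z - g z)| + |(f z - (f a + ∫ y in a..z, φ y)) * g z| :=
              abs_add_le _ _
          _ = |f z| * |Λ z - g z| + |f z - (f a + ∫ y in a..z, φ y)| * |g z| := by
              rw [abs_mul, abs_mul]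
          _ ≤ Cf * |Λ z - g z| + ε * |g z| :=
              add_le_add (mul_le_mul_of_nonneg_right e3 (abs_nonneg _))
                (mul_le_mul_of_nonneg_right e4 (abs_nonneg _))
          _ = Cf * |Λ z - g z| + ε * g z := by rw [abs_of_nonneg (hg0 z)]
      have i2 : |Real.exp (-∫ y in a..z, g y)| ≤ 1 := by
        rw [abs_of_pos e2']; exact e2
      have i3 : 0 ≤ Cf * |Λ z - g z| + ε * g z :=
        add_nonneg (mul_nonneg hCf0 (abs_nonneg _)) (mul_nonneg hε.le (hg0 z))
      calc |f z * (Λ z - g z) + (f z - (f a + ∫ y in a..z, φ y)) * g z|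
          * |Real.exp (-∫ y in a..z, g y)|
          ≤ (Cf * |Λ z - g z| + ε * g z) * 1 :=
            mul_le_mul i1 i2 (abs_nonneg _) i3
        _ = Cf * |Λ z - g z| + ε * g z := mul_one _
    have t3 : |(f' z - φ z) * Real.exp (-∫ y in a..z, g y)| ≤ |f' z - φ z| := by
      rw [abs_mul]
      calc |f' z - φ z| * |Real.exp (-∫ y in a..z, g y)|
          ≤ |f' z - φ z| * 1 :=
            mul_le_mul_of_nonneg_left (by rw [abs_of_pos e2']; exact e2) (abs_nonneg _)
        _ = |f' z - φ z| := mul_one _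
    have tri := abs_sub_le_abs_add_abs
      ((f z * Λ z - f' z)
          * (Real.exp (-∫ y in a..z, Λ y) - Real.exp (-∫ y in a..z, g y))
        + (f z * (Λ z - g z) + (f z - (f a + ∫ y in a..z, φ y)) * g z)
          * Real.exp (-∫ y in a..z, g y))
      ((f' z - φ z) * Real.exp (-∫ y in a..z, g y))
    have tri2 := abs_add_le
      ((f z * Λ z - f' z)
          * (Real.exp (-∫ y in a..z, Λ y) - Real.exp (-∫ y in a..z, g y)))
      ((f z * (Λ z - g z) + (f z - (f a + ∫ y in a..z, φ y)) * g z)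
          * Real.exp (-∫ y in a..z, g y))
    linarith

  -- integrability of pieces
  have hv : IntegrableOn (fun z => ((f a + ∫ y in a..z, φ y) * g z - φ z)
      * Real.exp (-∫ y in a..z, g y)) (Ioc a b) :=
    cont_intOn (((hΦc.mul hgc).sub hφc).mul hGc.neg.rexp)
  have hB1 : IntegrableOn (fun z => |f z * Λ z - f' z|) (Ioc a b) := (hfΛ.sub hf'Ioc).abs
  have hB2 : IntegrableOn (fun z => |Λ z - g z|) (Ioc a b) := (hΛIoc.sub (cont_intOn hgc)).abs
  have hB4 : IntegrableOn (fun z => |f' z - φ z|) (Ioc a b) := (hf'Ioc.sub (cont_intOn hφc)).abs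
  have hgInt : IntegrableOn g (Ioc a b) := cont_intOn hgc
  have hgK : (∫ z in Ioc a b, g z) ≤ (∫ z in Ioc a b, Λ z) + 1 := by
    have hsub : (∫ z in Ioc a b, g z) - (∫ z in Ioc a b, Λ z)
        = ∫ z in Ioc a b, (g z - Λ z) := (integral_sub hgInt hΛIoc).symm
    have hmono : (∫ z in Ioc a b, (g z - Λ z)) ≤ ∫ z in Ioc a b, |Λ z - g z| := by
      refine setIntegral_mono_on (hgInt.sub hΛIoc) hB2 measurableSet_Ioc ?_
      intro z _
      rw [abs_sub_comm]
      exact le_abs_self _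
    linarith [hgε]
  have hdiff : |(∫ z in Ioc a b, (f z * Λ z - f' z) * Real.exp (-∫ y in a..z, Λ y))
      - ∫ z in Ioc a b, ((f a + ∫ y in a..z, φ y) * g z - φ z)
        * Real.exp (-∫ y in a..z, g y)|
      ≤ ε * (∫ z in Ioc a b, |f z * Λ z - f' z|) + Cf * ε
        + ε * ((∫ z in Ioc a b, Λ z) + 1) + ε := by
    rw [← integral_sub hu hv]
    have step1 : |∫ z in Ioc a b, ((f z * Λ z - f' z) * Real.exp (-∫ y in a..z, Λ y)
        - ((f a + ∫ y in a..z, φ y) * g z - φ z) * Real.exp (-∫ y in a..z, g y))|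
        ≤ ∫ z in Ioc a b, |(f z * Λ z - f' z) * Real.exp (-∫ y in a..z, Λ y)
        - ((f a + ∫ y in a..z, φ y) * g z - φ z) * Real.exp (-∫ y in a..z, g y)| := by
      have := norm_integral_le_integral_norm (μ := volume.restrict (Ioc a b))
        (f := fun z => (f z * Λ z - f' z) * Real.exp (-∫ y in a..z, Λ y)
          - ((f a + ∫ y in a..z, φ y) * g z - φ z) * Real.exp (-∫ y in a..z, g y))
      simpa [Real.norm_eq_abs] using this
    have step2 : (∫ z in Ioc a b, |(f z * Λ z - f' z) * Real.exp (-∫ y in a..z, Λ y)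
        - ((f a + ∫ y in a..z, φ y) * g z - φ z) * Real.exp (-∫ y in a..z, g y)|)
        ≤ ∫ z in Ioc a b, (ε * |f z * Λ z - f' z| + Cf * |Λ z - g z| + ε * g z
          + |f' z - φ z|) :=
      setIntegral_mono_on ((hu.sub hv).abs)
        ((((hB1.const_mul ε).add (hB2.const_mul Cf)).add (hgInt.const_mul ε)).add hB4)
        measurableSet_Ioc hptw
    have step3 : (∫ z in Ioc a b, (ε * |f z * Λ z - f' z| + Cf * |Λ z - g z| + ε * g z
          + |f' z - φ z|))
        = ε * (∫ z in Ioc a b, |f z * Λ z - f' z|) + Cf * (∫ z in Ioc a b, |Λ z - g z|)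
          + ε * (∫ z in Ioc a b, g z) + ∫ z in Ioc a b, |f' z - φ z| := by
      have i12 : IntegrableOn (fun z => ε * |f z * Λ z - f' z| + Cf * |Λ z - g z|)
          (Ioc a b) := (hB1.const_mul ε).add (hB2.const_mul Cf)
      have i123 : IntegrableOn
          (fun z => ε * |f z * Λ z - f' z| + Cf * |Λ z - g z| + ε * g z) (Ioc a b) :=
        i12.add (hgInt.const_mul ε)
      rw [integral_add i123 hB4, integral_add i12 (hgInt.const_mul ε),
        integral_add (hB1.const_mul ε) (hB2.const_mul Cf),
        integral_const_mul, integral_const_mul, integral_const_mul]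
    refine le_trans step1 (le_trans step2 ?_)
    rw [step3]
    have hb2 : Cf * (∫ z in Ioc a b, |Λ z - g z|) ≤ Cf * ε :=
      mul_le_mul_of_nonneg_left hgε hCf0
    have hb3 : ε * (∫ z in Ioc a b, g z) ≤ ε * ((∫ z in Ioc a b, Λ z) + 1) :=
      mul_le_mul_of_nonneg_left hgK hε.le
    linarith [hφε]
  have hb' : b ∈ Icc a b := ⟨hab, le_refl b⟩
  have hRHS : |(f a + ∫ y in a..b, φ y) * Real.exp (-∫ y in a..b, g y)
      - f b * Real.exp (-∫ y in a..b, Λ y)| ≤ ε + Cf * ε := by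
    have hdec : (f a + ∫ y in a..b, φ y) * Real.exp (-∫ y in a..b, g y)
        - f b * Real.exp (-∫ y in a..b, Λ y)
        = ((f a + ∫ y in a..b, φ y) - f b) * Real.exp (-∫ y in a..b, g y)
          + f b * (Real.exp (-∫ y in a..b, g y) - Real.exp (-∫ y in a..b, Λ y)) := by
      ring
    rw [hdec]
    have r1 : |((f a + ∫ y in a..b, φ y) - f b) * Real.exp (-∫ y in a..b, g y)| ≤ ε := by
      rw [abs_mul]
      have h1 : |(f a + ∫ y in a..b, φ y) - f b| ≤ ε := by
        rw [abs_sub_comm]; exact hfΦ b hb'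
      have h2 : |Real.exp (-∫ y in a..b, g y)| ≤ 1 := by
        rw [abs_of_pos (Real.exp_pos _)]; exact hEg1 b hb'
      calc |(f a + ∫ y in a..b, φ y) - f b| * |Real.exp (-∫ y in a..b, g y)|
          ≤ ε * 1 := mul_le_mul h1 h2 (abs_nonneg _) hε.le
        _ = ε := mul_one ε
    have r2 : |f b * (Real.exp (-∫ y in a..b, g y) - Real.exp (-∫ y in a..b, Λ y))|
        ≤ Cf * ε := by
      rw [abs_mul]
      have h1 : |Real.exp (-∫ y in a..b, g y) - Real.exp (-∫ y in a..b, Λ y)| ≤ ε := by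
        rw [abs_sub_comm]; exact hEEg b hb'
      exact mul_le_mul (hCf b hb') h1 (abs_nonneg _) hCf0
    exact le_trans (abs_add_le _ _) (add_le_add r1 r2)
  have hDeq : D = ((∫ z in Ioc a b, (f z * Λ z - f' z) * Real.exp (-∫ y in a..z, Λ y))
      - ∫ z in Ioc a b, ((f a + ∫ y in a..z, φ y) * g z - φ z)
        * Real.exp (-∫ y in a..z, g y))
      - ((f a + ∫ y in a..b, φ y) * Real.exp (-∫ y in a..b, g y)
        - f b * Real.exp (-∫ y in a..b, Λ y)) := by
    rw [hDdef, Ig]; ring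
  rw [hDeq]
  refine le_trans (abs_sub_le_abs_add_abs _ _) ?_
  refine le_trans (add_le_add hdiff hRHS) (le_of_eq ?_)
  rw [hCdef]; ring



end Rep22

/-- Proposition 2.2 of the paper: under Assumptions 2.2 and 2.3, if
`c₀ = lim_{z→∞} f z * exp (-∫_0^z Λ)` is finite, then for every `x` the function
`z ↦ (f z - f' z / Λ z) * Λ z * exp (-∫_x^z Λ)` is (absolutely) integrable on `(x, ∞)`
and `∫_x^∞ (f z - f' z / Λ z) * Λ z * exp (-∫_x^z Λ) dz = f x - c₀ * exp (∫_0^x Λ)`. -/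
theorem representation_with_c0 (Λ f f' : ℝ → ℝ) (xs : EReal) (c₀ : ℝ)
    (hΛmeas : Measurable Λ) (hΛpos : ∀ y, 0 < Λ y)
    (hΛloc : ∀ a b : ℝ, IntervalIntegrable Λ volume a b)
    (hΛinf : ∀ x : ℝ, (∫⁻ y in Set.Ioi x, ENNReal.ofReal (Λ y)) = ⊤)
    (hf'int : ∀ a b : ℝ, IntervalIntegrable f' volume a b)
    (hFTC : ∀ a b : ℝ, f b - f a = ∫ y in a..b, f' y)
    (hpos : ∀ᵐ (z : ℝ) ∂(volume : Measure ℝ), xs < (z : EReal) → 0 < f z - f' z / Λ z)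
    (hneg : ∀ᵐ (z : ℝ) ∂(volume : Measure ℝ), (z : EReal) ≤ xs → f z - f' z / Λ z ≤ 0)
    (hmono : ∃ htil : ℝ → ℝ, Monotone htil ∧
      ∀ᵐ (z : ℝ) ∂(volume : Measure ℝ), xs < (z : EReal) → f z - f' z / Λ z = htil z)
    (hfpos : ∀ᶠ z in atTop, 0 < f z)
    (hc₀ : Tendsto (fun z : ℝ => f z * Real.exp (-∫ y in (0:ℝ)..z, Λ y)) atTop (nhds c₀)) :
    ∀ x : ℝ,
      IntegrableOn
        (fun z => |f z - f' z / Λ z| * Λ z * Real.exp (-∫ y in x..z, Λ y)) (Set.Ioi x) ∧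
      (∫ z in Set.Ioi x, (f z - f' z / Λ z) * Λ z * Real.exp (-∫ y in x..z, Λ y))
        = f x - c₀ * Real.exp (∫ y in (0:ℝ)..x, Λ y) := by
  intro x
  have hfc : Continuous f := by
    have hfe : f = fun z => f 0 + ∫ y in (0:ℝ)..z, f' y := by
      funext z; have := hFTC 0 z; linarith
    rw [hfe]
    exact continuous_const.add (intervalIntegral.continuous_primitive hf'int 0)
  have hEc : Continuous fun z => Real.exp (-∫ y in x..z, Λ y) :=
    (intervalIntegral.continuous_primitive hΛloc x).neg.rexp
  set F : ℝ → ℝ := fun z => (f z * Λ z - f' z) * Real.exp (-∫ y in x..z, Λ y) with hFdef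
  have hFh : ∀ z, (f z - f' z / Λ z) * Λ z * Real.exp (-∫ y in x..z, Λ y) = F z := by
    intro z
    rw [hFdef]
    have hz : Λ z ≠ 0 := (hΛpos z).ne'
    field_simp
  have hFIoc : ∀ u v : ℝ, IntegrableOn F (Set.Ioc u v) := by
    intro u v
    have h1 : IntegrableOn (fun z => f z * Λ z) (Set.Ioc u v) := by
      simpa [mul_comm] using Rep22.intOn_mul_cont (hΛloc u v).1 hfc
    exact Rep22.intOn_mul_cont (h1.sub (hf'int u v).1) hEc
  obtain ⟨t, σ, hxt, hsign⟩ : ∃ t σ : ℝ, x ≤ t ∧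
      (∀ᵐ z ∂(volume.restrict (Set.Ioi t)), |F z| = σ * F z) := by
    by_cases hxs : xs = ⊤
    · refine ⟨x, -1, le_refl x, ?_⟩
      refine ae_restrict_of_ae ?_
      filter_upwards [hneg] with z hz
      have h0 : f z - f' z / Λ z ≤ 0 := hz (by rw [hxs]; exact le_top)
      have hF0 : F z ≤ 0 := by
        rw [← hFh z]
        nlinarith [mul_pos (hΛpos z) (Real.exp_pos (-∫ y in x..z, Λ y))]
      rw [abs_of_nonpos hF0]; ring
    · obtain ⟨r, hr1, -⟩ := EReal.lt_iff_exists_real_btwn.mp (lt_top_iff_ne_top.mpr hxs)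
      refine ⟨max x r, 1, le_max_left x r, ?_⟩
      rw [ae_restrict_iff' measurableSet_Ioi]
      filter_upwards [hpos] with z hz hmem
      have hrz : r < z := lt_of_le_of_lt (le_max_right x r) hmem
      have h0 : 0 < f z - f' z / Λ z := hz (lt_trans hr1 (by exact_mod_cast hrz))
      have hF0 : 0 ≤ F z := by
        rw [← hFh z]
        exact mul_nonneg (mul_nonneg h0.le (hΛpos z).le) (Real.exp_pos _).le
      rw [abs_of_nonneg hF0]; ring
  have hsplitE : ∀ z : ℝ, Real.exp (-∫ y in x..z, Λ y)
      = Real.exp (-∫ y in x..t, Λ y) * Real.exp (-∫ y in t..z, Λ y) := by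
    intro z
    rw [← Real.exp_add, ← neg_add,
      intervalIntegral.integral_add_adjacent_intervals (hΛloc x t) (hΛloc t z)]
  have hIoc_t : ∀ i, t ≤ i → (∫ z in Set.Ioc t i, F z)
      = Real.exp (-∫ y in x..t, Λ y)
        * (f t - f i * Real.exp (-∫ y in t..i, Λ y)) := by
    intro i hti
    have hcong : ∀ z ∈ Set.Ioc t i, F z
        = Real.exp (-∫ y in x..t, Λ y)
          * ((f z * Λ z - f' z) * Real.exp (-∫ y in t..z, Λ y)) := by
      intro z _
      rw [hFdef]
      simp only []
      rw [hsplitE z]; ring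
    rw [setIntegral_congr_fun measurableSet_Ioc hcong, integral_const_mul,
      Rep22.key_identity Λ f f' hΛpos hΛloc hf'int hFTC t i hti]
  have hfE : ∀ c : ℝ, Tendsto (fun i => f i * Real.exp (-∫ y in c..i, Λ y)) atTop
      (nhds (c₀ * Real.exp (∫ y in (0:ℝ)..c, Λ y))) := by
    intro c
    have heq : ∀ i : ℝ, f i * Real.exp (-∫ y in c..i, Λ y)
        = f i * Real.exp (-∫ y in (0:ℝ)..i, Λ y) * Real.exp (∫ y in (0:ℝ)..c, Λ y) := by
      intro i
      have hadd := intervalIntegral.integral_add_adjacent_intervals (hΛloc c 0) (hΛloc 0 i)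
      have hsym : (∫ y in c..(0:ℝ), Λ y) = -∫ y in (0:ℝ)..c, Λ y :=
        intervalIntegral.integral_symm 0 c
      have harg : (-∫ y in c..i, Λ y)
          = (-∫ y in (0:ℝ)..i, Λ y) + ∫ y in (0:ℝ)..c, Λ y := by linarith
      rw [mul_assoc, ← Real.exp_add, harg]
    exact Tendsto.congr (fun i => (heq i).symm) (hc₀.mul_const _)
  have hnorm_eq : ∀ᶠ i in (atTop : Filter ℝ), (∫ z in x..i, ‖F z‖)
      = (∫ z in Set.Ioc x t, |F z|)
        + σ * (Real.exp (-∫ y in x..t, Λ y)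
          * (f t - f i * Real.exp (-∫ y in t..i, Λ y))) := by
    filter_upwards [eventually_ge_atTop t] with i hti
    rw [intervalIntegral.integral_of_le (le_trans hxt hti)]
    have hunion : Set.Ioc x t ∪ Set.Ioc t i = Set.Ioc x i :=
      Set.Ioc_union_Ioc_eq_Ioc hxt hti
    have h1 : (∫ z in Set.Ioc x i, ‖F z‖)
        = (∫ z in Set.Ioc x t, ‖F z‖) + ∫ z in Set.Ioc t i, ‖F z‖ := by
      rw [← hunion, setIntegral_union (Set.Ioc_disjoint_Ioc_of_le le_rfl) measurableSet_Ioc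
        (hFIoc x t).norm (hFIoc t i).norm]
    have h2 : (∫ z in Set.Ioc t i, ‖F z‖) = σ * ∫ z in Set.Ioc t i, F z := by
      have hae : ∀ᵐ z ∂(volume.restrict (Set.Ioc t i)), ‖F z‖ = σ * F z := by
        have hsub : ∀ᵐ z ∂(volume.restrict (Set.Ioc t i)), |F z| = σ * F z :=
          ae_restrict_of_ae_restrict_of_subset Set.Ioc_subset_Ioi_self hsign
        filter_upwards [hsub] with z hz
        rw [Real.norm_eq_abs]; exact hz
      rw [integral_congr_ae hae, integral_const_mul]
    rw [h1, h2, hIoc_t i hti]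
    simp only [Real.norm_eq_abs]
  have hFint : IntegrableOn F (Set.Ioi x) := by
    refine integrableOn_Ioi_of_intervalIntegral_norm_tendsto
      ((∫ z in Set.Ioc x t, |F z|)
        + σ * (Real.exp (-∫ y in x..t, Λ y)
          * (f t - c₀ * Real.exp (∫ y in (0:ℝ)..t, Λ y)))) x (fun i => hFIoc x i)
      tendsto_id ?_
    refine Tendsto.congr' (hnorm_eq.mono fun i h => h.symm) ?_
    exact tendsto_const_nhds.add
      (((tendsto_const_nhds.sub (hfE t)).const_mul (Real.exp (-∫ y in x..t, Λ y))).const_mul σ)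
  constructor
  · have habs : (fun z => |f z - f' z / Λ z| * Λ z * Real.exp (-∫ y in x..z, Λ y))
        = fun z => |F z| := by
      funext z
      rw [← hFh z, abs_mul, abs_mul, abs_of_pos (hΛpos z), abs_of_pos (Real.exp_pos _)]
    rw [habs]
    exact hFint.abs
  · have h1 : Tendsto (fun i => ∫ z in x..i, F z) atTop (nhds (∫ z in Set.Ioi x, F z)) :=
      intervalIntegral_tendsto_integral_Ioi x hFint tendsto_id
    have h2 : Tendsto (fun i => ∫ z in x..i, F z) atTop
        (nhds (f x - c₀ * Real.exp (∫ y in (0:ℝ)..x, Λ y))) := by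
      refine Tendsto.congr' ?_ (tendsto_const_nhds.sub (hfE x))
      filter_upwards [eventually_ge_atTop x] with i hxi
      have hio : (∫ z in x..i, F z) = ∫ z in Set.Ioc x i, F z :=
        intervalIntegral.integral_of_le hxi
      rw [hio, hFdef]
      exact (Rep22.key_identity Λ f f' hΛpos hΛloc hf'int hFTC x i hxi).symm
    have hlim := tendsto_nhds_unique h1 h2
    have hcong : (fun z => (f z - f' z / Λ z) * Λ z * Real.exp (-∫ y in x..z, Λ y))
        = F := funext fun z => hFh z
    rw [hcong, hlim]
end

section
/- Under the stated assumptions on Λ and f, suppose that the threshold x* is finite and that c₀ := lim_{z→∞} f(z)·exp(−∫_0^z Λ(y) dy) is finite. Then for every x ∈ ℝ, writing m := max(x, x*): ∫_m^∞ (f(z) − f'(z)/Λ(z))·Λ(z)·exp(−∫_x^z Λ(y) dy) dz = f(m)·exp(−∫_x^m Λ(y) dy) − c₀·exp(∫_0^x Λ(y) dy). -/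
open MeasureTheory Filter

open Set intervalIntegral Real
open scoped ENNReal

lemma int_exp_t : (∫ t in Set.Ioi (0:ℝ), Real.exp (-t) * t) = 1 ∧
    IntegrableOn (fun t => Real.exp (-t) * t) (Set.Ioi (0:ℝ)) := by
  have hd : ∀ t ∈ Set.Ioi (0:ℝ), HasDerivAt (fun t => -(t+1) * Real.exp (-t))
      (Real.exp (-t) * t) t := by
    intro t _
    have h1 : HasDerivAt (fun t : ℝ => Real.exp (-t)) (-Real.exp (-t)) t := by
      exact ((hasDerivAt_neg t).exp).congr_deriv (by ring)
    have h2 : HasDerivAt (fun t : ℝ => -(t+1)) (-1) t := by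
      exact ((hasDerivAt_id t).add_const 1).neg
    have := h2.mul h1
    exact this.congr_deriv (by ring)
  have hlim : Tendsto (fun t : ℝ => -(t+1) * Real.exp (-t)) atTop (nhds 0) := by
    have h1 : Tendsto (fun t : ℝ => t * Real.exp (-t)) atTop (nhds 0) := by
      simpa using tendsto_pow_mul_exp_neg_atTop_nhds_zero 1
    have h2 : Tendsto (fun t : ℝ => Real.exp (-t)) atTop (nhds 0) :=
      Real.tendsto_exp_neg_atTop_nhds_zero
    have := (h1.add h2).neg
    simp only [neg_zero, add_zero] at this
    convert this using 2 with t
    ring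
  have hnn : ∀ t ∈ Set.Ioi (0:ℝ), 0 ≤ Real.exp (-t) * t :=
    fun t ht => mul_nonneg (Real.exp_pos _).le (le_of_lt ht)
  constructor
  · have := integral_Ioi_of_hasDerivAt_of_nonneg
      (Continuous.continuousWithinAt (by continuity)) hd hnn hlim
    simpa using this
  · exact integrableOn_Ioi_deriv_of_nonneg (Continuous.continuousWithinAt (by continuity))
      hd hnn hlim

lemma int_exp_max' (V : ℝ) (hV : 0 ≤ V) :
    (∫ t in Set.Ioi (0:ℝ), Real.exp (-t) * max (t - V) 0) = Real.exp (-V) ∧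
    IntegrableOn (fun t => Real.exp (-t) * max (t - V) 0) (Set.Ioi (0:ℝ)) := by
  have hd : ∀ t ∈ Set.Ioi V, HasDerivAt (fun t => -(t - V + 1) * Real.exp (-t))
      (Real.exp (-t) * max (t - V) 0) t := by
    intro t ht
    have h1 : HasDerivAt (fun t : ℝ => Real.exp (-t)) (-Real.exp (-t)) t := by
      exact ((hasDerivAt_neg t).exp).congr_deriv (by ring)
    have h2 : HasDerivAt (fun t : ℝ => -(t - V + 1)) (-1) t := by
      exact (((hasDerivAt_id t).sub_const V).add_const 1).neg
    have := h2.mul h1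
    rw [max_eq_left (by simp only [Set.mem_Ioi] at ht; linarith)]
    exact this.congr_deriv (by ring)
  have hlim : Tendsto (fun t : ℝ => -(t - V + 1) * Real.exp (-t)) atTop (nhds 0) := by
    have h1 : Tendsto (fun t : ℝ => t * Real.exp (-t)) atTop (nhds 0) := by
      simpa using tendsto_pow_mul_exp_neg_atTop_nhds_zero 1
    have h2 : Tendsto (fun t : ℝ => Real.exp (-t)) atTop (nhds 0) :=
      Real.tendsto_exp_neg_atTop_nhds_zero
    have := (h1.add (h2.const_mul (1 - V))).neg
    simp only [neg_zero, add_zero, mul_zero] at this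
    convert this using 2 with t
    ring
  have hnn : ∀ t ∈ Set.Ioi V, 0 ≤ Real.exp (-t) * max (t - V) 0 :=
    fun t _ => mul_nonneg (Real.exp_pos _).le (le_max_right _ _)
  have hIoiV : ∫ t in Set.Ioi V, Real.exp (-t) * max (t - V) 0 = Real.exp (-V) := by
    have := integral_Ioi_of_hasDerivAt_of_nonneg
      (Continuous.continuousWithinAt (by continuity)) hd hnn hlim
    simp only [sub_self, zero_add, neg_mul, one_mul, zero_sub, neg_neg] at this
    simpa using this
  have hzero : ∀ t ∈ Set.Ioc (0:ℝ) V, Real.exp (-t) * max (t - V) 0 = 0 := by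
    intro t ht
    rw [max_eq_right (by linarith [ht.2])]
    ring
  have hint2 : IntegrableOn (fun t => Real.exp (-t) * max (t - V) 0) (Set.Ioi V) :=
    integrableOn_Ioi_deriv_of_nonneg (Continuous.continuousWithinAt (by continuity)) hd hnn hlim
  have hint1 : IntegrableOn (fun t => Real.exp (-t) * max (t - V) 0) (Set.Ioc 0 V) := by
    apply (integrableOn_zero (μ := volume) (s := Set.Ioc (0:ℝ) V)).congr_fun ?_ measurableSet_Ioc
    intro t ht
    exact (hzero t ht).symm
  constructor
  · rw [← Set.Ioc_union_Ioi_eq_Ioi hV,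
      MeasureTheory.setIntegral_union (Set.Ioc_disjoint_Ioi le_rfl) measurableSet_Ioi hint1 hint2,
      MeasureTheory.setIntegral_eq_zero_of_forall_eq_zero hzero, zero_add, hIoiV]
  · rw [← Set.Ioc_union_Ioi_eq_Ioi hV]
    exact hint1.union hint2

lemma int_exp_min (V : ℝ) (hV : 0 ≤ V) :
    ∫ t in Set.Ioi (0:ℝ), Real.exp (-t) * min t V = 1 - Real.exp (-V) := by
  have hmin : ∀ t : ℝ, Real.exp (-t) * min t V
      = Real.exp (-t) * t - Real.exp (-t) * max (t - V) 0 := by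
    intro t
    rcases le_total t V with h | h
    · rw [min_eq_left h, max_eq_right (by linarith)]; ring
    · rw [min_eq_right h, max_eq_left (by linarith)]; ring
  simp_rw [hmin]
  rw [MeasureTheory.integral_sub int_exp_t.2 (int_exp_max' V hV).2, int_exp_t.1,
    (int_exp_max' V hV).1]

lemma key' {Λ : ℝ → ℝ} (hΛmeas : Measurable Λ) (hΛpos : ∀ y, 0 < Λ y)
    (hΛloc : ∀ a b : ℝ, IntervalIntegrable Λ volume a b) (a b : ℝ) (hab : a ≤ b) :
    ∫ s in a..b, Λ s * Real.exp (-∫ y in a..s, Λ y)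
      = 1 - Real.exp (-∫ y in a..b, Λ y) := by
  set v : ℝ → ℝ := fun s => ∫ y in a..s, Λ y with hv
  have hv_cont : Continuous v := intervalIntegral.continuous_primitive hΛloc a
  have hv_mono : ∀ ⦃s t : ℝ⦄, s ≤ t → v s ≤ v t := by
    intro s t hst
    have hadd := integral_add_adjacent_intervals (hΛloc a s) (hΛloc s t)
    have hnn : 0 ≤ ∫ y in s..t, Λ y :=
      intervalIntegral.integral_nonneg hst (fun y _ => (hΛpos y).le)
    simp only [hv]
    linarith [hadd]
  have hv_strict : ∀ ⦃s t : ℝ⦄, s < t → v s < v t := by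
    intro s t hst
    have hadd := integral_add_adjacent_intervals (hΛloc a s) (hΛloc s t)
    have hpos : 0 < ∫ y in s..t, Λ y :=
      intervalIntegral.intervalIntegral_pos_of_pos_on (hΛloc s t)
        (fun y _ => hΛpos y) hst
    simp only [hv]
    linarith [hadd]
  have hv0 : v a = 0 := intervalIntegral.integral_same
  have hvnn : ∀ ⦃s⦄, a ≤ s → 0 ≤ v s := fun s hs => hv0 ▸ hv_mono hs
  set V : ℝ := v b with hVdef
  have hV : 0 ≤ V := hvnn hab
  -- the cut point
  have hct : ∀ t : ℝ, 0 < t → ∃ c, a ≤ c ∧ c ≤ b ∧ v c = min t V ∧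
      (Set.Ioc a b ∩ {s | v s ≤ t}) = Set.Ioc a c := by
    intro t ht
    by_cases hVt : V ≤ t
    · refine ⟨b, hab, le_rfl, by rw [min_eq_right hVt], ?_⟩
      ext s
      simp only [Set.mem_inter_iff, Set.mem_setOf_eq, Set.mem_Ioc]
      exact ⟨fun h => h.1, fun h => ⟨h, le_trans (hv_mono h.2) hVt⟩⟩
    · push_neg at hVt
      have htmem : t ∈ Set.Icc (v a) (v b) := by
        rw [hv0]; exact ⟨ht.le, hVt.le⟩
      obtain ⟨c, hc, hvc⟩ := intermediate_value_Icc hab hv_cont.continuousOn htmem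
      refine ⟨c, hc.1, hc.2, by rw [min_eq_left hVt.le, hvc], ?_⟩
      ext s
      simp only [Set.mem_inter_iff, Set.mem_setOf_eq, Set.mem_Ioc]
      constructor
      · rintro ⟨hs1, hs2⟩
        refine ⟨hs1.1, ?_⟩
        by_contra hcs
        push_neg at hcs
        have hlt := hv_strict hcs
        rw [hvc] at hlt
        linarith
      · rintro ⟨hs1, hs2⟩
        refine ⟨⟨hs1, hs2.trans hc.2⟩, ?_⟩
        have hle := hv_mono hs2
        rw [hvc] at hle
        exact hle
  -- nonnegativity of both sides
  have hnnL : 0 ≤ ∫ s in a..b, Λ s * Real.exp (-v s) :=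
    intervalIntegral.integral_nonneg hab (fun s _ => mul_nonneg (hΛpos s).le (Real.exp_pos _).le)
  have hnnR : 0 ≤ 1 - Real.exp (-V) := by
    have : Real.exp (-V) ≤ 1 := Real.exp_le_one_iff.mpr (by linarith)
    linarith
  -- integrability of the integrand on (a,b]
  have hΛIoc : IntegrableOn Λ (Set.Ioc a b) :=
    (intervalIntegrable_iff_integrableOn_Ioc_of_le hab).mp (hΛloc a b)
  have hint : Integrable (fun s => Λ s * Real.exp (-v s)) (volume.restrict (Set.Ioc a b)) := by
    apply Integrable.mono hΛIoc
    · exact (hΛmeas.aestronglyMeasurable).mul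
        ((Real.continuous_exp.comp hv_cont.neg).aestronglyMeasurable)
    · filter_upwards [ae_restrict_mem measurableSet_Ioc] with s hs
      rw [norm_mul]
      have h1 : ‖Real.exp (-v s)‖ ≤ 1 := by
        rw [Real.norm_eq_abs, abs_of_pos (Real.exp_pos _)]
        exact Real.exp_le_one_iff.mpr (by linarith [hvnn hs.1.le])
      calc ‖Λ s‖ * ‖Real.exp (-v s)‖ ≤ ‖Λ s‖ * 1 :=
            mul_le_mul_of_nonneg_left h1 (norm_nonneg _)
        _ = ‖Λ s‖ := mul_one _
  -- the double-integral function
  set F : ℝ × ℝ → ℝ≥0∞ := fun p =>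
    if v p.1 ≤ p.2 then ENNReal.ofReal (Λ p.1) * ENNReal.ofReal (Real.exp (-p.2)) else 0
    with hF
  have hFmeas : Measurable F := by
    apply Measurable.ite
    · exact measurableSet_le (hv_cont.measurable.comp measurable_fst) measurable_snd
    · exact ((hΛmeas.comp measurable_fst).ennreal_ofReal).mul
        ((measurable_snd.neg.exp).ennreal_ofReal)
    · exact measurable_const
  have hexpint : ∀ w : ℝ, IntegrableOn (fun t : ℝ => Real.exp (-t)) (Set.Ioi w) := by
    intro w
    have := exp_neg_integrableOn_Ioi w (one_pos (α := ℝ))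
    simpa using this
  -- step 2 : pointwise identity on Ioc a b
  have hstep2 : ∀ s ∈ Set.Ioc a b, ENNReal.ofReal (Λ s * Real.exp (-v s))
      = ∫⁻ t in Set.Ioi (0:ℝ), F (s, t) := by
    intro s hs
    have h1 : ∀ t : ℝ, F (s, t) = ENNReal.ofReal (Λ s) *
        Set.indicator (Set.Ici (v s)) (fun t => ENNReal.ofReal (Real.exp (-t))) t := by
      intro t
      by_cases h : v s ≤ t <;>
        simp [hF, Set.indicator_apply, Set.mem_Ici, h]
    simp_rw [h1]
    rw [lintegral_const_mul' _ _ ENNReal.ofReal_ne_top,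
      lintegral_indicator measurableSet_Ici,
      Measure.restrict_restrict measurableSet_Ici]
    have hseteq : (Set.Ici (v s) ∩ Set.Ioi 0 : Set ℝ) =ᵐ[volume] Set.Ioi (v s) := by
      rw [MeasureTheory.ae_eq_set]
      constructor
      · apply measure_mono_null (t := {v s}) ?_ (measure_singleton _)
        rintro u ⟨⟨hu1, _⟩, hu2⟩
        simp only [Set.mem_Ioi, not_lt] at hu2
        simp only [Set.mem_Ici] at hu1
        exact Set.mem_singleton_iff.mpr (le_antisymm hu2 hu1)
      · apply measure_mono_null (t := (∅ : Set ℝ)) ?_ measure_empty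
        rintro u ⟨hu1, hu2⟩
        simp only [Set.mem_Ioi] at hu1
        exact absurd ⟨le_of_lt hu1, lt_of_le_of_lt (hvnn hs.1.le) hu1⟩ hu2
    rw [setLIntegral_congr hseteq,
      ← ofReal_integral_eq_lintegral_ofReal (hexpint (v s))
        (Filter.Eventually.of_forall fun t => (Real.exp_pos _).le),
      integral_exp_neg_Ioi, ← ENNReal.ofReal_mul (hΛpos s).le]
  -- step 5 : inner integral after swapping
  have hstep5 : ∀ t ∈ Set.Ioi (0:ℝ), (∫⁻ s in Set.Ioc a b, F (s, t))
      = ENNReal.ofReal (Real.exp (-t) * min t V) := by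
    intro t ht
    obtain ⟨c, hac, hcb, hvc, hset⟩ := hct t ht
    have h1 : ∀ s : ℝ, F (s, t) = ENNReal.ofReal (Real.exp (-t)) *
        Set.indicator {s | v s ≤ t} (fun s => ENNReal.ofReal (Λ s)) s := by
      intro s
      by_cases h : v s ≤ t <;>
        simp [hF, Set.indicator_apply, h, mul_comm]
    simp_rw [h1]
    have hmeasset : MeasurableSet {s | v s ≤ t} :=
      measurableSet_le hv_cont.measurable measurable_const
    rw [lintegral_const_mul' _ _ ENNReal.ofReal_ne_top,
      lintegral_indicator hmeasset,
      Measure.restrict_restrict hmeasset, Set.inter_comm, hset]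
    have hΛac : IntegrableOn Λ (Set.Ioc a c) :=
      (intervalIntegrable_iff_integrableOn_Ioc_of_le hac).mp (hΛloc a c)
    rw [← ofReal_integral_eq_lintegral_ofReal hΛac
        (Filter.Eventually.of_forall fun s => (hΛpos s).le),
      ← ENNReal.ofReal_mul (Real.exp_pos _).le]
    congr 1
    have : ∫ s in Set.Ioc a c, Λ s = v c := by
      rw [← intervalIntegral.integral_of_le hac]
    rw [this, hvc]
  -- integrability for step 6
  have hint2 : Integrable (fun t => Real.exp (-t) * min t V)
      (volume.restrict (Set.Ioi (0:ℝ))) := by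
    apply ((hexpint 0).const_mul V).mono
    · exact ((Real.continuous_exp.comp continuous_neg).mul
        (continuous_id.min continuous_const)).aestronglyMeasurable
    · filter_upwards [ae_restrict_mem measurableSet_Ioi] with t ht
      simp only [Set.mem_Ioi] at ht
      have hmn : 0 ≤ min t V := le_min ht.le hV
      rw [Real.norm_eq_abs, Real.norm_eq_abs, abs_of_nonneg (mul_nonneg (Real.exp_pos _).le hmn),
        abs_of_nonneg (mul_nonneg hV (Real.exp_pos _).le)]
      nlinarith [min_le_right t V, Real.exp_pos (-t)]
  -- the chain
  have hofReal : ENNReal.ofReal (∫ s in a..b, Λ s * Real.exp (-v s))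
      = ENNReal.ofReal (1 - Real.exp (-V)) := by
    calc ENNReal.ofReal (∫ s in a..b, Λ s * Real.exp (-v s))
        = ∫⁻ s in Set.Ioc a b, ENNReal.ofReal (Λ s * Real.exp (-v s)) := by
          rw [intervalIntegral.integral_of_le hab,
            ofReal_integral_eq_lintegral_ofReal hint
              (Filter.Eventually.of_forall fun s => mul_nonneg (hΛpos s).le (Real.exp_pos _).le)]
      _ = ∫⁻ s in Set.Ioc a b, ∫⁻ t in Set.Ioi (0:ℝ), F (s, t) :=
          setLIntegral_congr_fun measurableSet_Ioc
            hstep2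
      _ = ∫⁻ t in Set.Ioi (0:ℝ), ∫⁻ s in Set.Ioc a b, F (s, t) :=
          lintegral_lintegral_swap hFmeas.aemeasurable
      _ = ∫⁻ t in Set.Ioi (0:ℝ), ENNReal.ofReal (Real.exp (-t) * min t V) :=
          setLIntegral_congr_fun measurableSet_Ioi
            hstep5
      _ = ENNReal.ofReal (∫ t in Set.Ioi (0:ℝ), Real.exp (-t) * min t V) :=
          (ofReal_integral_eq_lintegral_ofReal hint2 (by
            filter_upwards [ae_restrict_mem measurableSet_Ioi] with t ht
            simp only [Set.mem_Ioi] at ht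
            exact mul_nonneg (Real.exp_pos _).le (le_min ht.le hV))).symm
      _ = ENNReal.ofReal (1 - Real.exp (-V)) := by rw [int_exp_min V hV]
  exact (ENNReal.ofReal_eq_ofReal_iff hnnL hnnR).mp hofReal

lemma key {Λ : ℝ → ℝ} (hΛmeas : Measurable Λ) (hΛpos : ∀ y, 0 < Λ y)
    (hΛloc : ∀ a b : ℝ, IntervalIntegrable Λ volume a b) (x a b : ℝ) (hab : a ≤ b) :
    ∫ s in a..b, Λ s * Real.exp (-∫ y in x..s, Λ y)
      = Real.exp (-∫ y in x..a, Λ y) - Real.exp (-∫ y in x..b, Λ y) := by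
  have hpt : ∀ s : ℝ, Λ s * Real.exp (-∫ y in x..s, Λ y)
      = Real.exp (-∫ y in x..a, Λ y) * (Λ s * Real.exp (-∫ y in a..s, Λ y)) := by
    intro s
    rw [← integral_add_adjacent_intervals (hΛloc x a) (hΛloc a s), neg_add, Real.exp_add]
    ring
  calc ∫ s in a..b, Λ s * Real.exp (-∫ y in x..s, Λ y)
      = ∫ s in a..b, Real.exp (-∫ y in x..a, Λ y) * (Λ s * Real.exp (-∫ y in a..s, Λ y)) :=
        intervalIntegral.integral_congr (fun s _ => hpt s)
    _ = Real.exp (-∫ y in x..a, Λ y) *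
        ∫ s in a..b, Λ s * Real.exp (-∫ y in a..s, Λ y) :=
        intervalIntegral.integral_const_mul _ _
    _ = Real.exp (-∫ y in x..a, Λ y) * (1 - Real.exp (-∫ y in a..b, Λ y)) := by
        rw [key' hΛmeas hΛpos hΛloc a b hab]
    _ = Real.exp (-∫ y in x..a, Λ y) - Real.exp (-∫ y in x..b, Λ y) := by
        rw [mul_sub, mul_one, ← Real.exp_add, ← neg_add,
          integral_add_adjacent_intervals (hΛloc x a) (hΛloc a b)]

lemma fubini_C {Λ f f' : ℝ → ℝ} (hΛmeas : Measurable Λ) (hΛpos : ∀ y, 0 < Λ y)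
    (hΛloc : ∀ a b : ℝ, IntervalIntegrable Λ volume a b)
    (hf'int : ∀ a b : ℝ, IntervalIntegrable f' volume a b)
    (hFTC : ∀ a b : ℝ, f b - f a = ∫ y in a..b, f' y)
    (x m T : ℝ) (hmT : m ≤ T) :
    ∫ z in Set.Ioc m T, f' z * (Real.exp (-∫ y in x..z, Λ y) - Real.exp (-∫ y in x..T, Λ y))
      = ∫ s in Set.Ioc m T, (Λ s * Real.exp (-∫ y in x..s, Λ y)) * (f s - f m) := by
  set E : ℝ → ℝ := fun z => Real.exp (-∫ y in x..z, Λ y) with hEdef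
  have hE_cont : Continuous E :=
    Real.continuous_exp.comp (intervalIntegral.continuous_primitive hΛloc x).neg
  obtain ⟨C, hC⟩ := (isCompact_Icc (a := m) (b := T)).exists_bound_of_continuousOn
    hE_cont.continuousOn
  have hC0 : 0 ≤ C := le_trans (norm_nonneg _) (hC m (Set.left_mem_Icc.mpr hmT))
  have hW : IntegrableOn (fun s => Λ s * E s) (Set.Ioc m T) := by
    apply Integrable.mono
      (((intervalIntegrable_iff_integrableOn_Ioc_of_le hmT).mp (hΛloc m T)).const_mul C)
    · exact (hΛmeas.aestronglyMeasurable).mul hE_cont.aestronglyMeasurable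
    · filter_upwards [ae_restrict_mem measurableSet_Ioc] with s hs
      rw [norm_mul, Real.norm_eq_abs (C * Λ s), abs_mul]
      have h1 : ‖E s‖ ≤ C := hC s (Set.mem_Icc_of_Ioc hs)
      calc ‖Λ s‖ * ‖E s‖ ≤ ‖Λ s‖ * C := mul_le_mul_of_nonneg_left h1 (norm_nonneg _)
        _ = C * |Λ s| := by rw [Real.norm_eq_abs]; ring
        _ ≤ |C| * |Λ s| := mul_le_mul_of_nonneg_right (le_abs_self C) (abs_nonneg _)
  have hf'Ioc : IntegrableOn f' (Set.Ioc m T) :=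
    (intervalIntegrable_iff_integrableOn_Ioc_of_le hmT).mp (hf'int m T)
  set Q : ℝ × ℝ → ℝ := fun p => f' p.1 * (Λ p.2 * E p.2) with hQdef
  have hQ : Integrable Q ((volume.restrict (Set.Ioc m T)).prod (volume.restrict (Set.Ioc m T))) :=
    Integrable.mul_prod hf'Ioc hW
  set S : Set (ℝ × ℝ) := {p | p.1 < p.2} with hSdef
  have hS : MeasurableSet S := measurableSet_lt measurable_fst measurable_snd
  set P : ℝ × ℝ → ℝ := S.indicator Q with hPdef
  have hP : Integrable P ((volume.restrict (Set.Ioc m T)).prod (volume.restrict (Set.Ioc m T))) :=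
    hQ.indicator hS
  have hswap : (∫ z in Set.Ioc m T, ∫ s in Set.Ioc m T, P (z, s))
      = ∫ s in Set.Ioc m T, ∫ z in Set.Ioc m T, P (z, s) := by
    apply MeasureTheory.integral_integral_swap
    exact hP
  calc ∫ z in Set.Ioc m T, f' z * (E z - E T)
      = ∫ z in Set.Ioc m T, ∫ s in Set.Ioc m T, P (z, s) := by
        apply (setIntegral_congr_fun measurableSet_Ioc ?_).symm
        intro z hz
        have h1 : ∀ s : ℝ, P (z, s) = (Set.Ioi z).indicator (fun s => f' z * (Λ s * E s)) s := by
          intro s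
          by_cases h : z < s <;>
            simp [hPdef, hSdef, hQdef, Set.indicator_apply, Set.mem_Ioi, h]
        simp_rw [h1]
        rw [setIntegral_indicator measurableSet_Ioi]
        have h2 : Set.Ioc m T ∩ Set.Ioi z = Set.Ioc z T := by
          ext s
          simp only [Set.mem_inter_iff, Set.mem_Ioc, Set.mem_Ioi]
          exact ⟨fun h => ⟨h.2, h.1.2⟩, fun h => ⟨⟨hz.1.trans h.1, h.2⟩, h.1⟩⟩
        rw [h2, MeasureTheory.integral_const_mul,
          ← intervalIntegral.integral_of_le hz.2,
          key hΛmeas hΛpos hΛloc x z T hz.2]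
    _ = ∫ s in Set.Ioc m T, ∫ z in Set.Ioc m T, P (z, s) := hswap
    _ = ∫ s in Set.Ioc m T, (Λ s * E s) * (f s - f m) := by
        apply setIntegral_congr_fun measurableSet_Ioc
        intro s hs
        have h1 : ∀ z : ℝ, P (z, s) = (Set.Iio s).indicator (fun z => f' z * (Λ s * E s)) z := by
          intro z
          by_cases h : z < s <;>
            simp [hPdef, hSdef, hQdef, Set.indicator_apply, Set.mem_Iio, h]
        simp_rw [h1]
        rw [setIntegral_indicator measurableSet_Iio]
        have h2 : Set.Ioc m T ∩ Set.Iio s = Set.Ioo m s := by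
          ext z
          simp only [Set.mem_inter_iff, Set.mem_Ioc, Set.mem_Iio, Set.mem_Ioo]
          exact ⟨fun h => ⟨h.1.1, h.2⟩, fun h => ⟨⟨h.1, h.2.le.trans hs.2⟩, h.2⟩⟩
        rw [h2, MeasureTheory.integral_mul_const, ← MeasureTheory.integral_Ioc_eq_integral_Ioo,
          ← intervalIntegral.integral_of_le hs.1.le, ← hFTC m s, mul_comm]

lemma f_continuous {f f' : ℝ → ℝ} (hf'int : ∀ a b : ℝ, IntervalIntegrable f' volume a b)
    (hFTC : ∀ a b : ℝ, f b - f a = ∫ y in a..b, f' y) : Continuous f := by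
  have h1 : Continuous fun b => ∫ y in (0:ℝ)..b, f' y :=
    intervalIntegral.continuous_primitive hf'int 0
  have h2 : f = fun b => f 0 + ∫ y in (0:ℝ)..b, f' y := by
    funext b
    linarith [hFTC 0 b]
  rw [h2]
  exact continuous_const.add h1

lemma terms_integrable {Λ f f' : ℝ → ℝ} (hΛmeas : Measurable Λ) (hΛpos : ∀ y, 0 < Λ y)
    (hΛloc : ∀ a b : ℝ, IntervalIntegrable Λ volume a b)
    (hf'int : ∀ a b : ℝ, IntervalIntegrable f' volume a b)
    (hFTC : ∀ a b : ℝ, f b - f a = ∫ y in a..b, f' y)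
    (x m T : ℝ) (hmT : m ≤ T) :
    IntegrableOn (fun s => Λ s * Real.exp (-∫ y in x..s, Λ y)) (Set.Ioc m T) ∧
    IntegrableOn (fun z => (Λ z * Real.exp (-∫ y in x..z, Λ y)) * f z) (Set.Ioc m T) ∧
    IntegrableOn (fun z => f' z * Real.exp (-∫ y in x..z, Λ y)) (Set.Ioc m T) := by
  set E : ℝ → ℝ := fun z => Real.exp (-∫ y in x..z, Λ y) with hEdef
  have hE_cont : Continuous E :=
    Real.continuous_exp.comp (intervalIntegral.continuous_primitive hΛloc x).neg
  have hf_cont : Continuous f := f_continuous hf'int hFTC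
  have hΛIoc : IntegrableOn Λ (Set.Ioc m T) :=
    (intervalIntegrable_iff_integrableOn_Ioc_of_le hmT).mp (hΛloc m T)
  have hf'Ioc : IntegrableOn f' (Set.Ioc m T) :=
    (intervalIntegrable_iff_integrableOn_Ioc_of_le hmT).mp (hf'int m T)
  obtain ⟨C1, hC1⟩ := (isCompact_Icc (a := m) (b := T)).exists_bound_of_continuousOn
    hE_cont.continuousOn
  obtain ⟨C2, hC2⟩ := (isCompact_Icc (a := m) (b := T)).exists_bound_of_continuousOn
    (hE_cont.mul hf_cont).continuousOn
  refine ⟨?_, ?_, ?_⟩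
  · apply Integrable.mono (hΛIoc.const_mul C1)
    · exact (hΛmeas.aestronglyMeasurable).mul hE_cont.aestronglyMeasurable
    · filter_upwards [ae_restrict_mem measurableSet_Ioc] with s hs
      rw [norm_mul, Real.norm_eq_abs (C1 * Λ s), abs_mul]
      calc ‖Λ s‖ * ‖E s‖ ≤ ‖Λ s‖ * C1 :=
            mul_le_mul_of_nonneg_left (hC1 s (Set.mem_Icc_of_Ioc hs)) (norm_nonneg _)
        _ = C1 * |Λ s| := by rw [Real.norm_eq_abs]; ring
        _ ≤ |C1| * |Λ s| := mul_le_mul_of_nonneg_right (le_abs_self C1) (abs_nonneg _)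
  · apply Integrable.mono (hΛIoc.const_mul C2)
    · exact ((hΛmeas.aestronglyMeasurable).mul hE_cont.aestronglyMeasurable).mul
        hf_cont.aestronglyMeasurable
    · filter_upwards [ae_restrict_mem measurableSet_Ioc] with s hs
      rw [Real.norm_eq_abs (C2 * Λ s), abs_mul]
      have h1 : ‖E s * f s‖ ≤ C2 := hC2 s (Set.mem_Icc_of_Ioc hs)
      calc ‖Λ s * E s * f s‖ = ‖Λ s‖ * ‖E s * f s‖ := by
            rw [← norm_mul]; ring_nf
        _ ≤ ‖Λ s‖ * C2 := mul_le_mul_of_nonneg_left h1 (norm_nonneg _)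
        _ = C2 * |Λ s| := by rw [Real.norm_eq_abs]; ring
        _ ≤ |C2| * |Λ s| := mul_le_mul_of_nonneg_right (le_abs_self C2) (abs_nonneg _)
  · apply Integrable.mono (hf'Ioc.const_mul C1)
    · exact hf'Ioc.aestronglyMeasurable.mul hE_cont.aestronglyMeasurable
    · filter_upwards [ae_restrict_mem measurableSet_Ioc] with s hs
      rw [norm_mul, Real.norm_eq_abs (C1 * f' s), abs_mul]
      calc ‖f' s‖ * ‖E s‖ ≤ ‖f' s‖ * C1 :=
            mul_le_mul_of_nonneg_left (hC1 s (Set.mem_Icc_of_Ioc hs)) (norm_nonneg _)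
        _ = C1 * |f' s| := by rw [Real.norm_eq_abs]; ring
        _ ≤ |C1| * |f' s| := mul_le_mul_of_nonneg_right (le_abs_self C1) (abs_nonneg _)

lemma finite_identity {Λ f f' : ℝ → ℝ} (hΛmeas : Measurable Λ) (hΛpos : ∀ y, 0 < Λ y)
    (hΛloc : ∀ a b : ℝ, IntervalIntegrable Λ volume a b)
    (hf'int : ∀ a b : ℝ, IntervalIntegrable f' volume a b)
    (hFTC : ∀ a b : ℝ, f b - f a = ∫ y in a..b, f' y)
    (x m T : ℝ) (hmT : m ≤ T) :
    ∫ z in Set.Ioc m T, (f z - f' z / Λ z) * Λ z * Real.exp (-∫ y in x..z, Λ y)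
      = f m * Real.exp (-∫ y in x..m, Λ y) - f T * Real.exp (-∫ y in x..T, Λ y) := by
  set E : ℝ → ℝ := fun z => Real.exp (-∫ y in x..z, Λ y) with hEdef
  obtain ⟨hW, hterm1, hterm2⟩ := terms_integrable hΛmeas hΛpos hΛloc hf'int hFTC x m T hmT
  have hf'Ioc : IntegrableOn f' (Set.Ioc m T) :=
    (intervalIntegrable_iff_integrableOn_Ioc_of_le hmT).mp (hf'int m T)
  have hHeq : ∀ z, (f z - f' z / Λ z) * Λ z * E z = (Λ z * E z) * f z - f' z * E z := by
    intro z
    have hz : Λ z ≠ 0 := (hΛpos z).ne'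
    field_simp
  have hA : ∫ z in Set.Ioc m T, Λ z * E z = E m - E T := by
    rw [← intervalIntegral.integral_of_le hmT]
    exact key hΛmeas hΛpos hΛloc x m T hmT
  have hterm2' : IntegrableOn (fun z => f' z * (E z - E T)) (Set.Ioc m T) := by
    apply Integrable.congr (hterm2.sub (hf'Ioc.mul_const (E T)))
    exact Filter.Eventually.of_forall fun z => by simp only [Pi.sub_apply]; ring
  have hsplit2 : ∫ z in Set.Ioc m T, f' z * E z
      = (∫ z in Set.Ioc m T, f' z * (E z - E T)) + E T * (f T - f m) := by
    have h1 : Set.EqOn (fun z => f' z * E z) (fun z => f' z * (E z - E T) + f' z * E T)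
        (Set.Ioc m T) := fun z _ => by ring
    rw [setIntegral_congr_fun measurableSet_Ioc h1,
      MeasureTheory.integral_add hterm2' (hf'Ioc.mul_const (E T))]
    congr 1
    rw [MeasureTheory.integral_mul_const, ← intervalIntegral.integral_of_le hmT, ← hFTC m T]
    ring
  have hsplit3 : ∫ s in Set.Ioc m T, (Λ s * E s) * (f s - f m)
      = (∫ s in Set.Ioc m T, (Λ s * E s) * f s) - f m * (E m - E T) := by
    have h1 : Set.EqOn (fun s => (Λ s * E s) * (f s - f m))
        (fun s => (Λ s * E s) * f s - (Λ s * E s) * f m) (Set.Ioc m T) := fun s _ => by ring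
    rw [setIntegral_congr_fun measurableSet_Ioc h1,
      MeasureTheory.integral_sub hterm1 (hW.mul_const (f m)),
      MeasureTheory.integral_mul_const, hA]
    ring
  have hC := fubini_C hΛmeas hΛpos hΛloc hf'int hFTC x m T hmT
  calc ∫ z in Set.Ioc m T, (f z - f' z / Λ z) * Λ z * E z
      = ∫ z in Set.Ioc m T, ((Λ z * E z) * f z - f' z * E z) :=
        setIntegral_congr_fun measurableSet_Ioc (fun z _ => hHeq z)
    _ = (∫ z in Set.Ioc m T, (Λ z * E z) * f z) - ∫ z in Set.Ioc m T, f' z * E z :=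
        MeasureTheory.integral_sub hterm1 hterm2
    _ = f m * E m - f T * E T := by
        rw [hsplit2, hC, hsplit3]
        ring

/-- Eq. (15) of the paper: under Assumptions 2.2 and 2.3 with a finite threshold `x*`
and finite `c₀ = lim_{z→∞} f z * exp (-∫_0^z Λ)`, for every `x`, with `m = max x x*`,
`∫_m^∞ (f z - f' z / Λ z) * Λ z * exp (-∫_x^z Λ) dz
  = f m * exp (-∫_x^m Λ) - c₀ * exp (∫_0^x Λ)`. -/
theorem tail_integral_identity (Λ f f' : ℝ → ℝ) (xs : ℝ) (c₀ : ℝ)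
    (hΛmeas : Measurable Λ) (hΛpos : ∀ y, 0 < Λ y)
    (hΛloc : ∀ a b : ℝ, IntervalIntegrable Λ volume a b)
    (hΛinf : ∀ x : ℝ, (∫⁻ y in Set.Ioi x, ENNReal.ofReal (Λ y)) = ⊤)
    (hf'int : ∀ a b : ℝ, IntervalIntegrable f' volume a b)
    (hFTC : ∀ a b : ℝ, f b - f a = ∫ y in a..b, f' y)
    (hpos : ∀ᵐ (z : ℝ) ∂(volume : Measure ℝ), xs < z → 0 < f z - f' z / Λ z)
    (hneg : ∀ᵐ (z : ℝ) ∂(volume : Measure ℝ), z ≤ xs → f z - f' z / Λ z ≤ 0)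
    (hmono : ∃ htil : ℝ → ℝ, Monotone htil ∧
      ∀ᵐ (z : ℝ) ∂(volume : Measure ℝ), xs < z → f z - f' z / Λ z = htil z)
    (hfpos : ∀ᶠ z in atTop, 0 < f z)
    (hc₀ : Tendsto (fun z : ℝ => f z * Real.exp (-∫ y in (0:ℝ)..z, Λ y)) atTop (nhds c₀)) :
    ∀ x : ℝ,
      (∫ z in Set.Ioi (max x xs),
          (f z - f' z / Λ z) * Λ z * Real.exp (-∫ y in x..z, Λ y))
        = f (max x xs) * Real.exp (-∫ y in x..(max x xs), Λ y)
            - c₀ * Real.exp (∫ y in (0:ℝ)..x, Λ y) := by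
  intro x
  set m : ℝ := max x xs with hmdef
  have hxsm : xs ≤ m := le_max_right x xs
  set E : ℝ → ℝ := fun z => Real.exp (-∫ y in x..z, Λ y) with hEdef
  set H : ℝ → ℝ := fun z => (f z - f' z / Λ z) * Λ z * E z with hHdef
  set L : ℝ := f m * E m - c₀ * Real.exp (∫ y in (0:ℝ)..x, Λ y) with hLdef
  have hB : ∀ T, m ≤ T → ∫ z in Set.Ioc m T, H z = f m * E m - f T * E T :=
    fun T hT => finite_identity hΛmeas hΛpos hΛloc hf'int hFTC x m T hT
  -- limit of f T * E T
  have hptE : ∀ T : ℝ, f T * E T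
      = (f T * Real.exp (-∫ y in (0:ℝ)..T, Λ y)) * Real.exp (∫ y in (0:ℝ)..x, Λ y) := by
    intro T
    have hsum : (∫ y in x..(0:ℝ), Λ y) + ∫ y in (0:ℝ)..T, Λ y = ∫ y in x..T, Λ y :=
      integral_add_adjacent_intervals (hΛloc x 0) (hΛloc 0 T)
    have h0 : (∫ y in x..(0:ℝ), Λ y) = -∫ y in (0:ℝ)..x, Λ y :=
      intervalIntegral.integral_symm 0 x
    simp only [hEdef]
    rw [← hsum, h0, neg_add, neg_neg, Real.exp_add]
    ring
  have hflim : Tendsto (fun T => f T * E T) atTop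
      (nhds (c₀ * Real.exp (∫ y in (0:ℝ)..x, Λ y))) :=
    (hc₀.mul_const _).congr (fun T => (hptE T).symm)
  have hIlim : Tendsto (fun T => ∫ z in Set.Ioc m T, H z) atTop (nhds L) := by
    apply Tendsto.congr' ?_ (tendsto_const_nhds.sub hflim)
    filter_upwards [eventually_ge_atTop m] with T hT
    exact (hB T hT).symm
  -- a.e. nonnegativity of H on the relevant sets
  have hHnn : ∀ᵐ z : ℝ ∂(volume : Measure ℝ), m < z → 0 ≤ H z := by
    filter_upwards [hpos] with z hz hmz
    have h1 : 0 < f z - f' z / Λ z := hz (lt_of_le_of_lt hxsm hmz)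
    exact le_of_lt (mul_pos (mul_pos h1 (hΛpos z)) (Real.exp_pos _))
  -- integrability on finite intervals
  have hHIoc : ∀ T : ℝ, IntegrableOn H (Set.Ioc m T) := by
    intro T
    by_cases hT : m ≤ T
    · obtain ⟨hW, hterm1, hterm2⟩ := terms_integrable hΛmeas hΛpos hΛloc hf'int hFTC x m T hT
      apply Integrable.congr (hterm1.sub hterm2)
      apply Filter.Eventually.of_forall fun z => ?_
      simp only [Pi.sub_apply, hHdef]
      have hz : Λ z ≠ 0 := (hΛpos z).ne'
      field_simp
      ring
    · rw [Set.Ioc_eq_empty (fun h => hT h.le)]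
      exact integrableOn_empty
  -- norm integrals agree with plain integrals eventually
  have hnorm_eq : (fun T => ∫ z in m..T, ‖H z‖) =ᶠ[atTop] fun T => ∫ z in Set.Ioc m T, H z := by
    filter_upwards [eventually_ge_atTop m] with T hT
    rw [intervalIntegral.integral_of_le hT]
    apply setIntegral_congr_ae measurableSet_Ioc
    filter_upwards [hHnn] with z hz hzs
    exact Real.norm_of_nonneg (hz hzs.1)
  have hint : IntegrableOn H (Set.Ioi m) := by
    apply integrableOn_Ioi_of_intervalIntegral_norm_tendsto L m hHIoc tendsto_id
    exact Tendsto.congr' hnorm_eq.symm hIlim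
  have h1 : Tendsto (fun T => ∫ z in m..T, H z) atTop (nhds (∫ z in Set.Ioi m, H z)) :=
    intervalIntegral_tendsto_integral_Ioi m hint tendsto_id
  have h2 : Tendsto (fun T => ∫ z in m..T, H z) atTop (nhds L) := by
    apply Tendsto.congr' ?_ hIlim
    filter_upwards [eventually_ge_atTop m] with T hT
    exact (intervalIntegral.integral_of_le hT).symm
  exact tendsto_nhds_unique h1 h2
end

section
/- Let f : ℝ → ℝ be positive and nondecreasing, with log∘f concave on ℝ, and let c > 0. If x ≤ y and the left derivative of f at x satisfies f'_−(x) ≤ c·f(x), then f'_−(y) − f'_−(x) ≤ c·(f(y) − f(x)); equivalently, f(y) − f'_−(y)/c ≥ f(x) − f'_−(x)/c. -/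
/-- Secant slopes of a concave function through a fixed pivot are antitone. -/
lemma concave_secant_anti {g : ℝ → ℝ} (hg : ConcaveOn ℝ Set.univ g) {a u v : ℝ}
    (hu : u ≠ a) (hv : v ≠ a) (huv : u ≤ v) :
    (g v - g a) / (v - a) ≤ (g u - g a) / (u - a) := by
  have h := hg.neg.secant_mono (Set.mem_univ a) (Set.mem_univ u) (Set.mem_univ v) hu hv huv
  simp only [Pi.neg_apply] at h
  rw [show -g u - -g a = -(g u - g a) by ring, show -g v - -g a = -(g v - g a) by ring,
    neg_div, neg_div, neg_le_neg_iff] at h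
  exact h

/-- Key inequality in Corollary 2.1 of the paper: if `f` is positive, nondecreasing and
log-concave, `c > 0`, `f'` is the left derivative of `f`, `x ≤ y` and `f' x ≤ c * f x`,
then `f' y - f' x ≤ c * (f y - f x)`; equivalently
`f y - f' y / c ≥ f x - f' x / c`. -/
theorem log_concave_h_monotone (f f' : ℝ → ℝ) (c : ℝ) (hc : 0 < c)
    (hfpos : ∀ x, 0 < f x) (hfmono : Monotone f)
    (hconc : ConcaveOn ℝ Set.univ (fun x => Real.log (f x)))
    (hf' : ∀ x : ℝ, HasDerivWithinAt f (f' x) (Set.Iio x) x)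
    (x y : ℝ) (hxy : x ≤ y) (hx : f' x ≤ c * f x) :
    f' y - f' x ≤ c * (f y - f x) ∧ f x - f' x / c ≤ f y - f' y / c := by
  set g : ℝ → ℝ := fun t => Real.log (f t) with hg
  have hg' : ∀ t : ℝ, HasDerivWithinAt g ((f t)⁻¹ * f' t) (Set.Iio t) t := fun t =>
    (Real.hasDerivAt_log (hfpos t).ne').comp_hasDerivWithinAt t (hf' t)
  -- the left derivative of g is antitone
  have anti : ∀ {a b : ℝ}, a < b → (f b)⁻¹ * f' b ≤ (f a)⁻¹ * f' a := by
    intro a b hab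
    set s : ℝ := (g b - g a) / (b - a) with hs
    have hA : s ≤ (f a)⁻¹ * f' a := by
      have ht : Filter.Tendsto (slope g a) (nhdsWithin a (Set.Iio a)) (nhds ((f a)⁻¹ * f' a)) :=
        (hasDerivWithinAt_iff_tendsto_slope' (Set.notMem_Iio.2 le_rfl)).1 (hg' a)
      refine ge_of_tendsto ht ?_
      filter_upwards [self_mem_nhdsWithin] with z hz
      have hz' : z < a := hz
      have := concave_secant_anti hconc (a := a) (u := z) (v := b) hz'.ne hab.ne'
        (hz'.le.trans hab.le)
      rw [slope_def_field]
      exact this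
    have hB : (f b)⁻¹ * f' b ≤ s := by
      have ht : Filter.Tendsto (slope g b) (nhdsWithin b (Set.Iio b)) (nhds ((f b)⁻¹ * f' b)) :=
        (hasDerivWithinAt_iff_tendsto_slope' (Set.notMem_Iio.2 le_rfl)).1 (hg' b)
      refine le_of_tendsto ht ?_
      have hgt : ∀ᶠ z in nhdsWithin b (Set.Iio b), a < z :=
        Filter.Eventually.filter_mono nhdsWithin_le_nhds (eventually_gt_nhds hab)
      filter_upwards [self_mem_nhdsWithin, hgt] with z hz haz
      have hz' : z < b := hz
      have := concave_secant_anti hconc (a := b) (u := a) (v := z) hab.ne hz'.ne haz.le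
      rw [slope_def_field]
      have hsrw : (g a - g b) / (a - b) = s := by
        rw [hs, show g a - g b = -(g b - g a) by ring, show a - b = -(b - a) by ring, neg_div_neg_eq]
      linarith [this, hsrw ▸ this]
    exact hB.trans hA
  rcases eq_or_lt_of_le hxy with rfl | hlt
  · exact ⟨by simp, le_refl _⟩
  · have key := anti hlt
    have hfx := hfpos x
    have hfy := hfpos y
    have hm : f x ≤ f y := hfmono hxy
    have h1 : f' y * f x ≤ f' x * f y := by
      rw [inv_mul_eq_div, inv_mul_eq_div, div_le_div_iff₀ hfy hfx] at key
      exact key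
    have hprod : f' x * (f y - f x) ≤ c * f x * (f y - f x) := by
      have := mul_le_mul_of_nonneg_right hx (sub_nonneg.2 hm)
      linarith
    have hfirst : f' y - f' x ≤ c * (f y - f x) := by
      nlinarith [h1, hprod, hfx, mul_pos hfx hfy]
    refine ⟨hfirst, ?_⟩
    have h2 : (f' y - f' x) / c ≤ f y - f x := (div_le_iff₀ hc).2 (by linarith [hfirst])
    have h3 : f' y / c - f' x / c ≤ f y - f x := by rw [← sub_div]; exact h2
    linarith
end

section
/- Let M be a real-valued random variable on a probability space, let h : ℝ → ℝ be nondecreasing with E[|h(x + M)|] < ∞ for every x ∈ ℝ, and set f(x) := E[h(x + M)]. Fix x₁ ∈ ℝ and suppose f is left-continuous at x₁, i.e. lim_{x↑x₁} f(x) = f(x₁). Then for every nondecreasing sequence (x_n) with x_n ↑ x₁, the sequence h(x_n + M) converges to h(x₁ + M) almost surely. -/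
open MeasureTheory Filter

/-- If `h` is nondecreasing with `E|h(x + M)| < ∞` for all `x`, `f x = E[h(x + M)]` is
left-continuous at `x₁`, and `(x n)` is a nondecreasing sequence converging to `x₁`,
then `h (x n + M) → h (x₁ + M)` almost surely. -/
theorem as_convergence_from_left_continuity {Ω : Type*} [MeasurableSpace Ω]
    (P : Measure Ω) [IsProbabilityMeasure P]
    (M : Ω → ℝ) (hM : Measurable M)
    (h : ℝ → ℝ) (hmono : Monotone h)
    (hint : ∀ x : ℝ, Integrable (fun ω => h (x + M ω)) P)
    (x₁ : ℝ)
    (hlc : Tendsto (fun x => ∫ ω, h (x + M ω) ∂P) (nhdsWithin x₁ (Set.Iio x₁))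
      (nhds (∫ ω, h (x₁ + M ω) ∂P)))
    (xseq : ℕ → ℝ) (hseq_mono : Monotone xseq)
    (hseq_lim : Tendsto xseq atTop (nhds x₁)) :
    ∀ᵐ ω ∂P, Tendsto (fun n => h (xseq n + M ω)) atTop (nhds (h (x₁ + M ω))) := by
  have hxle : ∀ n, xseq n ≤ x₁ := fun n => hseq_mono.ge_of_tendsto hseq_lim n
  set g : Ω → ℝ := fun ω => ⨆ n, h (xseq n + M ω) with hg
  have hptmono : ∀ ω, Monotone (fun n => h (xseq n + M ω)) :=
    fun ω n m hnm => hmono (by linarith [hseq_mono hnm])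
  have hbdd : ∀ ω, BddAbove (Set.range fun n => h (xseq n + M ω)) := by
    intro ω
    refine ⟨h (x₁ + M ω), ?_⟩
    rintro v ⟨n, rfl⟩
    exact hmono (by linarith [hxle n])
  have hpt : ∀ ω, Tendsto (fun n => h (xseq n + M ω)) atTop (nhds (g ω)) :=
    fun ω => tendsto_atTop_ciSup (hptmono ω) (hbdd ω)
  have hgle : ∀ ω, g ω ≤ h (x₁ + M ω) :=
    fun ω => ciSup_le fun n => hmono (by linarith [hxle n])
  set bound : Ω → ℝ := fun ω => |h (xseq 0 + M ω)| + |h (x₁ + M ω)| with hbnd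
  have hbound_int : Integrable bound P := ((hint (xseq 0)).abs).add ((hint x₁).abs)
  have hbound : ∀ n, ∀ᵐ ω ∂P, ‖h (xseq n + M ω)‖ ≤ bound ω := by
    intro n
    filter_upwards with ω
    have h1 : h (xseq 0 + M ω) ≤ h (xseq n + M ω) := hptmono ω (Nat.zero_le n)
    have h2 : h (xseq n + M ω) ≤ h (x₁ + M ω) := hmono (by linarith [hxle n])
    rw [Real.norm_eq_abs, abs_le]
    constructor
    · have ha := neg_abs_le (h (xseq 0 + M ω))
      have hb := abs_nonneg (h (x₁ + M ω))
      simp only [hbnd]; linarith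
    · have ha := le_abs_self (h (x₁ + M ω))
      have hb := abs_nonneg (h (xseq 0 + M ω))
      simp only [hbnd]; linarith
  have hg_meas : AEStronglyMeasurable g P :=
    aestronglyMeasurable_of_tendsto_ae atTop (fun n => (hint (xseq n)).aestronglyMeasurable)
      (Eventually.of_forall hpt)
  have hg_int : Integrable g P := by
    refine Integrable.mono' hbound_int hg_meas ?_
    filter_upwards with ω
    have h1 : h (xseq 0 + M ω) ≤ g ω := le_ciSup (hbdd ω) 0
    have h2 : g ω ≤ h (x₁ + M ω) := hgle ω
    rw [Real.norm_eq_abs, abs_le]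
    constructor
    · have ha := neg_abs_le (h (xseq 0 + M ω))
      have hb := abs_nonneg (h (x₁ + M ω))
      simp only [hbnd]; linarith
    · have ha := le_abs_self (h (x₁ + M ω))
      have hb := abs_nonneg (h (xseq 0 + M ω))
      simp only [hbnd]; linarith
  have hint_tendsto : Tendsto (fun n => ∫ ω, h (xseq n + M ω) ∂P) atTop
      (nhds (∫ ω, g ω ∂P)) :=
    tendsto_integral_of_dominated_convergence bound
      (fun n => (hint (xseq n)).aestronglyMeasurable)
      hbound_int hbound (Eventually.of_forall hpt)
  have hF : Tendsto (fun n => ∫ ω, h (xseq n + M ω) ∂P) atTop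
      (nhds (∫ ω, h (x₁ + M ω) ∂P)) := by
    by_cases hc : ∃ n, xseq n = x₁
    · obtain ⟨n₀, hn₀⟩ := hc
      apply tendsto_atTop_of_eventually_const (i₀ := n₀)
      intro n hn
      have hx : xseq n = x₁ := le_antisymm (hxle n) (hn₀ ▸ hseq_mono hn)
      rw [hx]
    · push_neg at hc
      have hT : Tendsto xseq atTop (nhdsWithin x₁ (Set.Iio x₁)) :=
        tendsto_nhdsWithin_of_tendsto_nhds_of_eventually_within _ hseq_lim
          (Eventually.of_forall fun n => lt_of_le_of_ne (hxle n) (hc n))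
      exact hlc.comp hT
  have hgeq : ∫ ω, g ω ∂P = ∫ ω, h (x₁ + M ω) ∂P := tendsto_nhds_unique hint_tendsto hF
  have hae : (fun ω => h (x₁ + M ω) - g ω) =ᵐ[P] 0 := by
    have h0 : ∫ ω, (h (x₁ + M ω) - g ω) ∂P = 0 := by
      rw [integral_sub (hint x₁) hg_int, hgeq, sub_self]
    exact (integral_eq_zero_iff_of_nonneg (fun ω => by simp [sub_nonneg, hgle ω])
      ((hint x₁).sub hg_int)).mp h0
  filter_upwards [hae] with ω hω
  have hgw : g ω = h (x₁ + M ω) := by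
    have : h (x₁ + M ω) - g ω = 0 := hω
    linarith
  exact hgw ▸ hpt ω
end

section
/- Let M be a real-valued random variable on a probability space, let h : ℝ → ℝ be nondecreasing, and let x* ∈ ℝ ∪ {−∞} be such that h(x) > 0 if and only if x > x*. Assume E[|h(x + M)|] < ∞ for every x ∈ ℝ and that f(x) := E[h(x + M)] is left-continuous on ℝ. Then the function V(x) := E[h(x + M)·1{x + M > x*}] is nondecreasing and left-continuous (equivalently, nondecreasing and lower semicontinuous) on ℝ. -/
open MeasureTheory Filter

/-- Lemma A.3 of the paper: let `h` be nondecreasing with threshold `x* ∈ ℝ ∪ {-∞}`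
(`h x > 0 ↔ x > x*`), with `E|h(x + M)| < ∞` for all `x`, and suppose
`f x = E[h(x + M)]` is left-continuous on `ℝ`. Then
`V x = E[h(x + M) · 1{x + M > x*}]` is nondecreasing and left-continuous. -/
theorem value_function_monotone_lsc {Ω : Type*} [MeasurableSpace Ω]
    (P : Measure Ω) [IsProbabilityMeasure P]
    (M : Ω → ℝ) (hM : Measurable M)
    (h : ℝ → ℝ) (hmono : Monotone h)
    (xs : EReal) (hxs : xs ≠ ⊤)
    (hthr : ∀ x : ℝ, 0 < h x ↔ xs < (x : EReal))
    (hint : ∀ x : ℝ, Integrable (fun ω => h (x + M ω)) P)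
    (hlc : ∀ x₁ : ℝ, Tendsto (fun x => ∫ ω, h (x + M ω) ∂P)
      (nhdsWithin x₁ (Set.Iio x₁)) (nhds (∫ ω, h (x₁ + M ω) ∂P))) :
    Monotone (fun x : ℝ =>
      ∫ ω, Set.indicator {y : ℝ | xs < (y : EReal)} h (x + M ω) ∂P) ∧
    ∀ x₁ : ℝ, Tendsto (fun x : ℝ =>
        ∫ ω, Set.indicator {y : ℝ | xs < (y : EReal)} h (x + M ω) ∂P)
      (nhdsWithin x₁ (Set.Iio x₁))
      (nhds (∫ ω, Set.indicator {y : ℝ | xs < (y : EReal)} h (x₁ + M ω) ∂P)) := by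
  -- The indicator equals the positive part of `h`.
  have hind : ∀ y : ℝ, Set.indicator {y : ℝ | xs < (y : EReal)} h y = max (h y) 0 := by
    intro y
    by_cases hy : xs < (y : EReal)
    · rw [Set.indicator_of_mem (show y ∈ {y : ℝ | xs < (y : EReal)} from hy),
        max_eq_left ((hthr y).2 hy).le]
    · rw [Set.indicator_of_notMem (show y ∉ {y : ℝ | xs < (y : EReal)} from hy), max_eq_right]
      by_contra hpos
      exact hy ((hthr y).1 (lt_of_not_ge hpos))
  simp_rw [hind]
  set V : ℝ → ℝ := fun x => ∫ ω, max (h (x + M ω)) 0 ∂P with hV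
  set g : ℝ → ℝ := fun x => ∫ ω, max (-(h (x + M ω))) 0 ∂P with hg
  have intPos : ∀ x : ℝ, Integrable (fun ω => max (h (x + M ω)) 0) P :=
    fun x => (hint x).pos_part
  have intNeg : ∀ x : ℝ, Integrable (fun ω => max (-(h (x + M ω))) 0) P :=
    fun x => (hint x).neg.pos_part
  have hsplit : ∀ x : ℝ, V x = (∫ ω, h (x + M ω) ∂P) + g x := by
    intro x
    have : V x = ∫ ω, (h (x + M ω) + max (-(h (x + M ω))) 0) ∂P := by
      apply integral_congr_ae
      filter_upwards with ω
      rcases le_total (h (x + M ω)) 0 with h' | h'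
      · rw [max_eq_right h', max_eq_left (by linarith)]; ring
      · rw [max_eq_left h', max_eq_right (by linarith)]; ring
    rw [this, integral_add (hint x) (intNeg x)]
  have hVmono : Monotone V := by
    intro a b hab
    exact integral_mono (intPos a) (intPos b) fun ω =>
      max_le_max (hmono (by linarith)) le_rfl
  have hganti : Antitone g := by
    intro a b hab
    exact integral_mono (intNeg b) (intNeg a) fun ω =>
      max_le_max (neg_le_neg (hmono (by linarith))) le_rfl
  refine ⟨hVmono, fun x₁ => ?_⟩
  have hlow : Tendsto (fun x => (∫ ω, h (x + M ω) ∂P) + g x₁)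
      (nhdsWithin x₁ (Set.Iio x₁)) (nhds (V x₁)) := by
    rw [hsplit x₁]
    exact (hlc x₁).add_const _
  refine tendsto_of_tendsto_of_tendsto_of_le_of_le' hlow tendsto_const_nhds ?_ ?_
  · filter_upwards [self_mem_nhdsWithin] with x hx
    rw [hsplit x]
    exact add_le_add le_rfl (hganti (le_of_lt hx))
  · filter_upwards [self_mem_nhdsWithin] with x hx
    exact hVmono (le_of_lt hx)
end

section
/- Let Y be a real-valued random variable on a probability space, let ρ > 0 and n ≥ 2. Suppose h^{(1)}, ..., h^{(n)} : ℝ → ℝ are nondecreasing functions such that for each l there is a threshold x_l* ∈ ℝ ∪ {−∞} with h^{(l)}(x) > 0 if and only if x > x_l*, that E[|h^{(l)}(x + Y)|] < ∞ for all x and l, and that the recursion h^{(l+1)}(x) = h^{(1)}(x) + ρ·E[h^{(l)}(x + Y)·1{x + Y > x_l*}] holds for all x ∈ ℝ and 1 ≤ l ≤ n − 1. Then for every 1 ≤ l ≤ n − 1: h^{(l+1)}(x) ≥ h^{(l)}(x) for all x ∈ ℝ, and x_{l+1}* ≤ x_l*. In particular the sequence of thresholds (x_l*)_{1 ≤ l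 ≤ n} is nonincreasing and the sequence of functions (h^{(l)})_{1 ≤ l ≤ n} is pointwise nondecreasing in l. -/
open MeasureTheory

lemma ind_nonneg_aux {f : ℝ → ℝ} {a : EReal} (hf : ∀ x : ℝ, 0 < f x ↔ a < (x : EReal))
    (y : ℝ) : 0 ≤ Set.indicator {y : ℝ | a < (y : EReal)} f y := by
  by_cases hy : y ∈ {y : ℝ | a < (y : EReal)}
  · rw [Set.indicator_of_mem hy]; exact ((hf y).mpr hy).le
  · rw [Set.indicator_of_notMem hy]

lemma ind_mono_aux {f g : ℝ → ℝ} {a b : EReal}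
    (hf : ∀ x : ℝ, 0 < f x ↔ a < (x : EReal)) (hg : ∀ x : ℝ, 0 < g x ↔ b < (x : EReal))
    (hfg : ∀ x, f x ≤ g x) (y : ℝ) :
    Set.indicator {y : ℝ | a < (y : EReal)} f y ≤
      Set.indicator {y : ℝ | b < (y : EReal)} g y := by
  by_cases hy : y ∈ {y : ℝ | a < (y : EReal)}
  · have h1 : 0 < f y := (hf y).mpr hy
    have hb : y ∈ {y : ℝ | b < (y : EReal)} := (hg y).mp (lt_of_lt_of_le h1 (hfg y))
    rw [Set.indicator_of_mem hy, Set.indicator_of_mem hb]; exact hfg y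
  · rw [Set.indicator_of_notMem hy]; exact ind_nonneg_aux hg y

lemma measurableSet_ereal_gt (a : EReal) : MeasurableSet {y : ℝ | a < (y : EReal)} :=
  measurable_coe_real_ereal measurableSet_Ioi

lemma thr_le_aux {f g : ℝ → ℝ} {a b : EReal}
    (hf : ∀ x : ℝ, 0 < f x ↔ a < (x : EReal)) (hg : ∀ x : ℝ, 0 < g x ↔ b < (x : EReal))
    (hfg : ∀ x, f x ≤ g x) (ha : a ≠ ⊤) : b ≤ a := by
  by_contra hba
  push_neg at hba
  obtain ⟨x, hax, hxb⟩ : ∃ x : ℝ, a < (x : EReal) ∧ (x : EReal) < b := by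
    rcases eq_or_ne b ⊤ with hb | hb
    · obtain ⟨x, hax, _⟩ := EReal.exists_between_coe_real (Ne.lt_top ha)
      exact ⟨x, hax, hb ▸ (EReal.coe_lt_top x)⟩
    · obtain ⟨x, hax, hxb⟩ := EReal.exists_between_coe_real hba
      exact ⟨x, hax, hxb⟩
  have : b < (x : EReal) := (hg x).mp (lt_of_lt_of_le ((hf x).mpr hax) (hfg x))
  exact absurd (this.trans hxb) (lt_irrefl _)

/-- Proposition 3.2 of the paper: if `h⁽¹⁾, …, h⁽ⁿ⁾` are nondecreasing with thresholds
`x_l* ∈ ℝ ∪ {-∞}` (i.e. `h⁽ˡ⁾ x > 0 ↔ x > x_l*`), are integrable against the shifted law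
of `Y`, and satisfy the recursion
`h⁽ˡ⁺¹⁾ x = h⁽¹⁾ x + ρ · E[h⁽ˡ⁾(x + Y) · 1{x + Y > x_l*}]`,
then `h⁽ˡ⁺¹⁾ ≥ h⁽ˡ⁾` pointwise and `x_{l+1}* ≤ x_l*` for `1 ≤ l ≤ n - 1`. -/
theorem thresholds_monotone {Ω : Type*} [MeasurableSpace Ω]
    (P : Measure Ω) [IsProbabilityMeasure P]
    (Y : Ω → ℝ) (hY : Measurable Y) (ρ : ℝ) (hρ : 0 < ρ)
    (n : ℕ) (hn : 2 ≤ n)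
    (h : ℕ → ℝ → ℝ) (xs : ℕ → EReal)
    (hmono : ∀ l, 1 ≤ l → l ≤ n → Monotone (h l))
    (hthr : ∀ l, 1 ≤ l → l ≤ n → ∀ x : ℝ, 0 < h l x ↔ xs l < (x : EReal))
    (hxs : ∀ l, 1 ≤ l → l ≤ n → xs l ≠ ⊤)
    (hint : ∀ l, 1 ≤ l → l ≤ n → ∀ x : ℝ, Integrable (fun ω => h l (x + Y ω)) P)
    (hrec : ∀ l, 1 ≤ l → l + 1 ≤ n → ∀ x : ℝ,
      h (l + 1) x = h 1 x
        + ρ * ∫ ω, Set.indicator {y : ℝ | xs l < (y : EReal)} (h l) (x + Y ω) ∂P) :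
    ∀ l, 1 ≤ l → l + 1 ≤ n → (∀ x : ℝ, h l x ≤ h (l + 1) x) ∧ xs (l + 1) ≤ xs l := by
  -- integrability of indicators
  have hind_int : ∀ l, 1 ≤ l → l ≤ n → ∀ x : ℝ,
      Integrable (fun ω => Set.indicator {y : ℝ | xs l < (y : EReal)} (h l) (x + Y ω)) P := by
    intro l hl hln x
    refine Integrable.mono (hint l hl hln x) ?_ ?_
    · exact (((hmono l hl hln).measurable.indicator
        (measurableSet_ereal_gt (xs l))).comp (measurable_const.add hY)).aestronglyMeasurable
    · exact Filter.Eventually.of_forall fun ω =>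
        norm_indicator_le_norm_self (h l) (x + Y ω)
  intro l hl hln
  induction l with
  | zero => omega
  | succ m ih =>
    rcases Nat.eq_zero_or_pos m with hm | hm
    · -- base case l = 1
      subst hm
      have hle : ∀ x : ℝ, h 1 x ≤ h 2 x := by
        intro x
        rw [hrec 1 le_rfl hn x]
        have : (0:ℝ) ≤ ∫ ω, Set.indicator {y : ℝ | xs 1 < (y : EReal)} (h 1) (x + Y ω) ∂P :=
          integral_nonneg fun ω => ind_nonneg_aux (hthr 1 le_rfl (by omega)) (x + Y ω)
        nlinarith
      exact ⟨hle, thr_le_aux (hthr 1 le_rfl (by omega)) (hthr 2 (by omega) hn) hle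
        (hxs 1 le_rfl (by omega))⟩
    · -- inductive step l = m + 1, m ≥ 1
      obtain ⟨ihle, ihxs⟩ := ih hm (by omega)
      have hle : ∀ x : ℝ, h (m + 1) x ≤ h (m + 2) x := by
        intro x
        rw [hrec m hm (by omega) x, hrec (m + 1) (by omega) (by omega) x]
        have hmono' : (∫ ω, Set.indicator {y : ℝ | xs m < (y : EReal)} (h m) (x + Y ω) ∂P)
            ≤ ∫ ω, Set.indicator {y : ℝ | xs (m + 1) < (y : EReal)} (h (m + 1)) (x + Y ω) ∂P := by
          refine integral_mono (hind_int m hm (by omega) x)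
            (hind_int (m + 1) (by omega) (by omega) x) ?_
          intro ω
          exact ind_mono_aux (hthr m hm (by omega)) (hthr (m + 1) (by omega) (by omega))
            ihle (x + Y ω)
        nlinarith
      exact ⟨hle, thr_le_aux (hthr (m + 1) (by omega) (by omega))
        (hthr (m + 2) (by omega) (by omega)) hle (hxs (m + 1) (by omega) (by omega))⟩
end

section
/- Let h_f, h_g : ℝ → ℝ be nondecreasing functions with thresholds x̄* ∈ ℝ ∪ {−∞} and x_p* ∈ ℝ ∪ {−∞} respectively, i.e. h_f(x) > 0 if and only if x > x̄*, and h_g(x) > 0 if and only if x > x_p*. Define H(x) := h_f(x) + h_g(x)·1{x > x_p*}. Then: (i) if x̄* < x_p*, then H(x) > 0 if and only if x > x̄* (so H has threshold x̄*); and (ii) if x̄* ≥ x_p*, then H(x) > 0 for every x > x̄*, and H(x) ≤ 0 for every x ≤ x_p* (so any threshold of H lies in the interval [x_p*, x̄*]). -/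
/-- Inductive step of Proposition 3.4 of the paper: if `h_f` has threshold `x̄*` and
`h_g` has threshold `x_p*` (both in `ℝ ∪ {-∞}`), and
`H x = h_f x + h_g x · 1{x > x_p*}`, then: (i) if `x̄* < x_p*` then `H` has threshold
`x̄*`; (ii) if `x̄* ≥ x_p*` then `H x > 0` for `x > x̄*` and `H x ≤ 0` for `x ≤ x_p*`. -/
theorem threshold_comparison (hf hg : ℝ → ℝ)
    (hfmono : Monotone hf) (hgmono : Monotone hg)
    (xbar xp : EReal) (hxbar : xbar ≠ ⊤) (hxp : xp ≠ ⊤)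
    (hfthr : ∀ x : ℝ, 0 < hf x ↔ xbar < (x : EReal))
    (hgthr : ∀ x : ℝ, 0 < hg x ↔ xp < (x : EReal))
    (H : ℝ → ℝ)
    (hH : ∀ x : ℝ, H x = hf x + Set.indicator {y : ℝ | xp < (y : EReal)} hg x) :
    (xbar < xp → ∀ x : ℝ, 0 < H x ↔ xbar < (x : EReal)) ∧
    (xp ≤ xbar →
      (∀ x : ℝ, xbar < (x : EReal) → 0 < H x) ∧
      (∀ x : ℝ, (x : EReal) ≤ xp → H x ≤ 0)) := by
  constructor
  · intro hlt x
    rw [hH x]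
    by_cases hx : xp < (x : EReal)
    · rw [Set.indicator_of_mem (by exact hx)]
      have h1 : 0 < hf x := (hfthr x).2 (lt_trans hlt hx)
      have h2 : 0 < hg x := (hgthr x).2 hx
      constructor
      · intro _; exact lt_trans hlt hx
      · intro _; positivity
    · rw [Set.indicator_of_notMem (by exact hx), add_zero]
      exact hfthr x
  · intro hle
    constructor
    · intro x hx
      rw [hH x]
      have hx2 : xp < (x : EReal) := lt_of_le_of_lt hle hx
      rw [Set.indicator_of_mem (by exact hx2)]
      have h1 : 0 < hf x := (hfthr x).2 hx
      have h2 : 0 < hg x := (hgthr x).2 hx2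
      positivity
    · intro x hx
      rw [hH x, Set.indicator_of_notMem (by exact not_lt.2 hx), add_zero]
      have : ¬ xbar < (x : EReal) := not_lt.2 (le_trans hx hle)
      exact not_lt.1 fun h => this ((hfthr x).1 h)
end
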